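/- arXiv:1404.5356 — 6 statements merged into one kernel-verified Lean document; each statement's English description precedes it below -/
import Mathlib

section
/- Let S = S(m,ℓ) be the spider with m ≥ 3 legs each having ℓ ≥ 1 vertices, let b be its body, and let 0 ≤ k ≤ ℓ. Then the expected gain of Player 1 playing the mixed strategy C_S(k) against Player 2 playing the pure strategy Z(b) is Gain(S, C_S(k), Z(b)) = m(kℓ − ⌊k²/4⌋)/(mk+1). -/
/-- The competitive-diffusion payoff of Player 1 with starting vertex `x` against
starting vertex `y`: the number of vertices strictly closer to `x` than to `y`. -/
noncomputable def gain {V : Type*} (G : SimpleGraph V) (x y : V) : ℕ :=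
  {u : V | G.dist u x < G.dist u y}.ncard

/-- The expected gain of Player 1 playing mixed strategy `X` against mixed strategy `Y`. -/
noncomputable def Gain {V : Type*} (G : SimpleGraph V) [Fintype V] (X Y : V → ℝ) : ℝ :=
  ∑ x : V, ∑ y : V, X x * Y y * (gain G x y : ℝ)

/-- The pure strategy `Z(v)` concentrated on vertex `v`. -/
def pureStrat {V : Type*} [DecidableEq V] (v : V) : V → ℝ := fun u => if u = v then 1 else 0

/-- Vertices of a spider with `m` legs each with `ℓ` vertices: `none` is the body,
`some (s, d)` is the vertex at distance `d+1` from the body on leg `s`. -/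
abbrev SpiderVert (m ℓ : ℕ) := Option (Fin m × Fin ℓ)

def spiderRel (m ℓ : ℕ) : SpiderVert m ℓ → SpiderVert m ℓ → Prop
  | none, some (_, d) => d.val = 0
  | some (s, d), some (s', d') => s = s' ∧ d.val + 1 = d'.val
  | _, _ => False

/-- The spider `S(m,ℓ)`: a body vertex to which `m` disjoint paths (legs), each with
`ℓ` vertices, are attached. -/
def Spider (m ℓ : ℕ) : SimpleGraph (SpiderVert m ℓ) := SimpleGraph.fromRel (spiderRel m ℓ)

/-- The mixed strategy `C_S(k)`: probability `1/(mk+1)` on the body and on each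
vertex at distance at most `k` from the body on each leg. -/
noncomputable def CS (m ℓ k : ℕ) : SpiderVert m ℓ → ℝ
  | none => 1 / (m * k + 1)
  | some (_, d) => if d.val + 1 ≤ k then 1 / (m * k + 1) else 0

section Aux

open SimpleGraph Finset

/-- Lipschitz functions lower-bound walk lengths. -/
lemma walk_lip {V : Type*} {G : SimpleGraph V} (f : V → ℤ)
    (hf : ∀ a b, G.Adj a b → |f a - f b| ≤ 1) :
    ∀ {u v : V} (p : G.Walk u v), |f u - f v| ≤ (p.length : ℤ) := by
  intro u v p
  induction p with
  | nil => simp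
  | @cons a b c h p ih =>
    have h1 := hf a b h
    have h2 : |f a - f c| ≤ |f a - f b| + |f b - f c| := abs_sub_le _ _ _
    simp only [SimpleGraph.Walk.length_cons]
    push_cast
    omega

lemma dist_lip {V : Type*} {G : SimpleGraph V} (f : V → ℤ)
    (hf : ∀ a b, G.Adj a b → |f a - f b| ≤ 1) {u v : V} (h : G.Reachable u v) :
    |f u - f v| ≤ (G.dist u v : ℤ) := by
  obtain ⟨p, hp⟩ := h.exists_walk_length_eq_dist
  rw [← hp]
  exact walk_lip f hf p

variable {m ℓ : ℕ}

/-- Depth of a spider vertex (distance to body). -/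
def sdepth : SpiderVert m ℓ → ℤ
  | none => 0
  | some (_, d) => d.val + 1

/-- Signed depth relative to leg `s`. -/
def fsign (s : Fin m) : SpiderVert m ℓ → ℤ
  | none => 0
  | some (t, d) => if t = s then d.val + 1 else -(d.val + 1)

lemma sdepth_rel : ∀ a b : SpiderVert m ℓ, spiderRel m ℓ a b → |sdepth a - sdepth b| ≤ 1 := by
  rintro (_ | ⟨s, d⟩) (_ | ⟨s', d'⟩) h
  · exact (h : False).elim
  · have h' : d'.val = 0 := h
    simp only [sdepth]
    rw [abs_le]; omega
  · exact (h : False).elim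
  · have h' : s = s' ∧ d.val + 1 = d'.val := h
    simp only [sdepth]
    rw [abs_le]; omega

lemma sdepth_lip : ∀ a b : SpiderVert m ℓ, (Spider m ℓ).Adj a b → |sdepth a - sdepth b| ≤ 1 := by
  intro a b hab
  rw [Spider, SimpleGraph.fromRel_adj] at hab
  obtain ⟨-, h | h⟩ := hab
  · exact sdepth_rel a b h
  · rw [abs_sub_comm]; exact sdepth_rel b a h

lemma fsign_rel (t : Fin m) :
    ∀ a b : SpiderVert m ℓ, spiderRel m ℓ a b → |fsign t a - fsign t b| ≤ 1 := by
  rintro (_ | ⟨s, d⟩) (_ | ⟨s', d'⟩) h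
  · exact (h : False).elim
  · have h' : d'.val = 0 := h
    simp only [fsign]
    split_ifs <;> (rw [abs_le]; omega)
  · exact (h : False).elim
  · obtain ⟨h1, h2⟩ : s = s' ∧ d.val + 1 = d'.val := h
    subst h1
    simp only [fsign]
    split_ifs <;> (rw [abs_le]; omega)

lemma fsign_lip (t : Fin m) :
    ∀ a b : SpiderVert m ℓ, (Spider m ℓ).Adj a b → |fsign t a - fsign t b| ≤ 1 := by
  intro a b hab
  rw [Spider, SimpleGraph.fromRel_adj] at hab
  obtain ⟨-, h | h⟩ := hab
  · exact fsign_rel t a b h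
  · rw [abs_sub_comm]; exact fsign_rel t b a h

/-- The depth-`j` vertex on leg `s` (`j = 0` is the body). -/
def vert (s : Fin m) : (j : ℕ) → j ≤ ℓ → SpiderVert m ℓ
  | 0, _ => none
  | j + 1, h => some (s, ⟨j, h⟩)

lemma vert_irrel (s : Fin m) {n n' : ℕ} (h : n ≤ ℓ) (h' : n' ≤ ℓ) (e : n = n') :
    vert s n h = vert s n' h' := by subst e; rfl

lemma adj_vert (s : Fin m) (i : ℕ) (h : i + 1 ≤ ℓ) :
    (Spider m ℓ).Adj (vert s (i + 1) h) (vert s i (by omega)) := by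
  rw [Spider, SimpleGraph.fromRel_adj]
  cases i with
  | zero =>
    refine ⟨by simp [vert], Or.inr ?_⟩
    simp [vert, spiderRel]
  | succ i =>
    refine ⟨?_, Or.inr ?_⟩
    · simp only [vert, ne_eq, Option.some.injEq, Prod.mk.injEq, Fin.mk.injEq]
      omega
    · simp [vert, spiderRel]

/-- Walk from depth `j+d` down to depth `j` on leg `s`. -/
def walkSeg (s : Fin m) (j : ℕ) : (d : ℕ) → (h : j + d ≤ ℓ) →
    (Spider m ℓ).Walk (vert s (j + d) h) (vert s j (by omega))
  | 0, _ => SimpleGraph.Walk.nil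
  | d + 1, h => SimpleGraph.Walk.cons (adj_vert s (j + d) h) (walkSeg s j d (by omega))

lemma walkSeg_length (s : Fin m) (j : ℕ) : ∀ (d : ℕ) (h : j + d ≤ ℓ),
    (walkSeg s j d h).length = d := by
  intro d
  induction d with
  | zero => intro h; rfl
  | succ d ih => intro h; simp [walkSeg, ih]

lemma dist_vert_le (s : Fin m) (j d : ℕ) (h : j + d ≤ ℓ) :
    (Spider m ℓ).dist (vert s (j + d) h) (vert s j (by omega)) ≤ d := by
  have := SimpleGraph.dist_le (walkSeg s j d h)
  rwa [walkSeg_length] at this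

lemma reach_none (u : SpiderVert m ℓ) : (Spider m ℓ).Reachable u none := by
  rcases u with _ | ⟨s, d⟩
  · exact SimpleGraph.Reachable.refl none
  · have h : (0 : ℕ) + (d.val + 1) ≤ ℓ := by omega
    have hr : (Spider m ℓ).Reachable (vert s (0 + (d.val + 1)) h) (vert s 0 (by omega)) :=
      ⟨walkSeg s 0 (d.val + 1) h⟩
    have e1 : vert s (0 + (d.val + 1)) h = some (s, d) := by
      rw [vert_irrel s h (by omega : d.val + 1 ≤ ℓ) (by omega)]
      simp [vert]
    have e2 : vert (ℓ := ℓ) s 0 (by omega) = none := rfl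
    rw [e1, e2] at hr
    exact hr

lemma spider_reach (u v : SpiderVert m ℓ) : (Spider m ℓ).Reachable u v :=
  (reach_none u).trans (reach_none v).symm

lemma dist_body (s : Fin m) (d : Fin ℓ) :
    (Spider m ℓ).dist (some (s, d)) none = d.val + 1 := by
  have hub : (Spider m ℓ).dist (some (s, d)) none ≤ d.val + 1 := by
    have h : (0 : ℕ) + (d.val + 1) ≤ ℓ := by omega
    have := dist_vert_le s 0 (d.val + 1) h
    have e1 : vert s (0 + (d.val + 1)) h = some (s, d) := by
      rw [vert_irrel s h (by omega : d.val + 1 ≤ ℓ) (by omega)]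
      simp [vert]
    have e2 : vert (ℓ := ℓ) s 0 (by omega) = none := rfl
    rwa [e1, e2] at this
  have hlb := dist_lip sdepth sdepth_lip (spider_reach (some (s, d)) (none : SpiderVert m ℓ))
  simp only [sdepth] at hlb
  rw [abs_le] at hlb
  omega

lemma dist_same (s : Fin m) (i j : Fin ℓ) :
    (Spider m ℓ).dist (some (s, i)) (some (s, j)) = ((i.val : ℤ) - j.val).natAbs := by
  have key : ∀ i j : Fin ℓ, j.val ≤ i.val →
      (Spider m ℓ).dist (some (s, i)) (some (s, j)) = i.val - j.val := by
    intro i j hji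
    have h : (j.val + 1) + (i.val - j.val) ≤ ℓ := by omega
    have hub := dist_vert_le s (j.val + 1) (i.val - j.val) h
    have e1 : vert s ((j.val + 1) + (i.val - j.val)) h = some (s, i) := by
      rw [vert_irrel s h (by omega : i.val + 1 ≤ ℓ) (by omega)]
      simp [vert]
    have e2 : vert (ℓ := ℓ) s (j.val + 1) (by omega) = some (s, j) := by
      simp [vert]
    rw [e1, e2] at hub
    have hlb := dist_lip sdepth sdepth_lip
      (spider_reach (some (s, i)) (some (s, j)))
    simp only [sdepth] at hlb
    rw [abs_le] at hlb
    omega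
  rcases le_total j.val i.val with hji | hij
  · rw [key i j hji]; omega
  · rw [SimpleGraph.dist_comm, key j i hij]; omega

lemma dist_diff_ge (s s' : Fin m) (hss : s' ≠ s) (a di : Fin ℓ) :
    di.val + 1 ≤ (Spider m ℓ).dist (some (s', di)) (some (s, a)) := by
  have hlb := dist_lip (fsign s) (fsign_lip s)
    (spider_reach (some (s', di)) (some (s, a)))
  have e1 : fsign (m := m) (ℓ := ℓ) s (some (s', di)) = -(di.val + 1) := by
    simp [fsign, hss]
  have e2 : fsign (m := m) (ℓ := ℓ) s (some (s, a)) = a.val + 1 := by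
    simp [fsign]
  rw [e1, e2, abs_le] at hlb
  omega

lemma gain_leg (s : Fin m) (a : Fin ℓ) :
    gain (Spider m ℓ) (some (s, a)) none = ℓ - (a.val + 1) / 2 := by
  have hℓpos : 0 < ℓ := lt_of_le_of_lt (Nat.zero_le _) a.2
  set c := (a.val + 1) / 2 with hc
  have hset : {u : SpiderVert m ℓ |
      (Spider m ℓ).dist u (some (s, a)) < (Spider m ℓ).dist u none} =
      (fun i : ℕ => if h : i < ℓ then (some (s, ⟨i, h⟩) : SpiderVert m ℓ) else none) ''
        Set.Ico c ℓ := by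
    ext u
    simp only [Set.mem_setOf_eq, Set.mem_image, Set.mem_Ico]
    constructor
    · intro hu
      rcases u with _ | ⟨t, di⟩
      · exfalso
        rw [SimpleGraph.dist_self] at hu
        exact Nat.not_lt_zero _ hu
      · rw [dist_body t di] at hu
        by_cases hts : t = s
        · subst hts
          have hd := dist_same t di a
          rw [hd] at hu
          refine ⟨di.val, ⟨by omega, di.2⟩, ?_⟩
          rw [dif_pos di.2]
        · exact absurd hu (not_lt.2 (dist_diff_ge s t hts a di))
    · rintro ⟨i, ⟨hci, hiℓ⟩, rfl⟩
      rw [dif_pos hiℓ, dist_body s ⟨i, hiℓ⟩, dist_same s ⟨i, hiℓ⟩ a]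
      show (((i : ℤ) - (a.val : ℤ)).natAbs : ℕ) < i + 1
      omega
  have hinj : Set.InjOn
      (fun i : ℕ => if h : i < ℓ then (some (s, ⟨i, h⟩) : SpiderVert m ℓ) else none)
      (Set.Ico c ℓ) := by
    intro x hx y hy hxy
    simp only [dif_pos hx.2, dif_pos hy.2, Option.some.injEq, Prod.mk.injEq,
      Fin.mk.injEq] at hxy
    exact hxy.2
  rw [gain, hset, Set.ncard_image_of_injOn hinj, ← Finset.coe_Ico,
    Set.ncard_coe_finset, Nat.card_Ico]

lemma gain_body_self (m ℓ : ℕ) :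
    gain (Spider m ℓ) (none : SpiderVert m ℓ) none = 0 := by
  simp [gain]

lemma sum_halves (k : ℕ) : ∑ d ∈ Finset.range k, (d + 1) / 2 = k ^ 2 / 4 := by
  induction k with
  | zero => simp
  | succ k ih =>
    rw [Finset.sum_range_succ, ih]
    rcases Nat.even_or_odd k with ⟨t, ht⟩ | ⟨t, ht⟩
    · have e1 : k ^ 2 = 4 * t ^ 2 := by subst ht; ring
      have e2 : (k + 1) ^ 2 = 4 * t ^ 2 + 4 * t + 1 := by subst ht; ring
      omega
    · have e1 : k ^ 2 = 4 * t ^ 2 + 4 * t + 1 := by subst ht; ring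
      have e2 : (k + 1) ^ 2 = 4 * t ^ 2 + 8 * t + 4 := by subst ht; ring
      omega

end Aux

/-- On the spider `S(m,ℓ)` with body `b`, for `0 ≤ k ≤ ℓ`,
`Gain(S, C_S(k), Z(b)) = m (kℓ - ⌊k²/4⌋) / (mk + 1)`. -/
theorem stmt_5 (m ℓ k : ℕ) (hm : 3 ≤ m) (hℓ : 1 ≤ ℓ) (hk : k ≤ ℓ) :
    Gain (Spider m ℓ) (CS m ℓ k) (pureStrat (none : SpiderVert m ℓ)) =
      (m : ℝ) * (((k * ℓ : ℕ) : ℝ) - ((k ^ 2 / 4 : ℕ) : ℝ)) / (m * k + 1) := by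
  classical
  have hstep1 : Gain (Spider m ℓ) (CS m ℓ k) (pureStrat (none : SpiderVert m ℓ)) =
      ∑ x : SpiderVert m ℓ, CS m ℓ k x * (gain (Spider m ℓ) x none : ℝ) := by
    unfold Gain
    refine Finset.sum_congr rfl fun x _ => ?_
    rw [Finset.sum_eq_single (none : SpiderVert m ℓ)]
    · simp [pureStrat]
    · intro y _ hy; simp [pureStrat, hy]
    · simp
  rw [hstep1, Fintype.sum_option, gain_body_self]
  simp only [Nat.cast_zero, mul_zero, zero_add]
  rw [Fintype.sum_prod_type]
  have hw : ∀ s : Fin m, ∑ d : Fin ℓ, CS m ℓ k (some (s, d)) *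
      (gain (Spider m ℓ) (some (s, d)) none : ℝ) =
      (1 / (m * k + 1)) * (((k * ℓ : ℕ) : ℝ) - ((k ^ 2 / 4 : ℕ) : ℝ)) := by
    intro s
    have hmid : (∑ d : Fin ℓ, CS m ℓ k (some (s, d)) *
        (gain (Spider m ℓ) (some (s, d)) none : ℝ)) =
        ∑ i ∈ Finset.range ℓ,
          (if i + 1 ≤ k then (1 / ((m : ℝ) * k + 1)) * ((ℓ - (i + 1) / 2 : ℕ) : ℝ) else 0) := by
      rw [← Fin.sum_univ_eq_sum_range]
      refine Finset.sum_congr rfl fun d _ => ?_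
      simp only [CS, gain_leg, ite_mul, zero_mul]
    rw [hmid]
    have hsub : ∑ i ∈ Finset.range ℓ,
        (if i + 1 ≤ k then (1 / ((m : ℝ) * k + 1)) * ((ℓ - (i + 1) / 2 : ℕ) : ℝ) else 0) =
        ∑ i ∈ Finset.range k, (1 / ((m : ℝ) * k + 1)) * ((ℓ - (i + 1) / 2 : ℕ) : ℝ) := by
      rw [← Finset.sum_subset (Finset.range_subset_range.2 hk)]
      · refine Finset.sum_congr rfl fun i hi => ?_
        rw [Finset.mem_range] at hi
        rw [if_pos (by omega)]
      · intro i _ hi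
        rw [Finset.mem_range] at hi
        rw [if_neg (by omega)]
    rw [hsub, ← Finset.mul_sum]
    congr 1
    have hcast : ∀ i ∈ Finset.range k, ((ℓ - (i + 1) / 2 : ℕ) : ℝ) =
        (ℓ : ℝ) - (((i + 1) / 2 : ℕ) : ℝ) := by
      intro i hi
      rw [Finset.mem_range] at hi
      rw [Nat.cast_sub (by omega)]
    rw [Finset.sum_congr rfl hcast, Finset.sum_sub_distrib, Finset.sum_const,
      Finset.card_range, ← Nat.cast_sum, sum_halves]
    push_cast
    ring
  rw [Finset.sum_congr rfl (fun s _ => hw s), Finset.sum_const, Finset.card_univ,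
    Fintype.card_fin, nsmul_eq_mul]
  ring
end

section
/- For every integer m ≥ 3 there exists a constant C ≥ 0 such that for all integers ℓ ≥ 1, the safety value of Player 1 in the two-player competitive diffusion game on the spider S(m,ℓ) satisfies ℓ − √ℓ/√m − C ≤ value(A_S) ≤ ℓ. -/
/-- The safety value of Player 1: the maximum over mixed strategies `X` of the minimum
over vertices `y` of `Gain(G, X, Z(y))`. -/
noncomputable def safetyValue {V : Type*} (G : SimpleGraph V) [Fintype V] [DecidableEq V]
    [Nonempty V] : ℝ :=
  ⨆ X : {X : V → ℝ // (∀ v, 0 ≤ X v) ∧ ∑ v, X v = 1},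
    Finset.univ.inf' Finset.univ_nonempty (fun y : V => Gain G X.1 (pureStrat y))


section RealArith
variable {m k ℓ Q T sl sm : ℝ}

lemma cert_A (hsl0 : 0 ≤ sl) (hsm0 : 0 < sm) (hsl2 : sl ^ 2 = ℓ) (hsm2 : sm ^ 2 = m)
    (h1 : 2 * sm * sl ≤ m * k) : 2 * ℓ * m ≤ m * k * (sl * sm) := by
  have h := mul_le_mul_of_nonneg_right h1 (mul_nonneg hsl0 hsm0.le)
  nlinarith [h]

lemma cert_B (hsl0 : 0 ≤ sl) (hsm0 : 0 < sm) (hsl2 : sl ^ 2 = ℓ) (hsm2 : sm ^ 2 = m)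
    (h2 : sm * k ≤ 2 * sl + 2 * sm) (hk0 : 0 ≤ k) :
    m * (m * (k * k)) ≤ 4 * (m * ℓ) + 8 * (m * (sl * sm)) + 4 * (m * m) := by
  have hm0 : 0 < m := by nlinarith
  have h := mul_self_le_mul_self (by positivity : (0:ℝ) ≤ sm * k) h2
  have h' : m * (k * k) ≤ 4 * (sl + sm) ^ 2 := by
    have e : sm * k * (sm * k) = sm ^ 2 * (k * k) := by ring
    rw [e, hsm2] at h
    nlinarith [h]
  have h2' := mul_le_mul_of_nonneg_left h' hm0.le
  have hexp : (sl + sm) ^ 2 = ℓ + 2 * (sl * sm) + m := by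
    rw [add_sq, hsl2, hsm2]; ring
  rw [hexp] at h2'
  nlinarith [h2']

lemma unscale (hm0 : 0 < m) (key : (m * ℓ - sl * sm - 3 * m) * (m * k + 1) ≤ m * T) :
    (ℓ - sl * sm / m - 3) * (m * k + 1) ≤ T := by
  have hc : sl * sm / m * m = sl * sm := div_mul_cancel₀ _ hm0.ne'
  have expand : m * ((ℓ - sl * sm / m - 3) * (m * k + 1))
      = (m * ℓ - sl * sm - 3 * m) * (m * k + 1) := by
    linear_combination (-(m * k + 1)) * hc
  have h2 : m * ((ℓ - sl * sm / m - 3) * (m * k + 1)) ≤ m * T := by rw [expand]; exact key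
  exact le_of_mul_le_mul_left h2 hm0

lemma sqrt_div_eq (hsl0 : 0 ≤ sl) (hsm0 : 0 < sm) (hsm2 : sm ^ 2 = m) :
    sl / sm = sl * sm / m := by
  have hm0 : 0 < m := by nlinarith
  field_simp
  rw [← hsm2]

lemma far_real (hm : 3 ≤ m) (hk : 1 ≤ k)
    (hQ0 : 0 ≤ Q) (hsl0 : 0 ≤ sl) (hsm0 : 0 < sm) (hsl2 : sl ^ 2 = ℓ) (hsm2 : sm ^ 2 = m)
    (h1 : 2 * sm * sl ≤ m * k) (h2 : sm * k ≤ 2 * sl + 2 * sm)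
    (hQ : 4 * Q ≤ k ^ 2) (hT : m * k * ℓ ≤ T + m * Q) :
    (ℓ - sl / sm - 3) * (m * k + 1) ≤ T := by
  have hm0 : (0:ℝ) < m := by linarith
  have hk0 : (0:ℝ) ≤ k := by linarith
  rw [sqrt_div_eq hsl0 hsm0 hsm2]
  have hA := cert_A hsl0 hsm0 hsl2 hsm2 h1
  have hB := cert_B hsl0 hsm0 hsl2 hsm2 h2 hk0
  have hC := mul_le_mul_of_nonneg_left h1 hm0.le
  have hD : m * m ≤ m * (m * k) := by nlinarith
  have hslsm : 0 ≤ sl * sm := mul_nonneg hsl0 hsm0.le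
  refine unscale hm0 ?_
  nlinarith [hA, hB, hC, hD, hslsm, mul_le_mul_of_nonneg_left hT hm0.le,
    mul_le_mul_of_nonneg_left hQ (mul_nonneg hm0.le hm0.le), hm0.le, hk0]

lemma near_real (hm : 3 ≤ m) (hk : 2 ≤ k)
    (hQ0 : 0 ≤ Q) (hl0 : 0 ≤ ℓ) (hsl0 : 0 ≤ sl) (hsm0 : 0 < sm)
    (hsl2 : sl ^ 2 = ℓ) (hsm2 : sm ^ 2 = m)
    (h1 : 2 * sm * sl ≤ m * k) (h2 : sm * k ≤ 2 * sl + 2 * sm)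
    (hQ : 4 * Q ≤ k ^ 2) (hT : (m * k + 1) * ℓ ≤ T + (m - 1) * Q + k ^ 2) :
    (ℓ - sl / sm - 3) * (m * k + 1) ≤ T := by
  have hm0 : (0:ℝ) < m := by linarith
  have hk0 : (0:ℝ) ≤ k := by linarith
  rw [sqrt_div_eq hsl0 hsm0 hsm2]
  have hA := cert_A hsl0 hsm0 hsl2 hsm2 h1
  have hB := cert_B hsl0 hsm0 hsl2 hsm2 h2 hk0
  have hC := mul_le_mul_of_nonneg_left h1 hm0.le
  have hD : 2 * (m * m) ≤ m * (m * k) := by nlinarith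
  have hE : (m - 1) * (4 * Q) ≤ (m - 1) * k ^ 2 :=
    mul_le_mul_of_nonneg_left hQ (by linarith)
  have hE' := mul_le_mul_of_nonneg_left hE hm0.le
  have hF : 3 * (m * k ^ 2) ≤ m * (m * k ^ 2) := by nlinarith [mul_nonneg (sub_nonneg.mpr hm) (by positivity : (0:ℝ) ≤ m * k ^ 2)]
  have hslsm : 0 ≤ sl * sm := mul_nonneg hsl0 hsm0.le
  refine unscale hm0 ?_
  nlinarith [hA, hB, hC, hD, hE', hF, hslsm, mul_le_mul_of_nonneg_left hT hm0.le, hQ0, hl0,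
    hm0.le, hk0]

end RealArith

namespace SP
variable {m ℓ : ℕ}

def D : SpiderVert m ℓ → SpiderVert m ℓ → ℕ
  | none, none => 0
  | none, some (_, e) => e.val + 1
  | some (_, d), none => d.val + 1
  | some (s, d), some (t, e) =>
      if s = t then max d.val e.val - min d.val e.val else d.val + e.val + 2

@[simp] lemma D_none_none : D (none : SpiderVert m ℓ) none = 0 := rfl
@[simp] lemma D_none_some (s : Fin m) (e : Fin ℓ) : D none (some (s, e)) = e.val + 1 := rfl
@[simp] lemma D_some_none (s : Fin m) (d : Fin ℓ) : D (some (s, d)) none = d.val + 1 := rfl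
@[simp] lemma D_some_some (s t : Fin m) (d e : Fin ℓ) :
    D (some (s, d)) (some (t, e)) =
      if s = t then max d.val e.val - min d.val e.val else d.val + e.val + 2 := rfl

lemma adj_iff {u v : SpiderVert m ℓ} :
    (Spider m ℓ).Adj u v ↔ u ≠ v ∧ (spiderRel m ℓ u v ∨ spiderRel m ℓ v u) := by
  simp [Spider, SimpleGraph.fromRel_adj]

lemma adj_cases {u w : SpiderVert m ℓ} (h : (Spider m ℓ).Adj u w) :
    (∃ t : Fin m, ∃ e : Fin ℓ, e.val = 0 ∧ ((u = none ∧ w = some (t, e)) ∨ (w = none ∧ u = some (t, e)))) ∨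
    (∃ t : Fin m, ∃ d e : Fin ℓ, d.val + 1 = e.val ∧
      ((u = some (t, d) ∧ w = some (t, e)) ∨ (w = some (t, d) ∧ u = some (t, e)))) := by
  rw [adj_iff] at h
  obtain ⟨hne, h | h⟩ := h
  · rcases u with _ | ⟨s, d⟩ <;> rcases w with _ | ⟨t, e⟩ <;> simp [spiderRel] at h
    · exact Or.inl ⟨t, e, h, Or.inl ⟨rfl, rfl⟩⟩
    · obtain ⟨rfl, h⟩ := h; exact Or.inr ⟨s, d, e, h, Or.inl ⟨rfl, rfl⟩⟩
  · rcases u with _ | ⟨s, d⟩ <;> rcases w with _ | ⟨t, e⟩ <;> simp [spiderRel] at h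
    · exact Or.inl ⟨s, d, h, Or.inr ⟨rfl, rfl⟩⟩
    · obtain ⟨rfl, h⟩ := h; exact Or.inr ⟨t, e, d, h, Or.inr ⟨rfl, rfl⟩⟩

lemma D_step {u w : SpiderVert m ℓ} (v : SpiderVert m ℓ) (h : (Spider m ℓ).Adj u w) :
    D u v ≤ D w v + 1 := by
  rcases adj_cases h with ⟨t, e, he, ⟨rfl, rfl⟩ | ⟨rfl, rfl⟩⟩ |
      ⟨t, d, e, hde, ⟨rfl, rfl⟩ | ⟨rfl, rfl⟩⟩ <;>
    rcases v with _ | ⟨r, f⟩ <;>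
    simp only [D_none_none, D_none_some, D_some_none, D_some_some] <;>
    (try split_ifs) <;> omega

lemma D_self (u : SpiderVert m ℓ) : D u u = 0 := by
  rcases u with _ | ⟨s, d⟩ <;> simp

lemma D_le_length {u v : SpiderVert m ℓ} (p : (Spider m ℓ).Walk u v) : D u v ≤ p.length := by
  induction p with
  | nil => simp [D_self]
  | cons h q ih => calc D _ _ ≤ D _ _ + 1 := D_step _ h
                   _ ≤ q.length + 1 := by omega

lemma exists_walk_down (s : Fin m) (n : ℕ) : ∀ (d e : Fin ℓ), d.val = e.val + n →
    ∃ p : (Spider m ℓ).Walk (some (s, d)) (some (s, e)), p.length = n := by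
  induction n with
  | zero =>
    intro d e h
    obtain rfl : d = e := Fin.ext (by omega)
    exact ⟨.nil, rfl⟩
  | succ n ih =>
    intro d e h
    have hd : (d.val - 1) < ℓ := by omega
    have hadj : (Spider m ℓ).Adj (some (s, d)) (some (s, ⟨d.val - 1, hd⟩)) := by
      rw [adj_iff]
      constructor
      · simp [Fin.ext_iff]; omega
      · exact Or.inr ⟨rfl, by simp; omega⟩
    obtain ⟨p, hp⟩ := ih ⟨d.val - 1, hd⟩ e (by simp; omega)
    exact ⟨.cons hadj p, by simp [hp]⟩

lemma exists_walk_to_body (s : Fin m) (d : Fin ℓ) :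
    ∃ p : (Spider m ℓ).Walk (some (s, d)) none, p.length = d.val + 1 := by
  have hpos : 0 < ℓ := lt_of_le_of_lt (Nat.zero_le _) d.isLt
  obtain ⟨p, hp⟩ := exists_walk_down s d.val d ⟨0, hpos⟩ (by simp)
  have hadj : (Spider m ℓ).Adj (some (s, ⟨0, hpos⟩)) none := by
    rw [adj_iff]
    exact ⟨by simp, Or.inr (by simp [spiderRel])⟩
  exact ⟨p.append (.cons hadj .nil), by simp [hp]⟩

lemma reachable_body (u : SpiderVert m ℓ) : (Spider m ℓ).Reachable u none := by
  rcases u with _ | ⟨s, d⟩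
  · exact SimpleGraph.Reachable.refl _
  · obtain ⟨p, _⟩ := exists_walk_to_body s d
    exact ⟨p⟩

lemma spider_reachable (u v : SpiderVert m ℓ) : (Spider m ℓ).Reachable u v :=
  (reachable_body u).trans (reachable_body v).symm

lemma dist_le_D (u v : SpiderVert m ℓ) : (Spider m ℓ).dist u v ≤ D u v := by
  rcases u with _ | ⟨s, d⟩ <;> rcases v with _ | ⟨t, e⟩
  · simp [SimpleGraph.dist_self]
  · obtain ⟨p, hp⟩ := exists_walk_to_body t e
    rw [SimpleGraph.dist_comm]
    simpa [hp] using SimpleGraph.dist_le p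
  · obtain ⟨p, hp⟩ := exists_walk_to_body s d
    simpa [hp] using SimpleGraph.dist_le p
  · rcases eq_or_ne s t with rfl | hst
    · rcases le_or_gt d.val e.val with hde | hde
      · obtain ⟨p, hp⟩ := exists_walk_down s (e.val - d.val) e d (by omega)
        rw [SimpleGraph.dist_comm]
        calc (Spider m ℓ).dist _ _ ≤ p.length := SimpleGraph.dist_le p
          _ ≤ D (some (s, d)) (some (s, e)) := by simp [hp]; omega
      · obtain ⟨p, hp⟩ := exists_walk_down s (d.val - e.val) d e (by omega)
        calc (Spider m ℓ).dist _ _ ≤ p.length := SimpleGraph.dist_le p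
          _ ≤ D (some (s, d)) (some (s, e)) := by simp [hp]; omega
    · obtain ⟨p, hp⟩ := exists_walk_to_body s d
      obtain ⟨q, hq⟩ := exists_walk_to_body t e
      calc (Spider m ℓ).dist _ _ ≤ (p.append q.reverse).length := SimpleGraph.dist_le _
        _ ≤ D (some (s, d)) (some (t, e)) := by simp [hp, hq, hst]; omega

lemma dist_eq_D (u v : SpiderVert m ℓ) : (Spider m ℓ).dist u v = D u v := by
  refine le_antisymm (dist_le_D u v) ?_
  obtain ⟨p, hp⟩ := (spider_reachable u v).exists_walk_length_eq_dist
  exact hp ▸ D_le_length p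

lemma gain_eq (x y : SpiderVert m ℓ) :
    gain (Spider m ℓ) x y = {u : SpiderVert m ℓ | D u x < D u y}.ncard := by
  unfold gain
  simp only [dist_eq_D]

lemma le_gain {x y : SpiderVert m ℓ} (S : Set (SpiderVert m ℓ))
    (h : S ⊆ {u | D u x < D u y}) : S.ncard ≤ gain (Spider m ℓ) x y := by
  rw [gain_eq]; exact Set.ncard_le_ncard h (Set.toFinite _)

lemma ncard_tail (c : ℕ) (hc : c < ℓ) (s : Fin m) :
    ((fun e : Fin ℓ => (some (s, e) : SpiderVert m ℓ)) '' {e : Fin ℓ | c ≤ e.val}).ncard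
      = ℓ - c := by
  rw [Set.ncard_image_of_injective _ (by intro a b hab; simpa using hab)]
  have h1 : {e : Fin ℓ | c ≤ e.val} = ↑(Finset.Ici (⟨c, hc⟩ : Fin ℓ)) := by
    ext e; simp [Fin.le_def]
  rw [h1, Set.ncard_coe_finset, Fin.card_Ici]

lemma ncard_offleg (t : Fin m) :
    (insert (none : SpiderVert m ℓ)
      ((fun p : {a : Fin m // a ≠ t} × Fin ℓ => (some (p.1.1, p.2) : SpiderVert m ℓ)) ''
        Set.univ)).ncard = (m - 1) * ℓ + 1 := by
  rw [Set.ncard_insert_of_notMem (by simp) (Set.toFinite _)]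
  rw [Set.ncard_image_of_injective _ ?_]
  · rw [Set.ncard_univ, Nat.card_eq_fintype_card, Fintype.card_prod, Fintype.card_fin]
    congr 2
    rw [Fintype.card_subtype_compl, Fintype.card_subtype_eq, Fintype.card_fin]
  · rintro ⟨⟨a, ha⟩, e⟩ ⟨⟨b, hb⟩, f⟩ hab
    simp_all

/-- Lower bound against any vertex not on leg `s`. -/
lemma gain_cross (s : Fin m) (d : Fin ℓ) (y : SpiderVert m ℓ)
    (hy : ∀ e : Fin ℓ, y ≠ some (s, e)) :
    ℓ - (d.val + 1) / 2 ≤ gain (Spider m ℓ) (some (s, d)) y := by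
  have hc : (d.val + 1) / 2 < ℓ := by have := d.isLt; omega
  have := ncard_tail (m := m) ((d.val + 1) / 2) hc s
  rw [← this]
  apply le_gain
  rintro u ⟨e, he, rfl⟩
  simp only [Set.mem_setOf_eq] at he ⊢
  have hDx : D (some (s, e)) (some (s, d)) = max e.val d.val - min e.val d.val := by simp
  rcases y with _ | ⟨t, f⟩
  · simp only [D_some_none, hDx]; omega
  · have hts : t ≠ s := fun h => hy f (by rw [h])
    have hD : D (some (s, e)) (some (t, f)) = e.val + f.val + 2 := by
      rw [D_some_some, if_neg (fun h : s = t => hts h.symm)]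
    rw [hDx, hD]; omega

/-- Lower bound: same leg, `x` strictly below `y`. -/
lemma gain_below (s : Fin m) (d e : Fin ℓ) (hde : d.val < e.val) :
    (m - 1) * ℓ + 1 ≤ gain (Spider m ℓ) (some (s, d)) (some (s, e)) := by
  rw [← ncard_offleg (m := m) (ℓ := ℓ) s]
  apply le_gain
  rintro u (rfl | ⟨⟨⟨a, ha⟩, f⟩, -, rfl⟩) <;> simp only [Set.mem_setOf_eq]
  · simp; omega
  · simp [ha, fun h : a = s => ha h]; omega

/-- Lower bound: body against a leg vertex. -/
lemma gain_body (t : Fin m) (e : Fin ℓ) :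
    (m - 1) * ℓ + 1 ≤ gain (Spider m ℓ) (none : SpiderVert m ℓ) (some (t, e)) := by
  rw [← ncard_offleg (m := m) (ℓ := ℓ) t]
  apply le_gain
  rintro u (rfl | ⟨⟨⟨a, ha⟩, f⟩, -, rfl⟩) <;> simp only [Set.mem_setOf_eq]
  · simp
  · simp [ha, fun h : a = t => ha h]

/-- Lower bound: same leg, `x` strictly above `y`. -/
lemma gain_above (s : Fin m) (d e : Fin ℓ) (hde : e.val < d.val) :
    ℓ - d.val ≤ gain (Spider m ℓ) (some (s, d)) (some (s, e)) := by
  have hc : d.val < ℓ := d.isLt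
  have := ncard_tail (m := m) d.val hc s
  rw [← this]
  apply le_gain
  rintro u ⟨f, hf, rfl⟩
  simp only [Set.mem_setOf_eq] at hf ⊢
  simp; omega

/-- Upper bound: gain against the body is at most `ℓ`. -/
lemma gain_le_body (x : SpiderVert m ℓ) : gain (Spider m ℓ) x none ≤ ℓ := by
  rw [gain_eq]
  rcases x with _ | ⟨s, d⟩
  · simp
  · have hsub : {u : SpiderVert m ℓ | D u (some (s, d)) < D u none} ⊆
        Set.range (fun e : Fin ℓ => (some (s, e) : SpiderVert m ℓ)) := by
      rintro (_ | ⟨t, e⟩) hu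
      · simp at hu
      · simp only [Set.mem_setOf_eq] at hu
        rcases eq_or_ne t s with rfl | hts
        · exact ⟨e, rfl⟩
        · exfalso; rw [D_some_some, if_neg hts, D_some_none] at hu; omega
    calc _ ≤ (Set.range (fun e : Fin ℓ => (some (s, e) : SpiderVert m ℓ))).ncard :=
          Set.ncard_le_ncard hsub (Set.toFinite _)
      _ = ℓ := by
          rw [← Set.image_univ, Set.ncard_image_of_injective _ (by intro a b h; simpa using h),
            Set.ncard_univ, Nat.card_eq_fintype_card, Fintype.card_fin]

/-- transfer: sum over `Fin ℓ` of `if d+1 ≤ k` equals sum over `range k`. -/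
lemma sum_fin_ite {M : Type*} [AddCommMonoid M] (k : ℕ) (hkl : k ≤ ℓ) (f : ℕ → M) :
    (∑ d : Fin ℓ, if d.val + 1 ≤ k then f d.val else 0) = ∑ j ∈ Finset.range k, f j := by
  rw [Fin.sum_univ_eq_sum_range (fun j => if j + 1 ≤ k then f j else 0) ℓ]
  rw [← Finset.sum_filter]
  congr 1
  ext j
  simp only [Finset.mem_filter, Finset.mem_range]
  omega

def Qk (k : ℕ) : ℕ := ∑ j ∈ Finset.range k, (j + 1) / 2

lemma Qk_eq (k : ℕ) : 4 * Qk k + k % 2 = k * k := by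
  induction k with
  | zero => simp [Qk]
  | succ k ih =>
    rw [Qk, Finset.sum_range_succ, ← Qk]
    have hsq : (k + 1) * (k + 1) = k * k + 2 * k + 1 := by ring
    rw [hsq]
    generalize k * k = K at ih ⊢
    generalize Qk k = Q at ih ⊢
    omega

lemma Qk_bound (k : ℕ) : 4 * Qk k ≤ k * k := by
  have := Qk_eq k; omega

noncomputable def Tnat (m ℓ k : ℕ) (y : SpiderVert m ℓ) : ℕ :=
  gain (Spider m ℓ) none y +
    ∑ s : Fin m, ∑ d : Fin ℓ, if d.val + 1 ≤ k then gain (Spider m ℓ) (some (s, d)) y else 0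

lemma sum_fin_gain {k : ℕ} (hkl : k ≤ ℓ) (g : Fin ℓ → ℕ) (b : ℕ → ℕ)
    (hb : ∀ d : Fin ℓ, d.val + 1 ≤ k → b d.val ≤ g d) :
    ∑ j ∈ Finset.range k, b j ≤ ∑ d : Fin ℓ, if d.val + 1 ≤ k then g d else 0 := by
  rw [← sum_fin_ite k hkl b]
  refine Finset.sum_le_sum fun d _ => ?_
  split_ifs with h
  · exact hb d h
  · exact le_refl 0

lemma sum_range_lb {k : ℕ} (hkl : k ≤ ℓ) :
    k * ℓ ≤ (∑ j ∈ Finset.range k, (ℓ - (j + 1) / 2)) + Qk k := by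
  rw [Qk, ← Finset.sum_add_distrib]
  calc k * ℓ = ∑ _j ∈ Finset.range k, ℓ := by rw [Finset.sum_const, Finset.card_range]; ring
    _ ≤ _ := Finset.sum_le_sum (fun j hj => by
        simp only [Finset.mem_range] at hj; omega)

/-- Case: `y` is the body or an outer vertex (beyond depth `k`). -/
lemma T_far {k : ℕ} (hm : 3 ≤ m) (hkl : k ≤ ℓ) (y : SpiderVert m ℓ)
    (hy : ∀ t q, y = some (t, q) → k ≤ q.val) :
    m * k * ℓ ≤ Tnat m ℓ k y + m * Qk k := by
  have hinner : ∀ s : Fin m,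
      (∑ j ∈ Finset.range k, (ℓ - (j + 1) / 2)) ≤
        ∑ d : Fin ℓ, (if d.val + 1 ≤ k then gain (Spider m ℓ) (some (s, d)) y else 0) := by
    intro s
    refine sum_fin_gain hkl _ _ (fun d hd => ?_)
    rcases y with _ | ⟨t, q⟩
    · exact gain_cross s d none (by simp)
    · rcases eq_or_ne s t with rfl | hst
      · -- same leg, y beyond depth k : d < q
        have hq := hy s q rfl
        have h1 : (m - 1) * ℓ + 1 ≤ gain (Spider m ℓ) (some (s, d)) (some (s, q)) :=
          gain_below s d q (by omega)
        have h2 : ℓ ≤ (m - 1) * ℓ + 1 :=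
          le_trans (Nat.le_mul_of_pos_left ℓ (by omega)) (Nat.le_succ _)
        omega
      · exact gain_cross s d (some (t, q)) (by simp [hst.symm])
  have hstep : ∀ s : Fin m, k * ℓ ≤
      (∑ d : Fin ℓ, if d.val + 1 ≤ k then gain (Spider m ℓ) (some (s, d)) y else 0) + Qk k :=
    fun s => le_trans (sum_range_lb hkl) (Nat.add_le_add_right (hinner s) _)
  have hsum := Finset.sum_le_sum (fun s (_ : s ∈ Finset.univ) => hstep s)
  simp only [Finset.sum_const, Finset.card_univ, Fintype.card_fin, smul_eq_mul,
    Finset.sum_add_distrib] at hsum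
  unfold Tnat
  rw [mul_assoc]
  linarith

lemma arith_near (m ℓ k q Q' G1 St So : ℕ) (hm : 3 ≤ m) (hkl : k ≤ ℓ) (hq : q + 1 ≤ k)
    (h1 : (m - 1) * ℓ + 1 ≤ G1)
    (h2 : q * (2 * ℓ) + (k - (q + 1)) * (ℓ - k) ≤ St)
    (h3 : (m - 1) * k * ℓ ≤ So + (m - 1) * Q') :
    (m * k + 1) * ℓ ≤ G1 + (St + So) + (m - 1) * Q' + k * k := by
  obtain ⟨M, rfl⟩ : ∃ M, m = M + 3 := ⟨m - 3, by omega⟩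
  obtain ⟨A, rfl⟩ : ∃ A, k = q + 1 + A := ⟨k - (q + 1), by omega⟩
  obtain ⟨L, rfl⟩ : ∃ L, ℓ = (q + 1 + A) + L := ⟨ℓ - (q + 1 + A), by omega⟩
  simp only [show M + 3 - 1 = M + 2 from by omega, show q + 1 + A - (q + 1) = A from by omega,
    show (q + 1 + A) + L - (q + 1 + A) = L from by omega] at h1 h2 h3 ⊢
  nlinarith [h1, h2, h3, Nat.zero_le (M * L), Nat.zero_le (q * L), Nat.zero_le (M * A)]

/-- Case: `y` is a leg vertex within depth `k`. -/
lemma T_near {k : ℕ} (hm : 3 ≤ m) (hkl : k ≤ ℓ) (t : Fin m) (q : Fin ℓ)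
    (hq : q.val + 1 ≤ k) :
    (m * k + 1) * ℓ ≤ Tnat m ℓ k (some (t, q)) + (m - 1) * Qk k + k * k := by
  -- body term
  have hbody : (m - 1) * ℓ + 1 ≤ gain (Spider m ℓ) none (some (t, q)) := gain_body t q
  -- other legs
  have hother : ∀ s : Fin m, s ≠ t →
      (∑ j ∈ Finset.range k, (ℓ - (j + 1) / 2)) ≤
        ∑ d : Fin ℓ, (if d.val + 1 ≤ k then gain (Spider m ℓ) (some (s, d)) (some (t, q)) else 0) := by
    intro s hst
    refine sum_fin_gain hkl _ _ (fun d hd => ?_)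
    exact gain_cross s d (some (t, q)) (by simp [hst.symm])
  -- same leg
  have hsame : q.val * (2 * ℓ) + (k - (q.val + 1)) * (ℓ - k) ≤
      ∑ d : Fin ℓ, (if d.val + 1 ≤ k then gain (Spider m ℓ) (some (t, d)) (some (t, q)) else 0) := by
    have hb : ∀ d : Fin ℓ, d.val + 1 ≤ k →
        (if d.val < q.val then 2 * ℓ else if d.val = q.val then 0 else ℓ - k) ≤
          gain (Spider m ℓ) (some (t, d)) (some (t, q)) := by
      intro d hd
      rcases lt_trichotomy d.val q.val with h | h | h
      · rw [if_pos h]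
        have h1 := gain_below t d q h
        have h2 : 2 * ℓ ≤ (m - 1) * ℓ := Nat.mul_le_mul_right ℓ (by omega)
        omega
      · rw [if_neg (by omega), if_pos h]
        exact Nat.zero_le _
      · rw [if_neg (by omega), if_neg (by omega)]
        have h1 := gain_above t d q h
        omega
    refine le_trans ?_ (sum_fin_gain hkl _
      (fun j => if j < q.val then 2 * ℓ else if j = q.val then 0 else ℓ - k) hb)
    -- evaluate the sum of the bound function
    have hsplit : Finset.range k = Finset.Ico 0 (q.val + 1) ∪ Finset.Ico (q.val + 1) k := by
      rw [Finset.range_eq_Ico, Finset.Ico_union_Ico_eq_Ico (Nat.zero_le _) hq]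
    rw [hsplit, Finset.sum_union (by
      simp only [Finset.disjoint_left, Finset.mem_Ico]
      omega)]
    have h1 : ∑ j ∈ Finset.Ico 0 (q.val + 1),
        (if j < q.val then 2 * ℓ else if j = q.val then 0 else ℓ - k) = q.val * (2 * ℓ) := by
      rw [Finset.sum_Ico_succ_top (Nat.zero_le _)]
      rw [if_neg (by omega), if_pos rfl]
      rw [Finset.sum_congr rfl (fun j hj => by
        simp only [Finset.mem_Ico] at hj
        rw [if_pos (by omega)])]
      rw [Finset.sum_const, Nat.card_Ico, smul_eq_mul]
      simp
    have h2 : ∑ j ∈ Finset.Ico (q.val + 1) k,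
        (if j < q.val then 2 * ℓ else if j = q.val then 0 else ℓ - k)
          = (k - (q.val + 1)) * (ℓ - k) := by
      rw [Finset.sum_congr rfl (fun j hj => by
        simp only [Finset.mem_Ico] at hj
        rw [if_neg (by omega), if_neg (by omega)])]
      rw [Finset.sum_const, Nat.card_Ico, smul_eq_mul]
    rw [h1, h2]
  -- combine
  have hsplitsum : (∑ s : Fin m, ∑ d : Fin ℓ,
        if d.val + 1 ≤ k then gain (Spider m ℓ) (some (s, d)) (some (t, q)) else 0)
      = (∑ d : Fin ℓ, if d.val + 1 ≤ k then gain (Spider m ℓ) (some (t, d)) (some (t, q)) else 0)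
        + ∑ s ∈ Finset.univ.erase t, ∑ d : Fin ℓ,
            if d.val + 1 ≤ k then gain (Spider m ℓ) (some (s, d)) (some (t, q)) else 0 :=
    (Finset.add_sum_erase _ _ (Finset.mem_univ t)).symm
  have hothersum : (m - 1) * k * ℓ ≤
      (∑ s ∈ Finset.univ.erase t, ∑ d : Fin ℓ,
        if d.val + 1 ≤ k then gain (Spider m ℓ) (some (s, d)) (some (t, q)) else 0) + (m - 1) * Qk k := by
    have hcard : (Finset.univ.erase t).card = m - 1 := by
      rw [Finset.card_erase_of_mem (Finset.mem_univ t), Finset.card_univ, Fintype.card_fin]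
    have hstep : ∀ s ∈ Finset.univ.erase t, k * ℓ ≤
        (∑ d : Fin ℓ, if d.val + 1 ≤ k then gain (Spider m ℓ) (some (s, d)) (some (t, q)) else 0)
          + Qk k := by
      intro s hs
      exact le_trans (sum_range_lb hkl)
        (Nat.add_le_add_right (hother s (Finset.ne_of_mem_erase hs)) _)
    have hsum := Finset.sum_le_sum hstep
    rw [Finset.sum_const, hcard, smul_eq_mul, Finset.sum_add_distrib, Finset.sum_const,
      hcard, smul_eq_mul] at hsum
    rw [mul_assoc]
    exact hsum
  -- final arithmetic
  unfold Tnat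
  rw [hsplitsum]
  exact arith_near m ℓ k q.val (Qk k) _ _ _ hm hkl hq hbody hsame hothersum

lemma Gain_pure {V : Type*} [Fintype V] [DecidableEq V] (G : SimpleGraph V) (X : V → ℝ)
    (y : V) : Gain G X (pureStrat y) = ∑ x, X x * (gain G x y : ℝ) := by
  unfold Gain pureStrat
  refine Finset.sum_congr rfl fun x _ => ?_
  rw [Finset.sum_eq_single y]
  · simp
  · intro b _ hb
    simp [hb]
  · simp

lemma Gain_CS (k : ℕ) (y : SpiderVert m ℓ) :
    Gain (Spider m ℓ) (CS m ℓ k) (pureStrat y) = (Tnat m ℓ k y : ℝ) / (m * k + 1) := by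
  have hN : ((m : ℝ) * k + 1) ≠ 0 := by positivity
  rw [Gain_pure, Fintype.sum_option, Fintype.sum_prod_type]
  unfold CS Tnat
  push_cast
  rw [add_div, Finset.sum_div]
  congr 1
  · rw [one_div, inv_mul_eq_div]
  · refine Finset.sum_congr rfl fun s _ => ?_
    rw [Finset.sum_div]
    refine Finset.sum_congr rfl fun d _ => ?_
    split_ifs
    · rw [one_div, inv_mul_eq_div]
    · simp

lemma CS_nonneg (k : ℕ) (v : SpiderVert m ℓ) : 0 ≤ CS m ℓ k v := by
  rcases v with _ | ⟨s, d⟩ <;> simp only [CS]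
  · positivity
  · split_ifs
    · positivity
    · exact le_refl 0

lemma CS_sum (k : ℕ) (hkl : k ≤ ℓ) : ∑ v : SpiderVert m ℓ, CS m ℓ k v = 1 := by
  have hN : ((m : ℝ) * k + 1) ≠ 0 := by positivity
  rw [Fintype.sum_option, Fintype.sum_prod_type]
  simp only [CS]
  rw [Finset.sum_congr rfl (fun s (_ : s ∈ Finset.univ) =>
    sum_fin_ite (M := ℝ) k hkl (fun _ => 1 / ((m : ℝ) * k + 1)))]
  simp only [Finset.sum_const, Finset.card_range, Finset.card_univ, Fintype.card_fin,
    nsmul_eq_mul]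
  field_simp
  ring

set_option maxHeartbeats 1000000 in
lemma key (hm : 3 ≤ m) (hl : 4 ≤ ℓ) :
    ∃ k : ℕ, k ≤ ℓ ∧ ∀ y : SpiderVert m ℓ,
      (ℓ : ℝ) - Real.sqrt ℓ / Real.sqrt m - 3 ≤
        Gain (Spider m ℓ) (CS m ℓ k) (pureStrat y) := by
  have hm0 : 0 < m := by omega
  set t : ℕ := Nat.sqrt (4 * ℓ / m) with ht
  set k : ℕ := t + 2 with hkdef
  -- k ≤ ℓ
  have hkl : k ≤ ℓ := by
    have h1 : t ≤ Nat.sqrt (2 * ℓ) := by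
      apply Nat.sqrt_le_sqrt
      calc 4 * ℓ / m ≤ 4 * ℓ / 3 := Nat.div_le_div_left hm (by omega)
        _ ≤ 2 * ℓ := by omega
    have h2 : Nat.sqrt (2 * ℓ) < ℓ - 1 := by
      rw [Nat.sqrt_lt]
      obtain ⟨L, rfl⟩ : ∃ L, ℓ = L + 4 := ⟨ℓ - 4, by omega⟩
      have e : (L + 4 - 1) * (L + 4 - 1) = (L + 3) * (L + 3) := by norm_num
      rw [e]
      nlinarith
    omega
  -- 4ℓ ≤ m k²
  have hmk : 4 * ℓ ≤ m * (k * k) := by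
    apply le_of_lt
    have hq : 4 * ℓ / m + 1 ≤ (t + 1) * (t + 1) :=
      Nat.succ_le_of_lt (Nat.lt_succ_sqrt (4 * ℓ / m))
    calc 4 * ℓ = m * (4 * ℓ / m) + 4 * ℓ % m := (Nat.div_add_mod _ _).symm
      _ < m * (4 * ℓ / m) + m := by
          exact Nat.add_lt_add_left (Nat.mod_lt _ hm0) _
      _ = m * (4 * ℓ / m + 1) := by ring
      _ ≤ m * ((t + 1) * (t + 1)) := Nat.mul_le_mul_left m hq
      _ ≤ m * (k * k) := Nat.mul_le_mul_left m (Nat.mul_le_mul (by omega) (by omega))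
  -- real facts
  set sl : ℝ := Real.sqrt ℓ with hsl
  set sm : ℝ := Real.sqrt m with hsm
  have hmr : (3 : ℝ) ≤ (m : ℝ) := by exact_mod_cast hm
  have hlr : (0 : ℝ) ≤ (ℓ : ℝ) := by positivity
  have hsl0 : 0 ≤ sl := Real.sqrt_nonneg _
  have hsm0 : 0 < sm := Real.sqrt_pos.mpr (by positivity)
  have hsl2 : sl ^ 2 = (ℓ : ℝ) := Real.sq_sqrt hlr
  have hsm2 : sm ^ 2 = (m : ℝ) := Real.sq_sqrt (by positivity)
  have h1 : 2 * sm * sl ≤ (m : ℝ) * (k : ℝ) := by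
    have ha : Real.sqrt ((2 * sm * sl) ^ 2) = 2 * sm * sl := Real.sqrt_sq (by positivity)
    have hb : Real.sqrt (((m : ℝ) * (k : ℝ)) ^ 2) = (m : ℝ) * (k : ℝ) :=
      Real.sqrt_sq (by positivity)
    rw [← ha, ← hb]
    apply Real.sqrt_le_sqrt
    have hc : (4 * ℓ : ℝ) ≤ (m : ℝ) * ((k : ℝ) * (k : ℝ)) := by exact_mod_cast hmk
    nlinarith [mul_le_mul_of_nonneg_left hc (by positivity : (0:ℝ) ≤ (m:ℝ))]
  have h2 : sm * (k : ℝ) ≤ 2 * sl + 2 * sm := by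
    have hst : sm * (t : ℝ) ≤ 2 * sl := by
      have ha : Real.sqrt ((sm * (t : ℝ)) ^ 2) = sm * (t : ℝ) := Real.sqrt_sq (by positivity)
      have hb : Real.sqrt ((2 * sl) ^ 2) = 2 * sl := Real.sqrt_sq (by positivity)
      rw [← ha, ← hb]
      apply Real.sqrt_le_sqrt
      have hts : ((t : ℝ)) * (t : ℝ) ≤ ((4 * ℓ / m : ℕ) : ℝ) := by
        exact_mod_cast Nat.sqrt_le (4 * ℓ / m)
      have hcd : ((4 * ℓ / m : ℕ) : ℝ) ≤ (4 * ℓ : ℝ) / (m : ℝ) := by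
        push_cast [Nat.cast_div_le]
        exact_mod_cast Nat.cast_div_le
      have hmt : (m : ℝ) * ((t : ℝ) * (t : ℝ)) ≤ 4 * ℓ := by
        calc (m : ℝ) * ((t : ℝ) * (t : ℝ)) ≤ (m : ℝ) * ((4 * ℓ : ℝ) / (m : ℝ)) := by
              apply mul_le_mul_of_nonneg_left (le_trans hts hcd) (by positivity)
          _ = 4 * ℓ := by field_simp
      nlinarith [hmt]
    have : sm * (k : ℝ) = sm * (t : ℝ) + 2 * sm := by
      rw [hkdef]; push_cast; ring
    rw [this]
    linarith
  have hk1 : (1 : ℝ) ≤ (k : ℝ) := by exact_mod_cast (by omega : 1 ≤ k)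
  have hk2 : (2 : ℝ) ≤ (k : ℝ) := by exact_mod_cast (by omega : 2 ≤ k)
  have hkr : (k : ℝ) = (t : ℝ) + 2 := by rw [hkdef]; push_cast; ring
  have hQ : 4 * ((Qk k : ℕ) : ℝ) ≤ (k : ℝ) ^ 2 := by
    have := Qk_bound k
    have h' : ((4 * Qk k : ℕ) : ℝ) ≤ ((k * k : ℕ) : ℝ) := by exact_mod_cast this
    push_cast at h'
    nlinarith [h', hkr]
  have hQ0 : (0 : ℝ) ≤ ((Qk k : ℕ) : ℝ) := by positivity
  have hN0 : (0 : ℝ) < (m : ℝ) * (k : ℝ) + 1 := by positivity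
  clear_value t k
  refine ⟨k, hkl, fun y => ?_⟩
  rw [Gain_CS k y]
  rw [le_div_iff₀ hN0]
  rcases y with _ | ⟨t', q⟩
  · -- body
    have hT := T_far hm hkl (none : SpiderVert m ℓ) (by simp)
    have hTr : (m : ℝ) * (k : ℝ) * (ℓ : ℝ) ≤
        ((Tnat m ℓ k none : ℕ) : ℝ) + (m : ℝ) * ((Qk k : ℕ) : ℝ) := by
      exact_mod_cast hT
    exact far_real hmr hk1 hQ0 hsl0 hsm0 hsl2 hsm2 h1 h2 hQ hTr
  · rcases le_or_gt k q.val with hqk | hqk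
    · -- far leg vertex
      have hT := T_far hm hkl (some (t', q)) (by
        rintro a b hab
        simp only [Option.some.injEq, Prod.mk.injEq] at hab
        obtain ⟨-, rfl⟩ := hab
        exact hqk)
      have hTr : (m : ℝ) * (k : ℝ) * (ℓ : ℝ) ≤
          ((Tnat m ℓ k (some (t', q)) : ℕ) : ℝ) + (m : ℝ) * ((Qk k : ℕ) : ℝ) := by
        exact_mod_cast hT
      exact far_real hmr hk1 hQ0 hsl0 hsm0 hsl2 hsm2 h1 h2 hQ hTr
    · -- near leg vertex
      have hT := T_near hm hkl t' q (by omega)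
      have hTr : ((m : ℝ) * (k : ℝ) + 1) * (ℓ : ℝ) ≤
          ((Tnat m ℓ k (some (t', q)) : ℕ) : ℝ)
            + ((m : ℝ) - 1) * ((Qk k : ℕ) : ℝ) + (k : ℝ) ^ 2 := by
        have : (((m * k + 1) * ℓ : ℕ) : ℝ) ≤
            ((Tnat m ℓ k (some (t', q)) + (m - 1) * Qk k + k * k : ℕ) : ℝ) := by
          exact_mod_cast hT
        push_cast [Nat.cast_sub (by omega : 1 ≤ m)] at this
        rw [pow_two]
        linarith [this]
      exact near_real hmr hk2 hQ0 hlr hsl0 hsm0 hsl2 hsm2 h1 h2 hQ hTr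

section Value
variable (m ℓ : ℕ)

/-- valid strategies -/
abbrev Strat (V : Type*) [Fintype V] := {X : V → ℝ // (∀ v, 0 ≤ X v) ∧ ∑ v, X v = 1}

lemma pure_mem {V : Type*} [Fintype V] [DecidableEq V] (v : V) :
    (∀ u, 0 ≤ pureStrat v u) ∧ ∑ u, pureStrat v u = 1 := by
  constructor
  · intro u
    unfold pureStrat
    split_ifs <;> norm_num
  · simp [pureStrat]

lemma gain_nonneg_sum {V : Type*} [Fintype V] [DecidableEq V] (G : SimpleGraph V)
    (X : Strat V) (y : V) : 0 ≤ Gain G X.1 (pureStrat y) := by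
  rw [Gain_pure]
  exact Finset.sum_nonneg fun x _ => mul_nonneg (X.2.1 x) (by positivity)

lemma inf_le_ell (X : Strat (SpiderVert m ℓ)) :
    Finset.univ.inf' Finset.univ_nonempty
      (fun y : SpiderVert m ℓ => Gain (Spider m ℓ) X.1 (pureStrat y)) ≤ (ℓ : ℝ) := by
  refine le_trans (Finset.inf'_le _ (Finset.mem_univ none)) ?_
  rw [Gain_pure]
  calc ∑ x, X.1 x * (gain (Spider m ℓ) x none : ℝ)
      ≤ ∑ x, X.1 x * (ℓ : ℝ) := by
        refine Finset.sum_le_sum fun x _ => ?_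
        have hb : ((gain (Spider m ℓ) x none : ℕ) : ℝ) ≤ (ℓ : ℝ) := by
          exact_mod_cast gain_le_body x
        exact mul_le_mul_of_nonneg_left hb (X.2.1 x)
    _ = (ℓ : ℝ) := by rw [← Finset.sum_mul, X.2.2, one_mul]

lemma bdd : BddAbove (Set.range fun X : Strat (SpiderVert m ℓ) =>
    Finset.univ.inf' Finset.univ_nonempty
      (fun y : SpiderVert m ℓ => Gain (Spider m ℓ) X.1 (pureStrat y))) := by
  refine ⟨(ℓ : ℝ), ?_⟩
  rintro v ⟨X, rfl⟩
  exact inf_le_ell m ℓ X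

lemma value_le : safetyValue (Spider m ℓ) ≤ (ℓ : ℝ) := by
  have : Nonempty (Strat (SpiderVert m ℓ)) :=
    ⟨⟨pureStrat none, pure_mem none⟩⟩
  exact ciSup_le fun X => inf_le_ell m ℓ X

lemma value_nonneg : 0 ≤ safetyValue (Spider m ℓ) := by
  refine le_ciSup_of_le (bdd m ℓ) ⟨pureStrat none, pure_mem none⟩ ?_
  exact Finset.le_inf' _ _ fun y _ => gain_nonneg_sum _ _ y

lemma value_lower (hm : 3 ≤ m) (hl : 4 ≤ ℓ) :
    (ℓ : ℝ) - Real.sqrt ℓ / Real.sqrt m - 3 ≤ safetyValue (Spider m ℓ) := by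
  obtain ⟨k, hkl, hbound⟩ := key (m := m) (ℓ := ℓ) hm hl
  refine le_ciSup_of_le (bdd m ℓ) ⟨CS m ℓ k, fun v => CS_nonneg k v, CS_sum k hkl⟩ ?_
  exact Finset.le_inf' _ _ fun y _ => hbound y

end Value

end SP

/-- For every `m ≥ 3` there is a constant `C ≥ 0` such that for all `ℓ ≥ 1` the safety
value on the spider `S(m,ℓ)` satisfies `ℓ - √ℓ/√m - C ≤ value ≤ ℓ`. -/
theorem stmt_9 (m : ℕ) (hm : 3 ≤ m) :
    ∃ C : ℝ, 0 ≤ C ∧ ∀ ℓ : ℕ, 1 ≤ ℓ →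
      (ℓ : ℝ) - Real.sqrt ℓ / Real.sqrt m - C ≤ safetyValue (Spider m ℓ) ∧
      safetyValue (Spider m ℓ) ≤ (ℓ : ℝ) := by
  refine ⟨3, by norm_num, fun ℓ hl => ⟨?_, SP.value_le m ℓ⟩⟩
  rcases le_or_gt 4 ℓ with h4 | h4
  · exact SP.value_lower m ℓ hm h4
  · have h1 : (ℓ : ℝ) ≤ 3 := by exact_mod_cast (by omega : ℓ ≤ 3)
    have h2 : 0 ≤ Real.sqrt ℓ / Real.sqrt m := by positivity
    have h3 := SP.value_nonneg m ℓ
    linarith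
end

section
/- Let m ≥ 2 and h ≥ 1, and let T(m,h) be the complete m-ary tree of height h with n = (m^{h+1}−1)/(m−1) vertices. Then the guaranteed gain of Player 1 with the strategy μ1 is GGain(T(m,h), μ1) = Gain(T(m,h), μ1, Z(root)) = m^{h+1}(m^h−1)/(m^{h+2}−m^{h+1}+m^h−1) = (n−1)((m−1)n+1)/(n(m²−m+1)+m−1); in particular the minimum of Gain(T(m,h), μ1, Z(y)) over vertices y is attained at the root. -/
/-- Vertices of the complete `m`-ary tree of height `h`: lists over `Fin m` of length
at most `h`; the length of the list is the depth of the vertex. -/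
def TreeVert (m h : ℕ) := {l : List (Fin m) // l.length ≤ h}

noncomputable instance (m h : ℕ) : Fintype (TreeVert m h) :=
  (List.finite_length_le (Fin m) h).fintype

instance (m h : ℕ) : DecidableEq (TreeVert m h) := Subtype.instDecidableEq

instance (m h : ℕ) : Nonempty (TreeVert m h) := ⟨⟨[], by simp⟩⟩

/-- The complete `m`-ary tree of height `h`: each vertex of depth `< h` has exactly
`m` children, obtained by prepending an element of `Fin m`. -/
def CompleteTree (m h : ℕ) : SimpleGraph (TreeVert m h) :=
  SimpleGraph.fromRel (fun x y => x.1 = y.1.tail ∧ y.1.length = x.1.length + 1)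

/-- The root of the complete `m`-ary tree. -/
def root (m h : ℕ) : TreeVert m h := ⟨[], by simp⟩

noncomputable def alpha1 (m h : ℕ) : ℝ :=
  ((m : ℝ) ^ h - 1) / ((m : ℝ) ^ (h + 2) - (m : ℝ) ^ (h + 1) + (m : ℝ) ^ h - 1)

noncomputable def beta1 (m h : ℕ) : ℝ :=
  ((m : ℝ) - 1) * (m : ℝ) ^ h / ((m : ℝ) ^ (h + 2) - (m : ℝ) ^ (h + 1) + (m : ℝ) ^ h - 1)

noncomputable def alpha2 (m h : ℕ) : ℝ :=
  ((m : ℝ) - 1) * ((m : ℝ) ^ (h + 1) - (m : ℝ) ^ h + 1) /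
    ((m : ℝ) ^ (h + 2) - (m : ℝ) ^ (h + 1) + (m : ℝ) ^ h - 1)

noncomputable def beta2 (m h : ℕ) : ℝ :=
  ((m : ℝ) ^ h - 1) / ((m : ℝ) ^ (h + 2) - (m : ℝ) ^ (h + 1) + (m : ℝ) ^ h - 1)

/-- The mixed strategy `μ₁`: probability `α₁` on the root, `β₁` on each depth-1 vertex. -/
noncomputable def mu1 (m h : ℕ) : TreeVert m h → ℝ := fun v =>
  if v.1.length = 0 then alpha1 m h else if v.1.length = 1 then beta1 m h else 0

/-- The mixed strategy `μ₂`: probability `α₂` on the root, `β₂` on each depth-1 vertex. -/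
noncomputable def mu2 (m h : ℕ) : TreeVert m h → ℝ := fun v =>
  if v.1.length = 0 then alpha2 m h else if v.1.length = 1 then beta2 m h else 0

namespace Stmt12

/-- longest common prefix length -/
def lcp {α : Type*} [DecidableEq α] : List α → List α → ℕ
  | a::s, b::t => if a = b then lcp s t + 1 else 0
  | _, _ => 0

variable {α : Type*} [DecidableEq α]

@[simp] lemma lcp_nil_left (t : List α) : lcp [] t = 0 := by cases t <;> rfl
@[simp] lemma lcp_nil_right (s : List α) : lcp s [] = 0 := by cases s <;> rfl
lemma lcp_cons (a b : α) (s t : List α) :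
    lcp (a::s) (b::t) = if a = b then lcp s t + 1 else 0 := rfl

lemma lcp_le_left : ∀ (s t : List α), lcp s t ≤ s.length
  | [], t => by simp
  | a::s, [] => by simp
  | a::s, b::t => by
    rw [lcp_cons]; split
    · simpa using lcp_le_left s t
    · simp

lemma lcp_comm : ∀ (s t : List α), lcp s t = lcp t s
  | [], t => by simp
  | a::s, [] => by simp
  | a::s, b::t => by
    rw [lcp_cons, lcp_cons, lcp_comm s t]
    by_cases hab : a = b <;> simp [hab, Ne.symm, eq_comm]

lemma lcp_le_right (s t : List α) : lcp s t ≤ t.length := lcp_comm s t ▸ lcp_le_left t s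

@[simp] lemma lcp_self : ∀ (s : List α), lcp s s = s.length
  | [] => by simp
  | a::s => by rw [lcp_cons]; simp [lcp_self s]

lemma le_lcp_iff : ∀ (s t : List α) (k : ℕ), k ≤ t.length →
    (k ≤ lcp s t ↔ t.take k <+: s)
  | s, t, 0, _ => by simp
  | [], t, (k+1), hk => by
    rw [lcp_nil_left]
    constructor
    · omega
    · intro hpre
      have := hpre.length_le
      simp only [List.length_take, List.length_nil] at this
      omega
  | a::s, [], (k+1), hk => by simp at hk
  | a::s, b::t, (k+1), hk => by
    rw [lcp_cons, List.take_succ_cons]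
    by_cases hab : a = b
    · subst hab
      rw [if_pos rfl, Nat.add_le_add_iff_right, le_lcp_iff s t k (by simpa using hk)]
      constructor
      · intro hp
        exact List.cons_prefix_cons.mpr ⟨rfl, hp⟩
      · intro hp
        exact (List.cons_prefix_cons.mp hp).2
    · rw [if_neg hab]
      constructor
      · omega
      · intro hp
        exact absurd (List.cons_prefix_cons.mp hp).1 (Ne.symm hab)

lemma take_lcp_eq : ∀ (s t : List α), s.take (lcp s t) = t.take (lcp s t)
  | [], t => by simp
  | a::s, [] => by simp
  | a::s, b::t => by
    rw [lcp_cons]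
    by_cases hab : a = b
    · rw [if_pos hab, List.take_succ_cons, List.take_succ_cons, hab]
      rw [take_lcp_eq s t]
    · simp [if_neg hab]

lemma lcp_snoc_le : ∀ (s t : List α) (a : α), lcp (s ++ [a]) t ≤ lcp s t + 1
  | [], t, a => by
    cases t with
    | nil => simp
    | cons b t => rw [List.nil_append, lcp_cons]; split <;> simp
  | c::s, [], a => by simp
  | c::s, b::t, a => by
    rw [List.cons_append, lcp_cons, lcp_cons]
    split
    · simpa using lcp_snoc_le s t a
    · simp

lemma le_lcp_snoc : ∀ (s t : List α) (a : α), lcp s t ≤ lcp (s ++ [a]) t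
  | [], t, a => by simp
  | c::s, [], a => by simp
  | c::s, b::t, a => by
    rw [List.cons_append, lcp_cons, lcp_cons]
    split
    · simpa using le_lcp_snoc s t a
    · simp


section Tree

variable {m h : ℕ}

def lcs (u v : List (Fin m)) : ℕ := lcp u.reverse v.reverse

lemma lcs_comm (u v : List (Fin m)) : lcs u v = lcs v u := lcp_comm _ _
lemma lcs_le_left (u v : List (Fin m)) : lcs u v ≤ u.length := by
  simpa [lcs] using lcp_le_left u.reverse v.reverse
lemma lcs_le_right (u v : List (Fin m)) : lcs u v ≤ v.length := by
  simpa [lcs] using lcp_le_right u.reverse v.reverse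
@[simp] lemma lcs_self (u : List (Fin m)) : lcs u u = u.length := by
  rw [lcs, lcp_self, List.length_reverse]

lemma take_rev_eq_drop_rev (v : List (Fin m)) (k : ℕ) :
    v.reverse.take k = (v.drop (v.length - k)).reverse := by
  have := @List.reverse_take (Fin m) v.reverse k
  rw [List.reverse_reverse, List.length_reverse] at this
  rw [← this, List.reverse_reverse]

lemma le_lcs_iff (u v : List (Fin m)) (k : ℕ) (hk : k ≤ v.length) :
    k ≤ lcs u v ↔ v.drop (v.length - k) <:+ u := by
  rw [lcs, le_lcp_iff _ _ k (by simpa using hk), take_rev_eq_drop_rev,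
    List.reverse_prefix]

lemma drop_lcs_eq (u v : List (Fin m)) :
    u.drop (u.length - lcs u v) = v.drop (v.length - lcs u v) := by
  have h1 := take_lcp_eq u.reverse v.reverse
  have h2 := take_rev_eq_drop_rev u (lcs u v)
  have h3 := take_rev_eq_drop_rev v (lcs u v)
  rw [lcs] at h2 h3 ⊢
  rw [h2, h3] at h1
  exact List.reverse_injective h1

lemma le_lcs_cons (a : Fin m) (u v : List (Fin m)) : lcs u v ≤ lcs (a :: u) v := by
  rw [lcs, lcs, List.reverse_cons]
  exact le_lcp_snoc _ _ _

lemma lcs_cons_le (a : Fin m) (u v : List (Fin m)) : lcs (a :: u) v ≤ lcs u v + 1 := by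
  rw [lcs, lcs, List.reverse_cons]
  exact lcp_snoc_le _ _ _

lemma adj_cons {a : Fin m} {t : List (Fin m)} (ht : (a::t).length ≤ h) (ht' : t.length ≤ h) :
    (CompleteTree m h).Adj ⟨a::t, ht⟩ ⟨t, ht'⟩ := by
  rw [CompleteTree]; erw [SimpleGraph.fromRel_adj]
  refine ⟨?_, Or.inr ⟨rfl, by simp⟩⟩
  intro hc
  have := congrArg (List.length ∘ Subtype.val) hc
  simp at this

lemma reachable_root : ∀ (l : List (Fin m)) (hl : l.length ≤ h),
    (CompleteTree m h).Reachable ⟨l, hl⟩ (root m h)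
  | [], hl => SimpleGraph.Reachable.refl _
  | a::t, hl => by
    have ht' : t.length ≤ h := by simp at hl; omega
    exact ((adj_cons hl ht').reachable).trans (reachable_root t ht')

lemma tree_connected : (CompleteTree m h).Connected := by
  rw [SimpleGraph.connected_iff]
  exact ⟨fun u v => (reachable_root u.1 u.2).trans (reachable_root v.1 v.2).symm,
    inferInstance⟩

lemma dist_drop_le : ∀ (l : List (Fin m)) (hl : l.length ≤ h) (k : ℕ)
    (hk : (l.drop k).length ≤ h),
    (CompleteTree m h).dist ⟨l, hl⟩ ⟨l.drop k, hk⟩ ≤ k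
  | [], hl, k, hk => by
    have : (⟨List.drop k [], hk⟩ : TreeVert m h) = ⟨[], hl⟩ := Subtype.ext (by simp)
    erw [this, SimpleGraph.dist_self]
    omega
  | a::t, hl, 0, hk => le_of_eq SimpleGraph.dist_self
  | a::t, hl, (k+1), hk => by
    have ht' : t.length ≤ h := by simp at hl; omega
    have hk' : (t.drop k).length ≤ h := hk
    have h1 : (CompleteTree m h).dist ⟨a::t, hl⟩ ⟨t, ht'⟩ ≤ 1 :=
      le_trans (SimpleGraph.dist_le (adj_cons hl ht').toWalk) (le_of_eq rfl)
    have h2 := dist_drop_le t ht' k hk'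
    have htri := tree_connected.dist_triangle (V := TreeVert m h) (u := (⟨a::t, hl⟩ : TreeVert m h))
      (v := ⟨t, ht'⟩) (w := ⟨t.drop k, hk'⟩)
    show (CompleteTree m h).dist ⟨a::t, hl⟩ ⟨t.drop k, hk'⟩ ≤ k + 1
    omega

lemma dist_le_formula (u v : TreeVert m h) :
    (CompleteTree m h).dist u v + 2 * lcs u.1 v.1 ≤ u.1.length + v.1.length := by
  obtain ⟨lu, hlu⟩ := u
  obtain ⟨lv, hlv⟩ := v
  simp only
  set c := lcs lu lv with hc
  have hcu : c ≤ lu.length := lcs_le_left _ _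
  have hcv : c ≤ lv.length := lcs_le_right _ _
  have hku : (lu.drop (lu.length - c)).length ≤ h := by rw [List.length_drop]; omega
  have hkv : (lv.drop (lv.length - c)).length ≤ h := by rw [List.length_drop]; omega
  have hd1 := dist_drop_le lu hlu (lu.length - c) hku
  have hd2 := dist_drop_le lv hlv (lv.length - c) hkv
  have heq : (⟨lu.drop (lu.length - c), hku⟩ : TreeVert m h)
      = ⟨lv.drop (lv.length - c), hkv⟩ := Subtype.ext (drop_lcs_eq lu lv)
  have htri := tree_connected.dist_triangle (V := TreeVert m h) (u := (⟨lu, hlu⟩ : TreeVert m h))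
    (v := ⟨lu.drop (lu.length - c), hku⟩) (w := ⟨lv, hlv⟩)
  rw [heq] at htri hd1
  erw [SimpleGraph.dist_comm] at hd2
  omega

lemma walk_length_ge {u v : TreeVert m h} (p : (CompleteTree m h).Walk u v) :
    u.1.length + v.1.length ≤ p.length + 2 * lcs u.1 v.1 := by
  induction p with
  | nil => simp only [SimpleGraph.Walk.length_nil, lcs_self]; omega
  | @cons a b c hadj p ih =>
    rw [CompleteTree, SimpleGraph.fromRel_adj] at hadj
    obtain ⟨hne, hr | hr⟩ := hadj
    · -- a.1 = b.1.tail, b longer : b = x :: a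
      obtain ⟨hx, hlen⟩ := hr
      obtain ⟨x, t, hb⟩ : ∃ x t, b.1 = x :: t := by
        cases hbv : b.1 with
        | nil => rw [hbv] at hlen; simp only [List.length_nil] at hlen; omega
        | cons x t => exact ⟨x, t, rfl⟩
      have hat : a.1 = t := by rw [hx, hb]; rfl
      have hkey : lcs b.1 c.1 ≤ lcs a.1 c.1 + 1 := by
        rw [hb, hat]; exact lcs_cons_le x t c.1
      have hlen' : b.1.length = a.1.length + 1 := hlen
      simp only [SimpleGraph.Walk.length_cons]
      omega
    · -- b.1 = a.1.tail : a = x :: b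
      obtain ⟨hx, hlen⟩ := hr
      obtain ⟨x, t, ha⟩ : ∃ x t, a.1 = x :: t := by
        cases hav : a.1 with
        | nil => rw [hav] at hlen; simp only [List.length_nil] at hlen; omega
        | cons x t => exact ⟨x, t, rfl⟩
      have hbt : b.1 = t := by rw [hx, ha]; rfl
      have hkey : lcs b.1 c.1 ≤ lcs a.1 c.1 := by
        rw [ha, hbt]; exact le_lcs_cons x t c.1
      simp only [SimpleGraph.Walk.length_cons]
      omega

lemma dist_formula (u v : TreeVert m h) :
    (CompleteTree m h).dist u v + 2 * lcs u.1 v.1 = u.1.length + v.1.length := by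
  refine le_antisymm (dist_le_formula u v) ?_
  obtain ⟨p, hp⟩ := tree_connected.exists_walk_length_eq_dist u v
  have := walk_length_ge p
  omega


/-- number of vertices of the complete m-ary tree of height k -/
noncomputable def Scnt (m k : ℕ) : ℕ := Nat.card (TreeVert m k)

def treeEquiv (m k : ℕ) : TreeVert m (k+1) ≃ Option (Fin m × TreeVert m k) where
  toFun u := match u with
    | ⟨[], _⟩ => none
    | ⟨a::t, ht⟩ => some (a, ⟨t, by simpa using Nat.le_of_succ_le_succ (by simpa using ht)⟩)
  invFun o := match o with
    | none => ⟨[], by simp⟩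
    | some (a, t) => ⟨a::t.1, by simpa using Nat.succ_le_succ t.2⟩
  left_inv u := by
    obtain ⟨l, hl⟩ := u
    cases l <;> rfl
  right_inv o := by
    cases o with
    | none => rfl
    | some p => rfl

lemma Scnt_succ (m k : ℕ) : Scnt m (k+1) = m * Scnt m k + 1 := by
  rw [Scnt, Nat.card_congr (treeEquiv m k), Nat.card_eq_fintype_card,
    Fintype.card_option, Fintype.card_prod, Fintype.card_fin, Scnt,
    Nat.card_eq_fintype_card]

lemma Scnt_zero (m : ℕ) : Scnt m 0 = 1 := by
  rw [Scnt, Nat.card_eq_one_iff_unique]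
  constructor
  · constructor
    intro a b
    apply Subtype.ext
    rw [List.length_eq_zero_iff.mp (Nat.le_zero.mp a.2),
      List.length_eq_zero_iff.mp (Nat.le_zero.mp b.2)]
  · infer_instance

lemma Scnt_pos (m k : ℕ) : 1 ≤ Scnt m k := by
  cases k with
  | zero => rw [Scnt_zero]
  | succ k => rw [Scnt_succ]; omega

lemma Scnt_mono {m : ℕ} (hm : 1 ≤ m) : Monotone (Scnt m) := by
  apply monotone_nat_of_le_succ
  intro k
  rw [Scnt_succ]
  have := Scnt_pos m k
  nlinarith

lemma geom_Scnt {m : ℕ} (k : ℕ) :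
    ((m : ℝ) - 1) * (Scnt m k : ℝ) = (m : ℝ) ^ (k + 1) - 1 := by
  induction k with
  | zero => rw [Scnt_zero]; push_cast; ring
  | succ k ih =>
    rw [Scnt_succ]
    push_cast
    ring_nf
    ring_nf at ih
    nlinarith [ih]

variable {m h : ℕ}

/-- the set of vertices having `s` as a suffix (the subtree below the vertex `s`) -/
def Asuf (s : List (Fin m)) : Set (TreeVert m h) := {u | s <:+ u.1}

lemma ncard_Asuf (s : List (Fin m)) (hs : s.length ≤ h) :
    (Asuf s : Set (TreeVert m h)).ncard = Scnt m (h - s.length) := by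
  rw [← Nat.card_coe_set_eq, Scnt]
  refine (Nat.card_eq_of_bijective
    (fun w : TreeVert m (h - s.length) =>
      (⟨⟨w.1 ++ s, by have := w.2; rw [List.length_append]; omega⟩,
        List.suffix_append w.1 s⟩ : (Asuf s : Set (TreeVert m h)))) ⟨?_, ?_⟩).symm
  · intro w w' hww
    apply Subtype.ext
    have : w.1 ++ s = w'.1 ++ s := congrArg (Subtype.val ∘ Subtype.val) hww
    exact List.append_cancel_right this
  · rintro ⟨⟨l, hl⟩, hsuf⟩
    obtain ⟨t, ht⟩ := hsuf
    have hlen : t.length + s.length = l.length := by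
      simpa using congrArg List.length ht
    refine ⟨⟨t, by omega⟩, ?_⟩
    apply Subtype.ext
    apply Subtype.ext
    exact ht

lemma card_V : Nat.card (TreeVert m h) = Scnt m h := rfl

@[simp] lemma lcs_nil (u : List (Fin m)) : lcs u [] = 0 :=
  Nat.le_zero.mp (by simpa using lcs_le_right u [])

lemma lcs_single (u : List (Fin m)) (a : Fin m) :
    lcs u [a] = if [a] <:+ u then 1 else 0 := by
  have hle : lcs u [a] ≤ 1 := by simpa using lcs_le_right u [a]
  have hch := le_lcs_iff u [a] 1 (by simp)
  simp only [List.length_singleton, Nat.sub_self, List.drop_zero] at hch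
  split <;> rename_i hsuf
  · have := hch.mpr hsuf; omega
  · by_contra hc
    exact hsuf (hch.mp (by omega))

lemma suffix_eq_of_length {s s' u : List (Fin m)} (h1 : s <:+ u) (h2 : s' <:+ u)
    (hl : s.length = s'.length) : s = s' := by
  rw [List.suffix_iff_eq_drop] at h1 h2
  rw [h1, h2, hl]

lemma Asuf_anti (y : List (Fin m)) {t t' : ℕ} (ht' : t' ≤ t) (ht : t ≤ y.length) :
    (Asuf (y.drop (y.length - t)) : Set (TreeVert m h)) ⊆ Asuf (y.drop (y.length - t')) := by
  intro u hu
  have hsub : y.drop (y.length - t') <:+ y.drop (y.length - t) := by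
    rw [show y.length - t' = (y.length - t) + (t - t') by omega, ← List.drop_drop]
    exact List.drop_suffix _ _
  exact hsub.trans hu

lemma mem_Asuf_iff (u : TreeVert m h) (y : List (Fin m)) {t : ℕ} (ht : t ≤ y.length) :
    u ∈ (Asuf (y.drop (y.length - t)) : Set (TreeVert m h)) ↔ t ≤ lcs u.1 y :=
  (le_lcs_iff u.1 y t ht).symm

lemma ncard_compl (s : Set (TreeVert m h)) :
    sᶜ.ncard = Scnt m h - s.ncard := by
  have := Set.ncard_add_ncard_compl s
  rw [card_V] at this
  omega

lemma gain_eq_ncard (x y : TreeVert m h) : gain (CompleteTree m h) x y =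
    {u : TreeVert m h |
      x.1.length + 2 * lcs u.1 y.1 < y.1.length + 2 * lcs u.1 x.1}.ncard := by
  rw [gain]
  congr 1
  ext u
  simp only [Set.mem_setOf_eq]
  have h1 := dist_formula u x
  have h2 := dist_formula u y
  omega

lemma gain_self (x : TreeVert m h) : gain (CompleteTree m h) x x = 0 := by
  rw [gain_eq_ncard]
  convert Set.ncard_empty (TreeVert m h)
  ext u
  simp

lemma root_length : (root m h).1.length = 0 := rfl

@[simp] lemma root_val : (root m h).1 = [] := rfl

lemma gain_root_left (y : TreeVert m h) (hd : 1 ≤ y.1.length) :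
    gain (CompleteTree m h) (root m h) y
      = Scnt m h - Scnt m (h - (y.1.length + 1)/2) := by
  set d := y.1.length with hdd
  set k := (d+1)/2 with hk
  have hk1 : k ≤ d := by omega
  have hkh : k ≤ h := le_trans hk1 y.2
  rw [gain_eq_ncard]
  have hset : {u : TreeVert m h |
        (root m h).1.length + 2 * lcs u.1 y.1 < d + 2 * lcs u.1 (root m h).1}
      = (Asuf (y.1.drop (d - k)) : Set (TreeVert m h))ᶜ := by
    ext u
    rw [Set.mem_compl_iff, mem_Asuf_iff u y.1 hk1]
    simp only [Set.mem_setOf_eq, root_length, root_val, lcs_nil, List.length_nil]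
    omega
  rw [hset, ncard_compl, ncard_Asuf _ (by rw [List.length_drop]; omega),
    List.length_drop]
  congr 2
  omega

lemma gain_child_root (i : Fin m) (hh : 1 ≤ h) :
    gain (CompleteTree m h) ⟨[i], by simpa⟩ (root m h) = Scnt m (h - 1) := by
  erw [gain_eq_ncard]
  have hset : {u : TreeVert m h |
        ([i] : List (Fin m)).length + 2 * lcs u.1 (root m h).1
          < (root m h).1.length + 2 * lcs u.1 [i]}
      = (Asuf [i] : Set (TreeVert m h)) := by
    ext u
    simp only [Set.mem_setOf_eq, root_length, root_val, lcs_nil, List.length_singleton, Asuf,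
      lcs_single]
    split <;> rename_i hsuf <;> simp [hsuf]
  rw [hset, ncard_Asuf _ (by simpa), List.length_singleton]

lemma gain_child_sib (y : TreeVert m h) (hd : y.1.length = 1) (hh : 1 ≤ h) (i : Fin m)
    (hi : ([i] : List (Fin m)) ≠ y.1) :
    gain (CompleteTree m h) ⟨[i], by simpa⟩ y = Scnt m (h - 1) := by
  erw [gain_eq_ncard]
  have hset : {u : TreeVert m h |
        ([i] : List (Fin m)).length + 2 * lcs u.1 y.1 < y.1.length + 2 * lcs u.1 [i]}
      = (Asuf [i] : Set (TreeVert m h)) := by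
    ext u
    simp only [Set.mem_setOf_eq, List.length_singleton, hd, Asuf, lcs_single]
    have hL : lcs u.1 y.1 ≤ 1 := by
      have := lcs_le_right u.1 y.1
      omega
    constructor
    · intro hlt
      split at hlt <;> rename_i hsuf
      · exact hsuf
      · omega
    · intro hsuf
      rw [if_pos hsuf]
      have : ¬ (1 ≤ lcs u.1 y.1) := by
        intro hc
        have h2 := (le_lcs_iff u.1 y.1 1 (by omega)).mp hc
        rw [show y.1.length - 1 = 0 by omega, List.drop_zero] at h2
        exact hi (suffix_eq_of_length hsuf h2 (by simp [hd]))
      omega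
  rw [hset, ncard_Asuf _ (by simpa), List.length_singleton]


lemma gain_child_par (y : TreeVert m h) (hd : 2 ≤ y.1.length) (hh : 1 ≤ h) (i : Fin m)
    (hi : ([i] : List (Fin m)) = y.1.drop (y.1.length - 1)) :
    gain (CompleteTree m h) ⟨[i], by simpa⟩ y
      = (Scnt m (h-1) - Scnt m (h - (y.1.length + 2)/2)) + (Scnt m h - Scnt m (h-1)) := by
  set d := y.1.length with hdd
  set b := (d+2)/2 with hb
  have hb1 : 1 ≤ b := by omega
  have hbd : b ≤ d := by omega
  have hdh : d ≤ h := y.2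
  have hsub : (Asuf (y.1.drop (d - b)) : Set (TreeVert m h)) ⊆ Asuf (y.1.drop (d - 1)) :=
    Asuf_anti y.1 hb1 hbd
  erw [gain_eq_ncard]
  have hset : {u : TreeVert m h |
        ([i] : List (Fin m)).length + 2 * lcs u.1 y.1 < d + 2 * lcs u.1 [i]}
      = ((Asuf (y.1.drop (d-1)) \ Asuf (y.1.drop (d-b))) ∪ (Asuf (y.1.drop (d-1)))ᶜ
          : Set (TreeVert m h)) := by
    ext u
    simp only [Set.mem_setOf_eq, Set.mem_union, Set.mem_diff, Set.mem_compl_iff,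
      List.length_singleton, Asuf]
    rw [lcs_single]
    have h1iff : (y.1.drop (d-1) <:+ u.1) ↔ 1 ≤ lcs u.1 y.1 :=
      (le_lcs_iff u.1 y.1 1 (by omega)).symm
    have hbiff : (y.1.drop (d-b) <:+ u.1) ↔ b ≤ lcs u.1 y.1 :=
      (le_lcs_iff u.1 y.1 b hbd).symm
    rw [h1iff, hbiff]
    split <;> rename_i hsuf
    · have hL1 : 1 ≤ lcs u.1 y.1 := h1iff.mp (hi ▸ hsuf)
      omega
    · have hL0 : lcs u.1 y.1 = 0 := by
        by_contra hc
        exact hsuf (hi ▸ (h1iff.mpr (by omega)))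
      omega
  have hdisj : Disjoint ((Asuf (y.1.drop (d-1)) \ Asuf (y.1.drop (d-b))) : Set (TreeVert m h))
      (Asuf (y.1.drop (d-1)))ᶜ :=
    Set.disjoint_left.mpr (fun u hu hc => hc hu.1)
  rw [hset, Set.ncard_union_eq hdisj, Set.ncard_diff hsub, ncard_compl,
    ncard_Asuf _ (by rw [List.length_drop]; omega),
    ncard_Asuf _ (by rw [List.length_drop]; omega), List.length_drop, List.length_drop,
    show d - (d - 1) = 1 by omega, show d - (d - b) = b by omega]

lemma gain_child_other (y : TreeVert m h) (hd : 2 ≤ y.1.length) (hh : 1 ≤ h) (i : Fin m)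
    (hi : ([i] : List (Fin m)) ≠ y.1.drop (y.1.length - 1)) :
    gain (CompleteTree m h) ⟨[i], by simpa⟩ y
      = Scnt m (h-1) + (Scnt m h - Scnt m (h-1) - Scnt m (h - y.1.length/2)) := by
  set d := y.1.length with hdd
  set e := d/2 with he
  have he1 : 1 ≤ e := by omega
  have hed : e ≤ d := by omega
  have hdh : d ≤ h := y.2
  have hsub1 : (Asuf (y.1.drop (d - e)) : Set (TreeVert m h)) ⊆ Asuf (y.1.drop (d - 1)) :=
    Asuf_anti y.1 he1 hed
  have hsubc : (Asuf (y.1.drop (d - e)) : Set (TreeVert m h)) ⊆ (Asuf [i])ᶜ := by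
    intro u hu hc
    exact hi (suffix_eq_of_length hc (hsub1 hu)
      (by rw [List.length_singleton, List.length_drop]; omega))
  erw [gain_eq_ncard]
  have hset : {u : TreeVert m h |
        ([i] : List (Fin m)).length + 2 * lcs u.1 y.1 < d + 2 * lcs u.1 [i]}
      = (Asuf [i] ∪ ((Asuf [i])ᶜ \ Asuf (y.1.drop (d - e))) : Set (TreeVert m h)) := by
    ext u
    simp only [Set.mem_setOf_eq, Set.mem_union, Set.mem_diff, Set.mem_compl_iff,
      List.length_singleton, Asuf]
    rw [lcs_single]
    have h1iff : (y.1.drop (d-1) <:+ u.1) ↔ 1 ≤ lcs u.1 y.1 :=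
      (le_lcs_iff u.1 y.1 1 (by omega)).symm
    have heiff : (y.1.drop (d-e) <:+ u.1) ↔ e ≤ lcs u.1 y.1 :=
      (le_lcs_iff u.1 y.1 e hed).symm
    rw [heiff]
    split <;> rename_i hsuf
    · have hL0 : lcs u.1 y.1 = 0 := by
        by_contra hc
        exact hi (suffix_eq_of_length hsuf (h1iff.mpr (by omega))
          (by rw [List.length_singleton, List.length_drop]; omega))
      simp only [hsuf, true_or, iff_true]
      omega
    · simp only [hsuf, false_or, not_false_iff, true_and]
      omega
  have hdisj : Disjoint (Asuf [i] : Set (TreeVert m h))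
      ((Asuf [i])ᶜ \ Asuf (y.1.drop (d - e))) :=
    Set.disjoint_left.mpr (fun u hu hc => hc.1 hu)
  have hA1 : (Asuf [i] : Set (TreeVert m h)).ncard = Scnt m (h - 1) := by
    rw [ncard_Asuf _ (by simpa), List.length_singleton]
  have hAe : (Asuf (y.1.drop (d - e)) : Set (TreeVert m h)).ncard = Scnt m (h - e) := by
    rw [ncard_Asuf _ (by rw [List.length_drop]; omega), List.length_drop,
      show d - (d - e) = e by omega]
  rw [hset, Set.ncard_union_eq hdisj, Set.ncard_diff hsubc, ncard_compl, hA1, hAe]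


lemma Gain_pure (X : TreeVert m h → ℝ) (y : TreeVert m h) :
    Gain (CompleteTree m h) X (pureStrat y)
      = ∑ x : TreeVert m h, X x * (gain (CompleteTree m h) x y : ℝ) := by
  rw [Gain]
  apply Finset.sum_congr rfl
  intro x _
  rw [Finset.sum_eq_single y]
  · simp [pureStrat]
  · intro b _ hb
    simp [pureStrat, hb]
  · intro hy
    exact absurd (Finset.mem_univ y) hy

lemma sum_mu1 (hh : 1 ≤ h) (g : TreeVert m h → ℝ) :
    ∑ x : TreeVert m h, mu1 m h x * g x
      = alpha1 m h * g (root m h)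
        + beta1 m h * ∑ i : Fin m, g ⟨[i], by simpa⟩ := by
  classical
  set emb : Fin m → TreeVert m h := fun i => ⟨[i], by simpa⟩ with hemb
  have hinj : ∀ a ∈ Finset.univ, ∀ b ∈ Finset.univ, emb a = emb b → a = b := by
    intro a _ b _ hab
    have := congrArg Subtype.val hab
    simpa [emb] using this
  have hroot_not : root m h ∉ Finset.univ.image emb := by
    simp only [Finset.mem_image]
    rintro ⟨a, -, hc⟩
    have := congrArg (fun v : TreeVert m h => v.1.length) hc
    simp [emb, root] at this
  rw [← Finset.sum_subset (Finset.subset_univ (insert (root m h) (Finset.univ.image emb)))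
    (fun x _ hx => ?_)]
  · rw [Finset.sum_insert hroot_not, Finset.sum_image hinj]
    congr 1
    rw [Finset.mul_sum]
    apply Finset.sum_congr rfl
    intro i _
    have hmu : mu1 m h (emb i) = beta1 m h := by simp [mu1, emb]
    rw [hmu]
  · have h0 : x.1.length ≠ 0 := by
      intro h0
      have hx0 : x = root m h := Subtype.ext (List.length_eq_zero_iff.mp h0)
      exact hx (by rw [hx0]; exact Finset.mem_insert_self _ _)
    have h1 : x.1.length ≠ 1 := by
      intro h1
      obtain ⟨a, ha⟩ := List.length_eq_one_iff.mp h1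
      have hxa : x = emb a := Subtype.ext ha
      exact hx (by
        rw [hxa]
        exact Finset.mem_insert_of_mem (Finset.mem_image_of_mem _ (Finset.mem_univ a)))
    simp only [mu1, if_neg h0, if_neg h1, zero_mul]

lemma sum_gain_children_one (hh : 1 ≤ h) (y : TreeVert m h) (hd : y.1.length = 1) :
    ∑ i : Fin m, gain (CompleteTree m h) ⟨[i], by simpa⟩ y
      = (m - 1) * Scnt m (h - 1) := by
  obtain ⟨j, hj⟩ := List.length_eq_one_iff.mp hd
  rw [← Finset.add_sum_erase _ _ (Finset.mem_univ j)]
  have hyj : (⟨[j], by simpa⟩ : TreeVert m h) = y := Subtype.ext hj.symm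
  rw [hyj, gain_self, zero_add]
  rw [Finset.sum_congr rfl (fun i hi => ?_), Finset.sum_const,
    Finset.card_erase_of_mem (Finset.mem_univ j), Finset.card_univ, Fintype.card_fin,
    smul_eq_mul]
  have hij : i ≠ j := Finset.ne_of_mem_erase hi
  exact gain_child_sib y hd hh i (by
    rw [hj]
    intro hc
    exact hij (by simpa using hc))

lemma sum_gain_children_ge2 (hh : 1 ≤ h) (y : TreeVert m h) (hd : 2 ≤ y.1.length) :
    ∑ i : Fin m, gain (CompleteTree m h) ⟨[i], by simpa⟩ y
      = ((Scnt m (h-1) - Scnt m (h - (y.1.length + 2)/2)) + (Scnt m h - Scnt m (h-1)))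
        + (m - 1) * (Scnt m (h-1) + (Scnt m h - Scnt m (h-1) - Scnt m (h - y.1.length/2))) := by
  have hs1 : (y.1.drop (y.1.length - 1)).length = 1 := by
    rw [List.length_drop]
    omega
  obtain ⟨j, hj⟩ := List.length_eq_one_iff.mp hs1
  rw [← Finset.add_sum_erase _ _ (Finset.mem_univ j)]
  rw [gain_child_par y hd hh j hj.symm]
  rw [Finset.sum_congr rfl (fun i hi => ?_), Finset.sum_const,
    Finset.card_erase_of_mem (Finset.mem_univ j), Finset.card_univ, Fintype.card_fin,
    smul_eq_mul]
  have hij : i ≠ j := Finset.ne_of_mem_erase hi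
  exact gain_child_other y hd hh i (by
    rw [hj]
    intro hc
    exact hij (by simpa using hc))


lemma D_pos (hm : 2 ≤ m) :
    (0:ℝ) < (m:ℝ)^(h+2) - (m:ℝ)^(h+1) + (m:ℝ)^h - 1 := by
  have hM : (2:ℝ) ≤ (m:ℝ) := by exact_mod_cast hm
  have h1 : (1:ℝ) ≤ (m:ℝ)^h := one_le_pow₀ (by linarith)
  have hp1 : (m:ℝ)^(h+1) = (m:ℝ)^h * m := pow_succ _ _
  have hp2 : (m:ℝ)^(h+2) = (m:ℝ)^(h+1) * m := pow_succ _ _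
  nlinarith [pow_pos (by linarith : (0:ℝ) < (m:ℝ)) (h+1)]

lemma alpha1_nonneg (hm : 2 ≤ m) : 0 ≤ alpha1 m h := by
  have hM : (2:ℝ) ≤ (m:ℝ) := by exact_mod_cast hm
  have h1 : (1:ℝ) ≤ (m:ℝ)^h := one_le_pow₀ (by linarith)
  exact div_nonneg (by linarith) (D_pos hm).le

lemma beta1_nonneg (hm : 2 ≤ m) : 0 ≤ beta1 m h := by
  have hM : (2:ℝ) ≤ (m:ℝ) := by exact_mod_cast hm
  have h1 : (0:ℝ) ≤ (m:ℝ)^h := by positivity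
  exact div_nonneg (by nlinarith) (D_pos hm).le

lemma Gain_mu1_y (hh : 1 ≤ h) (y : TreeVert m h) :
    Gain (CompleteTree m h) (mu1 m h) (pureStrat y)
      = alpha1 m h * (gain (CompleteTree m h) (root m h) y : ℝ)
        + beta1 m h * ∑ i : Fin m, (gain (CompleteTree m h) ⟨[i], by simpa⟩ y : ℝ) := by
  rw [Gain_pure, sum_mu1 hh]

lemma Gain_root_raw (hh : 1 ≤ h) :
    Gain (CompleteTree m h) (mu1 m h) (pureStrat (root m h))
      = beta1 m h * ((m:ℝ) * (Scnt m (h-1) : ℝ)) := by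
  rw [Gain_mu1_y hh, gain_self]
  have hsum : ∑ i : Fin m, (gain (CompleteTree m h) ⟨[i], by simpa⟩ (root m h) : ℝ)
      = (m : ℝ) * (Scnt m (h-1) : ℝ) := by
    rw [Finset.sum_congr rfl (fun i _ => by rw [gain_child_root i hh]), Finset.sum_const,
      Finset.card_univ, Fintype.card_fin, nsmul_eq_mul]
  rw [hsum]
  push_cast
  ring

lemma hS_geom (hh : 1 ≤ h) :
    ((m:ℝ) - 1) * (Scnt m (h-1) : ℝ) = (m:ℝ)^h - 1 := by
  have := geom_Scnt (m := m) (h-1)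
  rwa [show h - 1 + 1 = h by omega] at this

lemma Gain_root_val (hm : 2 ≤ m) (hh : 1 ≤ h) :
    Gain (CompleteTree m h) (mu1 m h) (pureStrat (root m h))
      = (m:ℝ)^(h+1) * ((m:ℝ)^h - 1)
        / ((m:ℝ)^(h+2) - (m:ℝ)^(h+1) + (m:ℝ)^h - 1) := by
  rw [Gain_root_raw hh, beta1]
  have hD := D_pos (h := h) hm
  have hS := hS_geom (m := m) hh
  rw [div_mul_eq_mul_div, div_eq_div_iff hD.ne' hD.ne']
  linear_combination ((m:ℝ)^(h+1) * ((m:ℝ)^(h+2) - (m:ℝ)^(h+1) + (m:ℝ)^h - 1)) * hS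


lemma root_min (hm : 2 ≤ m) (hh : 1 ≤ h) (y : TreeVert m h) :
    Gain (CompleteTree m h) (mu1 m h) (pureStrat (root m h))
      ≤ Gain (CompleteTree m h) (mu1 m h) (pureStrat y) := by
  by_cases hy0 : y.1.length = 0
  · rw [show y = root m h from Subtype.ext (List.length_eq_zero_iff.mp hy0)]
  have hd1 : 1 ≤ y.1.length := by omega
  have hdh : y.1.length ≤ h := y.2
  have hM : (2:ℝ) ≤ (m:ℝ) := by exact_mod_cast hm
  have hrec : Scnt m h = m * Scnt m (h-1) + 1 := by
    have := Scnt_succ m (h-1)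
    rwa [show h - 1 + 1 = h by omega] at this
  have hS1Sh : Scnt m (h-1) ≤ Scnt m h := Scnt_mono (by omega) (by omega)
  have hS := hS_geom (m := m) hh
  have hShR : (Scnt m h : ℝ) = (m:ℝ) * (Scnt m (h-1):ℝ) + 1 := by
    rw [hrec]; push_cast; ring
  rw [Gain_root_raw hh, Gain_mu1_y hh y]
  by_cases hy1 : y.1.length = 1
  · -- depth-1 vertex: equality holds
    have hg0 : gain (CompleteTree m h) (root m h) y = Scnt m h - Scnt m (h-1) := by
      rw [gain_root_left y hd1, hy1]
    have hsumcast : ∑ i : Fin m, (gain (CompleteTree m h) ⟨[i], by simpa⟩ y : ℝ)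
        = ((m:ℝ)-1) * (Scnt m (h-1) : ℝ) := by
      rw [← Nat.cast_sum, sum_gain_children_one hh y hy1,
        Nat.cast_mul, Nat.cast_sub (show 1 ≤ m by omega), Nat.cast_one]
    rw [hg0, hsumcast, Nat.cast_sub hS1Sh]
    rw [← sub_nonneg]
    have hexp : alpha1 m h * ((Scnt m h : ℝ) - (Scnt m (h-1) : ℝ))
          + beta1 m h * (((m:ℝ)-1) * (Scnt m (h-1) : ℝ))
          - beta1 m h * ((m:ℝ) * (Scnt m (h-1) : ℝ))
        = (((m:ℝ)^h - 1) * ((Scnt m h : ℝ) - (Scnt m (h-1) : ℝ))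
            + ((m:ℝ)-1)*(m:ℝ)^h * (((m:ℝ)-1) * (Scnt m (h-1) : ℝ))
            - ((m:ℝ)-1)*(m:ℝ)^h * ((m:ℝ) * (Scnt m (h-1) : ℝ)))
          / ((m:ℝ)^(h+2) - (m:ℝ)^(h+1) + (m:ℝ)^h - 1) := by
      rw [alpha1, beta1]; ring
    rw [hexp]
    apply div_nonneg _ (D_pos hm).le
    have hnum : ((m:ℝ)^h - 1) * ((Scnt m h : ℝ) - (Scnt m (h-1) : ℝ))
            + ((m:ℝ)-1)*(m:ℝ)^h * (((m:ℝ)-1) * (Scnt m (h-1) : ℝ))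
            - ((m:ℝ)-1)*(m:ℝ)^h * ((m:ℝ) * (Scnt m (h-1) : ℝ)) = 0 := by
      linear_combination ((m:ℝ)^h - 1) * hShR - hS
    exact le_of_eq hnum.symm
  · -- depth ≥ 2
    have hd2 : 2 ≤ y.1.length := by omega
    set d := y.1.length with hdd
    set k := (d+1)/2 with hk
    set b := (d+2)/2 with hb
    set e := d/2 with he
    have hkSh : Scnt m (h-k) ≤ Scnt m h := Scnt_mono (by omega) (by omega)
    have hbS1 : Scnt m (h-b) ≤ Scnt m (h-1) := Scnt_mono (by omega) (by omega)
    have heS1 : Scnt m (h-e) ≤ Scnt m (h-1) := Scnt_mono (by omega) (by omega)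
    have hmulS1 : Scnt m (h-1) ≤ (m-1) * Scnt m (h-1) :=
      Nat.le_mul_of_pos_left _ (by omega)
    have hms : m * Scnt m (h-1) = (m-1) * Scnt m (h-1) + Scnt m (h-1) := by
      have := Nat.le_mul_of_pos_left (Scnt m (h-1)) (show 0 < m by omega)
      rw [Nat.sub_one_mul]
      omega
    have heSh : Scnt m (h-e) ≤ Scnt m h - Scnt m (h-1) := by omega
    have hg0 : gain (CompleteTree m h) (root m h) y = Scnt m h - Scnt m (h-k) :=
      gain_root_left y hd1
    have hsumcast : ∑ i : Fin m, (gain (CompleteTree m h) ⟨[i], by simpa⟩ y : ℝ)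
        = (((Scnt m (h-1) : ℝ) - (Scnt m (h-b) : ℝ)) + ((Scnt m h : ℝ) - (Scnt m (h-1) : ℝ)))
          + ((m:ℝ)-1) * ((Scnt m (h-1) : ℝ)
              + ((Scnt m h : ℝ) - (Scnt m (h-1) : ℝ) - (Scnt m (h-e) : ℝ))) := by
      rw [← Nat.cast_sum, sum_gain_children_ge2 hh y hd2]
      simp only [← hdd, ← hb, ← he]
      push_cast [Nat.cast_sub (show 1 ≤ m by omega), Nat.cast_sub hbS1,
        Nat.cast_sub hS1Sh, Nat.cast_sub heSh]
      ring
    rw [hg0, hsumcast, Nat.cast_sub hkSh]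
    rw [← sub_nonneg]
    have hexp : alpha1 m h * ((Scnt m h : ℝ) - (Scnt m (h-k) : ℝ))
          + beta1 m h * ((((Scnt m (h-1) : ℝ) - (Scnt m (h-b) : ℝ))
              + ((Scnt m h : ℝ) - (Scnt m (h-1) : ℝ)))
            + ((m:ℝ)-1) * ((Scnt m (h-1) : ℝ)
              + ((Scnt m h : ℝ) - (Scnt m (h-1) : ℝ) - (Scnt m (h-e) : ℝ))))
          - beta1 m h * ((m:ℝ) * (Scnt m (h-1) : ℝ))
        = (((m:ℝ)^h - 1) * ((Scnt m h : ℝ) - (Scnt m (h-k) : ℝ))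
            + ((m:ℝ)-1)*(m:ℝ)^h * ((((Scnt m (h-1) : ℝ) - (Scnt m (h-b) : ℝ))
              + ((Scnt m h : ℝ) - (Scnt m (h-1) : ℝ)))
            + ((m:ℝ)-1) * ((Scnt m (h-1) : ℝ)
              + ((Scnt m h : ℝ) - (Scnt m (h-1) : ℝ) - (Scnt m (h-e) : ℝ))))
            - ((m:ℝ)-1)*(m:ℝ)^h * ((m:ℝ) * (Scnt m (h-1) : ℝ)))
          / ((m:ℝ)^(h+2) - (m:ℝ)^(h+1) + (m:ℝ)^h - 1) := by
      rw [alpha1, beta1]; ring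
    rw [hexp]
    apply div_nonneg _ (D_pos hm).le
    have h1 : (1:ℝ) ≤ (m:ℝ)^h := one_le_pow₀ (by linarith)
    have hkShR : (Scnt m (h-k) : ℝ) ≤ (Scnt m h : ℝ) := by exact_mod_cast hkSh
    have hbS1R : (Scnt m (h-b) : ℝ) ≤ (Scnt m (h-1) : ℝ) := by exact_mod_cast hbS1
    have heS1R : (Scnt m (h-e) : ℝ) ≤ (Scnt m (h-1) : ℝ) := by exact_mod_cast heS1
    have hS1pos : (1:ℝ) ≤ (Scnt m (h-1) : ℝ) := by exact_mod_cast Scnt_pos m (h-1)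
    have hA : (0:ℝ) ≤ (m:ℝ)^h - 1 := by linarith
    have hB : (0:ℝ) ≤ ((m:ℝ)-1)*(m:ℝ)^h := by
      apply mul_nonneg (by linarith) (by positivity)
    have hbr : (m:ℝ) * (Scnt m (h-1) : ℝ)
        ≤ (((Scnt m (h-1) : ℝ) - (Scnt m (h-b) : ℝ))
              + ((Scnt m h : ℝ) - (Scnt m (h-1) : ℝ)))
            + ((m:ℝ)-1) * ((Scnt m (h-1) : ℝ)
              + ((Scnt m h : ℝ) - (Scnt m (h-1) : ℝ) - (Scnt m (h-e) : ℝ))) := by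
      rw [hShR]
      nlinarith [mul_nonneg (by linarith : (0:ℝ) ≤ (m:ℝ)-1)
          (sub_nonneg.mpr heS1R),
        mul_nonneg (mul_nonneg (by linarith : (0:ℝ) ≤ (m:ℝ))
          (by linarith : (0:ℝ) ≤ (m:ℝ)-2))
          (by positivity : (0:ℝ) ≤ (Scnt m (h-1) : ℝ)), hbS1R]
    have h2 := mul_le_mul_of_nonneg_left hbr hB
    have h3 : (0:ℝ) ≤ ((m:ℝ)^h - 1) * ((Scnt m h : ℝ) - (Scnt m (h-k) : ℝ)) :=
      mul_nonneg hA (sub_nonneg.mpr hkShR)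
    linarith [h2, h3]

end Tree

end Stmt12

/-- On the complete `m`-ary tree of height `h`, the guaranteed gain of Player 1 with
strategy `μ₁` (the minimum over vertices `y` of `Gain(T, μ₁, Z(y))`) is attained at the
root and equals `m^{h+1}(m^h - 1)/(m^{h+2} - m^{h+1} + m^h - 1)`, which equals
`(n-1)((m-1)n+1)/(n(m²-m+1)+m-1)` where `n = (m^{h+1}-1)/(m-1)`. -/
theorem stmt_12 (m h : ℕ) (hm : 2 ≤ m) (hh : 1 ≤ h)
    (n : ℝ) (hn : n = ((m : ℝ) ^ (h + 1) - 1) / ((m : ℝ) - 1)) :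
    Finset.univ.inf' Finset.univ_nonempty
        (fun y : TreeVert m h => Gain (CompleteTree m h) (mu1 m h) (pureStrat y)) =
      Gain (CompleteTree m h) (mu1 m h) (pureStrat (root m h)) ∧
    Gain (CompleteTree m h) (mu1 m h) (pureStrat (root m h)) =
      (m : ℝ) ^ (h + 1) * ((m : ℝ) ^ h - 1) /
        ((m : ℝ) ^ (h + 2) - (m : ℝ) ^ (h + 1) + (m : ℝ) ^ h - 1) ∧
    (m : ℝ) ^ (h + 1) * ((m : ℝ) ^ h - 1) /
        ((m : ℝ) ^ (h + 2) - (m : ℝ) ^ (h + 1) + (m : ℝ) ^ h - 1) =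
      (n - 1) * (((m : ℝ) - 1) * n + 1) / (n * ((m : ℝ) ^ 2 - (m : ℝ) + 1) + (m : ℝ) - 1) := by
  have hM : (2:ℝ) ≤ (m:ℝ) := by exact_mod_cast hm
  have hD := Stmt12.D_pos (h := h) hm
  have hm1 : (0:ℝ) < (m:ℝ) - 1 := by linarith
  refine ⟨?_, Stmt12.Gain_root_val hm hh, ?_⟩
  · apply le_antisymm
    · exact Finset.inf'_le _ (Finset.mem_univ (root m h))
    · exact Finset.le_inf' _ _ (fun y _ => Stmt12.root_min hm hh y)
  · subst hn
    have hE : ((m : ℝ) ^ (h + 1) - 1) / ((m : ℝ) - 1) * ((m : ℝ) ^ 2 - (m : ℝ) + 1)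
          + (m : ℝ) - 1
        = (m:ℝ) * ((m : ℝ) ^ (h + 2) - (m : ℝ) ^ (h + 1) + (m : ℝ) ^ h - 1)
          / ((m:ℝ) - 1) := by
      field_simp
      ring
    rw [hE]
    have hEpos : (0:ℝ) < (m:ℝ) * ((m : ℝ) ^ (h + 2) - (m : ℝ) ^ (h + 1) + (m : ℝ) ^ h - 1)
        / ((m:ℝ) - 1) := div_pos (mul_pos (by linarith) hD) hm1
    rw [div_eq_div_iff hD.ne' hEpos.ne']
    field_simp
    ring
end

section
/- Let m ≥ 2 and h ≥ 1, and let T(m,h) be the complete m-ary tree of height h. Then for every depth-1 vertex v, Gain(T(m,h), μ1, Z(root)) = Gain(T(m,h), μ1, Z(v)) = m^{h+1}(m^h−1)/(m^{h+2}−m^{h+1}+m^h−1). -/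
namespace CDAux

open SimpleGraph

variable {m h : ℕ}

lemma ne_of_length_ne {x y : TreeVert m h} (hxy : x.1.length ≠ y.1.length) : x ≠ y :=
  fun e => hxy (by rw [e])

lemma adj_cons (a : Fin m) (t : List (Fin m)) (ht : t.length ≤ h)
    (ht' : (a :: t).length ≤ h) :
    (CompleteTree m h).Adj ⟨a :: t, ht'⟩ ⟨t, ht⟩ := by
  rw [CompleteTree]; apply (SimpleGraph.fromRel_adj _ _ _).mpr
  exact ⟨ne_of_length_ne (by simp), Or.inr ⟨rfl, by simp⟩⟩

lemma adj_iff {x y : TreeVert m h} :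
    (CompleteTree m h).Adj x y ↔ (∃ a, x.1 = a :: y.1) ∨ (∃ a, y.1 = a :: x.1) := by
  rw [CompleteTree, SimpleGraph.fromRel_adj]
  constructor
  · rintro ⟨hne, (⟨h1, h2⟩ | ⟨h1, h2⟩)⟩
    · right
      cases hy : y.1 with
      | nil => rw [hy] at h2; simp at h2
      | cons b t =>
        refine ⟨b, ?_⟩
        rw [hy] at h1
        simp only [List.tail_cons] at h1
        exact congrArg (List.cons b) h1.symm
    · left
      cases hx : x.1 with
      | nil => rw [hx] at h2; simp at h2
      | cons b t =>
        refine ⟨b, ?_⟩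
        rw [hx] at h1
        simp only [List.tail_cons] at h1
        exact congrArg (List.cons b) h1.symm
  · rintro (⟨a, ha⟩ | ⟨a, ha⟩)
    · exact ⟨ne_of_length_ne (by simp [ha]), Or.inr ⟨by simp [ha], by simp [ha]⟩⟩
    · exact ⟨ne_of_length_ne (by simp [ha]), Or.inl ⟨by simp [ha], by simp [ha]⟩⟩

lemma exists_walk_suffix (u : TreeVert m h) (l t : List (Fin m)) (hu : u.1 = l ++ t)
    (ht : t.length ≤ h) :
    ∃ p : (CompleteTree m h).Walk u ⟨t, ht⟩, p.length = l.length := by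
  induction l generalizing u with
  | nil =>
    have : u = ⟨t, ht⟩ := Subtype.ext (by simpa using hu)
    subst this
    exact ⟨SimpleGraph.Walk.nil, rfl⟩
  | cons a l ih =>
    have hlt : (l ++ t).length ≤ h := by
      have h2 := u.2; rw [hu] at h2; simp at h2 ⊢; omega
    obtain ⟨p, hp⟩ := ih ⟨l ++ t, hlt⟩ rfl
    have hadj : (CompleteTree m h).Adj u ⟨l ++ t, hlt⟩ := by
      apply adj_iff.mpr; left; exact ⟨a, by simp [hu]⟩
    exact ⟨SimpleGraph.Walk.cons hadj p, (SimpleGraph.Walk.length_cons hadj p).trans (congrArg (· + 1) hp)⟩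

lemma reachable_root (u : TreeVert m h) : (CompleteTree m h).Reachable u (root m h) := by
  obtain ⟨p, _⟩ := exists_walk_suffix u u.1 [] (by simp) (by simp)
  exact ⟨p⟩

lemma reachable (u v : TreeVert m h) : (CompleteTree m h).Reachable u v :=
  (reachable_root u).trans (reachable_root v).symm

lemma walk_length_lower (f : TreeVert m h → ℤ)
    (hf : ∀ x y, (CompleteTree m h).Adj x y → |f x - f y| ≤ 1)
    {u v : TreeVert m h} (p : (CompleteTree m h).Walk u v) :
    |f u - f v| ≤ (p.length : ℤ) := by
  induction p with
  | nil => simp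
  | @cons a b c hadj p ih =>
    have h1 := hf _ _ hadj
    have h2 := abs_sub_le (f a) (f b) (f c)
    rw [SimpleGraph.Walk.length_cons]
    push_cast
    linarith

lemma dist_lower (f : TreeVert m h → ℤ)
    (hf : ∀ x y, (CompleteTree m h).Adj x y → |f x - f y| ≤ 1)
    (u v : TreeVert m h) :
    |f u - f v| ≤ ((CompleteTree m h).dist u v : ℤ) := by
  obtain ⟨p, hp⟩ := (reachable u v).exists_walk_length_eq_dist
  rw [← hp]
  exact walk_length_lower f hf p

lemma abs_len_adj : ∀ x y : TreeVert m h, (CompleteTree m h).Adj x y →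
    |(x.1.length : ℤ) - y.1.length| ≤ 1 := by
  intro x y hadj
  rcases adj_iff.mp hadj with ⟨a, ha⟩ | ⟨a, ha⟩ <;> simp [ha]

lemma dist_root (u : TreeVert m h) :
    (CompleteTree m h).dist u (root m h) = u.1.length := by
  obtain ⟨p, hp⟩ := exists_walk_suffix u u.1 [] (by simp [List.append_nil]) (by simp)
  have hub : (CompleteTree m h).dist u (root m h) ≤ u.1.length :=
    hp ▸ SimpleGraph.dist_le p
  have hlb := dist_lower (fun x => (x.1.length : ℤ)) abs_len_adj u (root m h)
  rw [show (((root m h : TreeVert m h)).1.length : ℤ) = 0 from by simp [root], sub_zero,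
    abs_of_nonneg (by positivity)] at hlb
  omega

/-- `u` lies in the closed subtree below the depth-1 vertex `[i]`. -/
def Suf (i : Fin m) (u : TreeVert m h) : Prop := ∃ l, u.1 = l ++ [i]

open Classical in
noncomputable def gpot (i : Fin m) (u : TreeVert m h) : ℤ :=
  if Suf i u then (u.1.length : ℤ) - 1 else (u.1.length : ℤ) + 1

lemma not_suf_of_nil {i : Fin m} {u : TreeVert m h} (hu : u.1 = []) : ¬ Suf i u := by
  rintro ⟨l, hl⟩; rw [hu] at hl; simp at hl

lemma cons_suffix_iff (a i : Fin m) (x : List (Fin m)) :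
    (∃ l, a :: x = l ++ [i]) ↔ (x = [] ∧ a = i) ∨ (x ≠ [] ∧ ∃ l, x = l ++ [i]) := by
  constructor
  · rintro ⟨l, hl⟩
    cases l with
    | nil => simp at hl; exact Or.inl ⟨hl.2, hl.1⟩
    | cons b l' =>
      simp only [List.cons_append, List.cons.injEq] at hl
      exact Or.inr ⟨by simp [hl.2], ⟨l', hl.2⟩⟩
  · rintro (⟨hx, ha⟩ | ⟨hx, l, hl⟩)
    · exact ⟨[], by simp [hx, ha]⟩
    · exact ⟨a :: l, by simp [hl]⟩

lemma suf_cons {i a : Fin m} {x y : TreeVert m h} (hxy : y.1 = a :: x.1) :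
    Suf i y ↔ (x.1 = [] ∧ a = i) ∨ (x.1 ≠ [] ∧ Suf i x) := by
  unfold Suf; rw [hxy]; exact cons_suffix_iff a i x.1

lemma length_pos_of_suf {i : Fin m} {u : TreeVert m h} (hs : Suf i u) : 1 ≤ u.1.length := by
  obtain ⟨l, hl⟩ := hs; rw [hl]; simp

lemma gpot_adj (i : Fin m) : ∀ x y : TreeVert m h, (CompleteTree m h).Adj x y →
    |gpot i x - gpot i y| ≤ 1 := by
  suffices H : ∀ (a : Fin m) (x y : TreeVert m h), y.1 = a :: x.1 →
      |gpot i x - gpot i y| ≤ 1 by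
    intro x y hadj
    rcases adj_iff.mp hadj with ⟨a, ha⟩ | ⟨a, ha⟩
    · rw [abs_sub_comm]; exact H a y x ha
    · exact H a x y ha
  intro a x y hxy
  have hylen : y.1.length = x.1.length + 1 := by rw [hxy]; simp
  by_cases hx : x.1 = []
  · have hsx : ¬ Suf i x := not_suf_of_nil hx
    by_cases hai : a = i
    · have hsy : Suf i y := ⟨[], by rw [hxy, hx, hai]; rfl⟩
      rw [gpot, gpot, if_neg hsx, if_pos hsy, hylen]
      push_cast; rw [show ((x.1.length : ℤ) + 1 - ((x.1.length : ℤ) + 1 - 1)) = 1 by ring]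
      norm_num
    · have hsy : ¬ Suf i y := by
        rw [suf_cons hxy]
        rintro (⟨_, hai'⟩ | ⟨hx', _⟩)
        · exact hai hai'
        · exact hx' hx
      rw [gpot, gpot, if_neg hsx, if_neg hsy, hylen]
      push_cast
      rw [show ((x.1.length : ℤ) + 1 - ((x.1.length : ℤ) + 1 + 1)) = -1 by ring]
      norm_num
  · have hiff : Suf i y ↔ Suf i x := by rw [suf_cons hxy]; simp [hx]
    by_cases hs : Suf i x
    · rw [gpot, gpot, if_pos hs, if_pos (hiff.mpr hs), hylen]
      push_cast
      rw [show ((x.1.length : ℤ) - 1 - ((x.1.length : ℤ) + 1 - 1)) = -1 by ring]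
      norm_num
    · rw [gpot, gpot, if_neg hs, if_neg (fun hy => hs (hiff.mp hy)), hylen]
      push_cast
      rw [show ((x.1.length : ℤ) + 1 - ((x.1.length : ℤ) + 1 + 1)) = -1 by ring]
      norm_num

/-- The depth-1 vertex `[i]`. -/
def depth1 (i : Fin m) (hh : 1 ≤ h) : TreeVert m h := ⟨[i], by simpa using hh⟩

lemma gpot_depth1 (i : Fin m) (hh : 1 ≤ h) : gpot i (depth1 i hh) = 0 := by
  rw [gpot, if_pos ⟨[], rfl⟩]; simp [depth1]

lemma dist_depth1 (i : Fin m) (hh : 1 ≤ h) (u : TreeVert m h) :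
    ((CompleteTree m h).dist u (depth1 i hh) : ℤ) = gpot i u := by
  have lower := dist_lower (gpot i) (gpot_adj i) u (depth1 i hh)
  rw [gpot_depth1, sub_zero] at lower
  by_cases hs : Suf i u
  · obtain ⟨l, hl⟩ := id hs
    obtain ⟨p, hp⟩ := exists_walk_suffix u l [i] hl (by simpa using hh)
    have hub : (CompleteTree m h).dist u (depth1 i hh) ≤ l.length :=
      hp ▸ SimpleGraph.dist_le p
    have hlen : u.1.length = l.length + 1 := by rw [hl]; simp
    have hg : gpot i u = (l.length : ℤ) := by
      rw [gpot, if_pos hs, hlen]; push_cast; ring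
    rw [hg] at lower ⊢
    rw [abs_of_nonneg (by positivity)] at lower
    omega
  · obtain ⟨p, hp⟩ := exists_walk_suffix u u.1 [] (by simp) (by simp)
    have hadj : (CompleteTree m h).Adj (root m h) (depth1 i hh) :=
      (adj_cons i [] (by simp) (by simpa using hh)).symm
    have hub : (CompleteTree m h).dist u (depth1 i hh) ≤ u.1.length + 1 := by
      have := SimpleGraph.dist_le (p.append (SimpleGraph.Walk.cons hadj SimpleGraph.Walk.nil))
      exact this.trans (le_of_eq ((SimpleGraph.Walk.length_append _ _).trans (congrArg (· + 1) hp)))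
    have hg : gpot i u = (u.1.length : ℤ) + 1 := by rw [gpot, if_neg hs]
    rw [hg] at lower ⊢
    rw [abs_of_nonneg (by positivity)] at lower
    omega

/-- The closed subtree below `[i]`, as a set. -/
def Sset (i : Fin m) : Set (TreeVert m h) := {u | Suf i u}

lemma suf_disjoint {i j : Fin m} (hij : j ≠ i) {u : TreeVert m h}
    (hj : Suf j u) (hi : Suf i u) : False := by
  obtain ⟨l, hl⟩ := hj
  obtain ⟨l', hl'⟩ := hi
  rw [hl] at hl'
  have := congrArg List.reverse hl'
  simp only [List.reverse_append, List.reverse_cons, List.reverse_nil, List.nil_append,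
    List.cons_append, List.cons.injEq] at this
  exact hij this.1

lemma gain_self (x : TreeVert m h) : gain (CompleteTree m h) x x = 0 := by
  simp [gain]


lemma gain_depth1_root (j : Fin m) (hh : 1 ≤ h) :
    gain (CompleteTree m h) (depth1 j hh) (root m h) = (Sset j : Set (TreeVert m h)).ncard := by
  unfold gain
  congr 1
  ext u
  simp only [Set.mem_setOf_eq, Sset]
  have h2 := dist_root u
  have h1 := dist_depth1 j hh u
  constructor
  · intro hlt
    by_contra hns
    rw [gpot, if_neg hns] at h1
    omega
  · intro hs
    rw [gpot, if_pos hs] at h1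
    have hlen := length_pos_of_suf hs
    omega

lemma gain_root_depth1 (i : Fin m) (hh : 1 ≤ h) :
    gain (CompleteTree m h) (root m h) (depth1 i hh) =
      ((Sset i : Set (TreeVert m h))ᶜ).ncard := by
  unfold gain
  congr 1
  ext u
  simp only [Set.mem_setOf_eq, Set.mem_compl_iff, Sset]
  have h2 := dist_root u
  have h1 := dist_depth1 i hh u
  constructor
  · intro hlt hs
    rw [gpot, if_pos hs] at h1
    omega
  · intro hns
    rw [gpot, if_neg hns] at h1
    omega

lemma gain_depth1_depth1 {i j : Fin m} (hij : j ≠ i) (hh : 1 ≤ h) :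
    gain (CompleteTree m h) (depth1 j hh) (depth1 i hh) =
      (Sset j : Set (TreeVert m h)).ncard := by
  unfold gain
  congr 1
  ext u
  simp only [Set.mem_setOf_eq, Sset]
  have hj := dist_depth1 j hh u
  have hi := dist_depth1 i hh u
  constructor
  · intro hlt
    by_contra hnj
    rw [gpot, if_neg hnj] at hj
    by_cases hsi : Suf i u
    · rw [gpot, if_pos hsi] at hi
      have := length_pos_of_suf hsi
      omega
    · rw [gpot, if_neg hsi] at hi
      omega
  · intro hsj
    have hni : ¬ Suf i u := fun hsi => suf_disjoint hij hsj hsi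
    rw [gpot, if_pos hsj] at hj
    rw [gpot, if_neg hni] at hi
    have := length_pos_of_suf hsj
    omega

/-! ### Counting -/

noncomputable def cardLe (m k : ℕ) : ℕ := Nat.card {l : List (Fin m) // l.length ≤ k}

lemma cardLe_zero : cardLe m 0 = 1 := by
  have : Unique {l : List (Fin m) // l.length ≤ 0} :=
    ⟨⟨⟨[], le_refl 0⟩⟩, fun x => Subtype.ext (List.length_eq_zero_iff.mp (Nat.le_zero.mp x.2))⟩
  exact Nat.card_unique

def consEquiv (m k : ℕ) :
    {l : List (Fin m) // l.length ≤ k + 1} ≃ Option (Fin m × {l : List (Fin m) // l.length ≤ k}) where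
  toFun x := match x with
    | ⟨[], _⟩ => none
    | ⟨a :: t, ht⟩ => some (a, ⟨t, Nat.le_of_succ_le_succ ht⟩)
  invFun o := match o with
    | none => ⟨[], Nat.zero_le _⟩
    | some (a, ⟨t, ht⟩) => ⟨a :: t, Nat.succ_le_succ ht⟩
  left_inv x := by rcases x with ⟨(_ | ⟨a, t⟩), hx⟩ <;> rfl
  right_inv o := by rcases o with _ | ⟨a, ⟨t, ht⟩⟩ <;> rfl

lemma cardLe_succ (k : ℕ) : cardLe m (k + 1) = m * cardLe m k + 1 := by
  haveI : Finite {l : List (Fin m) // l.length ≤ k} := (List.finite_length_le (Fin m) k).to_subtype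
  rw [cardLe, Nat.card_congr (consEquiv m k), Finite.card_option, Nat.card_prod,
    Nat.card_eq_fintype_card (α := Fin m), Fintype.card_fin]
  rfl

lemma cardLe_real (k : ℕ) : ((m : ℝ) - 1) * (cardLe m k : ℝ) = (m : ℝ) ^ (k + 1) - 1 := by
  induction k with
  | zero => rw [cardLe_zero]; push_cast; ring
  | succ k ih =>
    rw [cardLe_succ]
    push_cast
    push_cast at ih
    rw [pow_succ]
    linear_combination (m : ℝ) * ih

lemma natCard_treeVert : Nat.card (TreeVert m h) = cardLe m h := rfl

lemma ncard_Sset (hh : 1 ≤ h) (j : Fin m) :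
    (Sset j : Set (TreeVert m h)).ncard = cardLe m (h - 1) := by
  rw [← Nat.card_coe_set_eq, cardLe]
  refine Nat.card_congr ⟨fun u => ⟨u.1.1.dropLast, ?_⟩,
    fun l => ⟨⟨l.1 ++ [j], ?_⟩, ⟨l.1, rfl⟩⟩, ?_, ?_⟩
  · obtain ⟨l, hl⟩ := u.2
    have hlen := u.1.2
    rw [hl] at hlen ⊢
    simp only [List.dropLast_concat]
    simp at hlen
    omega
  · have := l.2
    simp
    omega
  · rintro ⟨u, hu⟩
    obtain ⟨l, hl⟩ := hu
    apply Subtype.ext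
    apply Subtype.ext
    simp only [hl, List.dropLast_concat]
  · rintro ⟨l, hl⟩
    apply Subtype.ext
    simp only [List.dropLast_concat]

lemma ncard_Sset_compl (hh : 1 ≤ h) (j : Fin m) :
    (Sset j : Set (TreeVert m h)).ncard + ((Sset j : Set (TreeVert m h))ᶜ).ncard
      = cardLe m h := by
  rw [← natCard_treeVert]
  exact Set.ncard_add_ncard_compl _

/-! ### Summation -/

def embO (hh : 1 ≤ h) : Option (Fin m) → TreeVert m h
  | none => root m h
  | some i => depth1 i hh

lemma embO_inj (hh : 1 ≤ h) : Function.Injective (embO (m := m) hh) := by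
  rintro (_ | i) (_ | j) hEq
  · rfl
  · exact absurd (congrArg (fun x : TreeVert m h => x.1.length) hEq)
      (by simp [embO, root, depth1])
  · exact absurd (congrArg (fun x : TreeVert m h => x.1.length) hEq)
      (by simp [embO, root, depth1])
  · have hvv := congrArg Subtype.val hEq
    simp only [embO, root, depth1, List.cons.injEq] at hvv
    rw [hvv.1]

lemma Gain_mu1_pure (hh : 1 ≤ h) (y : TreeVert m h) :
    Gain (CompleteTree m h) (mu1 m h) (pureStrat y) =
      alpha1 m h * (gain (CompleteTree m h) (root m h) y : ℝ) +
      ∑ i : Fin m, beta1 m h * (gain (CompleteTree m h) (depth1 i hh) y : ℝ) := by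
  unfold Gain
  have step1 : ∀ x : TreeVert m h,
      (∑ y' : TreeVert m h, mu1 m h x * pureStrat y y' * (gain (CompleteTree m h) x y' : ℝ))
        = mu1 m h x * (gain (CompleteTree m h) x y : ℝ) := by
    intro x
    rw [Finset.sum_eq_single y]
    · simp [pureStrat]
    · intro b _ hb; simp [pureStrat, hb]
    · intro hy; exact absurd (Finset.mem_univ y) hy
  rw [Finset.sum_congr rfl (fun x _ => step1 x)]
  have hz : ∀ x ∈ (Finset.univ : Finset (TreeVert m h)),
      x ∉ Finset.univ.image (embO (m := m) hh) →
      mu1 m h x * (gain (CompleteTree m h) x y : ℝ) = 0 := by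
    intro x _ hx
    suffices hmu : mu1 m h x = 0 by rw [hmu, zero_mul]
    rw [mu1]
    split_ifs with h0 h1
    · exact absurd (Finset.mem_image.mpr ⟨none, Finset.mem_univ _,
        (Subtype.ext (List.length_eq_zero_iff.mp h0)).symm⟩) hx
    · obtain ⟨a, ha⟩ := List.length_eq_one_iff.mp h1
      exact absurd (Finset.mem_image.mpr ⟨some a, Finset.mem_univ _,
        (Subtype.ext ha).symm⟩) hx
    · rfl
  rw [← Finset.sum_subset (Finset.subset_univ _) hz]
  rw [Finset.sum_image (fun a _ b _ hab => embO_inj hh hab)]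
  rw [Fintype.sum_option]
  have hroot : mu1 m h (embO (m := m) hh none) = alpha1 m h := by
    simp [embO, mu1, root]
  have hd1 : ∀ i : Fin m, mu1 m h (embO (m := m) hh (some i)) = beta1 m h := by
    intro i; simp [embO, mu1, depth1]
  rw [hroot]
  have hsum : ∀ i : Fin m,
      mu1 m h (embO (m := m) hh (some i)) *
        (gain (CompleteTree m h) (embO (m := m) hh (some i)) y : ℝ) =
      beta1 m h * (gain (CompleteTree m h) (depth1 i hh) y : ℝ) := fun i => by
    rw [hd1 i]; rfl
  rw [Finset.sum_congr rfl (fun i _ => hsum i)]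
  rfl

end CDAux


/-- On the complete `m`-ary tree of height `h`, for every depth-1 vertex `v`,
`Gain(T, μ₁, Z(root)) = Gain(T, μ₁, Z(v)) = m^{h+1}(m^h-1)/(m^{h+2}-m^{h+1}+m^h-1)`. -/
theorem stmt_14 (m h : ℕ) (hm : 2 ≤ m) (hh : 1 ≤ h)
    (v : TreeVert m h) (hv : v.1.length = 1) :
    Gain (CompleteTree m h) (mu1 m h) (pureStrat (root m h)) =
      Gain (CompleteTree m h) (mu1 m h) (pureStrat v) ∧
    Gain (CompleteTree m h) (mu1 m h) (pureStrat v) =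
      (m : ℝ) ^ (h + 1) * ((m : ℝ) ^ h - 1) /
        ((m : ℝ) ^ (h + 2) - (m : ℝ) ^ (h + 1) + (m : ℝ) ^ h - 1) := by
  classical
  obtain ⟨i0, hv0⟩ := List.length_eq_one_iff.mp hv
  have hveq : v = CDAux.depth1 i0 hh := Subtype.ext hv0
  have hM : (2 : ℝ) ≤ (m : ℝ) := by exact_mod_cast hm
  have hM1 : (m : ℝ) - 1 ≠ 0 := by linarith
  have h1pow : (1 : ℝ) ≤ (m : ℝ) ^ h := one_le_pow₀ (by linarith)
  have hD : (m : ℝ) ^ (h + 2) - (m : ℝ) ^ (h + 1) + (m : ℝ) ^ h - 1 ≠ 0 := by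
    have e1 : (m : ℝ) ^ (h + 1) = (m : ℝ) ^ h * m := pow_succ _ _
    have e2 : (m : ℝ) ^ (h + 2) = (m : ℝ) ^ (h + 1) * m := pow_succ _ _
    have key2 : ((m : ℝ) ^ h * (m : ℝ)) * ((m : ℝ) - 2) ≥ 0 :=
      mul_nonneg (by positivity) (by linarith)
    have key3 : ((m : ℝ) ^ h - 1) * (m : ℝ) ≥ 0 :=
      mul_nonneg (by linarith) (by linarith)
    intro habs
    nlinarith [key2, key3, h1pow, hM]
  set s : ℝ := (CDAux.cardLe m (h - 1) : ℝ) with hsdef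
  set n : ℝ := (CDAux.cardLe m h : ℝ) with hndef
  have hgeo1 : ((m : ℝ) - 1) * s = (m : ℝ) ^ h - 1 := by
    have := CDAux.cardLe_real (m := m) (h - 1)
    rwa [Nat.sub_add_cancel hh] at this
  have hgeo2 : ((m : ℝ) - 1) * n = (m : ℝ) ^ (h + 1) - 1 := CDAux.cardLe_real (m := m) h
  have hns : n - s = (m : ℝ) ^ h := by
    have h3 : ((m : ℝ) - 1) * (n - s) = ((m : ℝ) - 1) * (m : ℝ) ^ h := by
      have e1 : (m : ℝ) ^ (h + 1) = (m : ℝ) ^ h * m := pow_succ _ _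
      linear_combination hgeo2 - hgeo1 + e1
    exact mul_left_cancel₀ hM1 h3
  have hgain_root_v :
      (gain (CompleteTree m h) (root m h) (CDAux.depth1 i0 hh) : ℝ) = n - s := by
    rw [CDAux.gain_root_depth1 i0 hh]
    have hcompl := CDAux.ncard_Sset_compl hh i0
    rw [CDAux.ncard_Sset hh i0] at hcompl
    have := congrArg (fun t : ℕ => (t : ℝ)) hcompl
    push_cast at this
    rw [hsdef, hndef]
    linarith
  have e1 : Gain (CompleteTree m h) (mu1 m h) (pureStrat (root m h)) =
      (m : ℝ) * (beta1 m h * s) := by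
    rw [CDAux.Gain_mu1_pure hh (root m h), CDAux.gain_self]
    have hsum : ∀ i : Fin m,
        beta1 m h * (gain (CompleteTree m h) (CDAux.depth1 i hh) (root m h) : ℝ)
          = beta1 m h * s := fun i => by
      rw [CDAux.gain_depth1_root i hh, CDAux.ncard_Sset hh i]
    rw [Finset.sum_congr rfl (fun i _ => hsum i), Finset.sum_const, Finset.card_univ,
      Fintype.card_fin, nsmul_eq_mul]
    push_cast
    ring
  have e2 : Gain (CompleteTree m h) (mu1 m h) (pureStrat v) =
      alpha1 m h * (n - s) + ((m : ℝ) * (beta1 m h * s) - beta1 m h * s) := by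
    rw [hveq, CDAux.Gain_mu1_pure hh (CDAux.depth1 i0 hh), hgain_root_v]
    have hsum : ∀ i : Fin m,
        beta1 m h * (gain (CompleteTree m h) (CDAux.depth1 i hh) (CDAux.depth1 i0 hh) : ℝ)
          = beta1 m h * s - (if i = i0 then beta1 m h * s else 0) := by
      intro i
      by_cases hi : i = i0
      · subst hi
        rw [CDAux.gain_self, if_pos rfl]
        simp
      · rw [CDAux.gain_depth1_depth1 hi hh, CDAux.ncard_Sset hh i, if_neg hi]
        ring
    rw [Finset.sum_congr rfl (fun i _ => hsum i), Finset.sum_sub_distrib,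
      Finset.sum_const, Finset.card_univ, Fintype.card_fin, nsmul_eq_mul,
      Finset.sum_ite_eq' Finset.univ i0 (fun _ => beta1 m h * s)]
    simp only [Finset.mem_univ, if_true]
    try push_cast
    try ring
  have key : beta1 m h * s = alpha1 m h * (m : ℝ) ^ h := by
    rw [alpha1, beta1]
    field_simp
    linear_combination hgeo1
  constructor
  · rw [e1, e2, hns]
    linarith [key]
  · rw [e2, hns, key]
    rw [alpha1]
    field_simp
    ring
end

section
/- Let m ≥ 2 and h ≥ 1, and let T(m,h) be the complete m-ary tree of height h. Then for every depth-1 vertex v, Gain(T(m,h), Z(root), μ2) = Gain(T(m,h), Z(v), μ2) = m^{h+1}(m^h−1)/(m^{h+2}−m^{h+1}+m^h−1). -/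
namespace Aux15

variable {m h : ℕ}

lemma adj_iff {x y : TreeVert m h} :
    (CompleteTree m h).Adj x y ↔ (∃ c, y.1 = c :: x.1) ∨ (∃ c, x.1 = c :: y.1) := by
  have key : ∀ a b : TreeVert m h,
      (a.1 = b.1.tail ∧ b.1.length = a.1.length + 1) ↔ ∃ c, b.1 = c :: a.1 := by
    rintro a ⟨bl, hb⟩
    constructor
    · rintro ⟨h1, h2⟩
      cases bl with
      | nil => simp at h2
      | cons c t => exact ⟨c, by simp_all⟩
    · rintro ⟨c, hc⟩
      simp only at hc
      subst hc
      simp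
  rw [CompleteTree, SimpleGraph.fromRel_adj, key, key]
  constructor
  · tauto
  · rintro (⟨c, hc⟩ | ⟨c, hc⟩) <;>
    · refine ⟨fun he => ?_, by tauto⟩
      subst he
      exact (List.cons_ne_self c _ (by rw [← hc])).elim

open SimpleGraph

lemma abs_sub_le_walk (f : TreeVert m h → ℤ)
    (hf : ∀ ⦃x y : TreeVert m h⦄, (CompleteTree m h).Adj x y → |f x - f y| ≤ 1) :
    ∀ {x y : TreeVert m h} (p : (CompleteTree m h).Walk x y), |f x - f y| ≤ p.length := by
  intro x y p
  induction p with
  | nil => simp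
  | @cons u a b hadj p ih =>
      calc |f u - f b| ≤ |f u - f a| + |f a - f b| := abs_sub_le _ _ _
        _ ≤ 1 + p.length := add_le_add (hf hadj) ih
        _ = (p.cons hadj).length := by simp [SimpleGraph.Walk.length_cons]; ring

lemma dist_ge (f : TreeVert m h → ℤ)
    (hf : ∀ ⦃x y : TreeVert m h⦄, (CompleteTree m h).Adj x y → |f x - f y| ≤ 1)
    {x y : TreeVert m h} (hr : (CompleteTree m h).Reachable x y) :
    |f x - f y| ≤ ((CompleteTree m h).dist x y : ℤ) := by
  obtain ⟨p, hp⟩ := hr.exists_walk_length_eq_dist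
  rw [← hp]
  exact abs_sub_le_walk f hf p

lemma adj_cons {t : List (Fin m)} {c : Fin m} (h1 : (c :: t).length ≤ h) (h2 : t.length ≤ h) :
    (CompleteTree m h).Adj ⟨c :: t, h1⟩ ⟨t, h2⟩ :=
  adj_iff.mpr (Or.inr ⟨c, rfl⟩)

lemma walk_to_root : ∀ (l : List (Fin m)) (hl : l.length ≤ h),
    ∃ p : (CompleteTree m h).Walk ⟨l, hl⟩ (root m h), p.length = l.length := by
  intro l
  induction l with
  | nil => exact fun hl => ⟨SimpleGraph.Walk.nil, rfl⟩
  | cons c t ih =>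
      intro hl
      have ht : t.length ≤ h := by simp at hl; omega
      obtain ⟨p, hp⟩ := ih ht
      exact ⟨SimpleGraph.Walk.cons (adj_cons hl ht) p, by show p.length + 1 = _; simp [hp]⟩

lemma reachable_root (u : TreeVert m h) : (CompleteTree m h).Reachable u (root m h) := by
  obtain ⟨p, _⟩ := walk_to_root u.1 u.2
  exact ⟨p⟩

lemma connected : (CompleteTree m h).Connected := by
  rw [SimpleGraph.connected_iff_exists_forall_reachable]
  exact ⟨root m h, fun u => (reachable_root u).symm⟩

lemma len_adj : ∀ ⦃x y : TreeVert m h⦄, (CompleteTree m h).Adj x y →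
    |(x.1.length : ℤ) - y.1.length| ≤ 1 := by
  intro x y hxy
  rcases adj_iff.mp hxy with ⟨c, hc⟩ | ⟨c, hc⟩ <;> rw [hc] <;> simp

lemma dist_root (u : TreeVert m h) : (CompleteTree m h).dist u (root m h) = u.1.length := by
  obtain ⟨p, hp⟩ := walk_to_root u.1 u.2
  have h1 : (CompleteTree m h).dist u (root m h) ≤ u.1.length := hp ▸ SimpleGraph.dist_le p
  have h2 := dist_ge _ len_adj (reachable_root u)
  rw [show ((root m h).1.length : ℤ) = 0 from rfl, sub_zero, Nat.abs_cast] at h2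
  omega

/-- Potential function for distance to the depth-1 vertex `[a]`. -/
def F (a : Fin m) (u : TreeVert m h) : ℤ :=
  if u.1.getLast? = some a then (u.1.length : ℤ) - 1 else (u.1.length : ℤ) + 1

lemma F_adj_aux (a : Fin m) {x y : TreeVert m h} (c : Fin m) (hc : y.1 = c :: x.1) :
    |F a x - F a y| ≤ 1 := by
  unfold F
  cases hx : x.1 with
  | nil =>
      rw [hc, hx]
      simp only [List.getLast?_singleton, List.getLast?_nil, List.length_nil, List.length_cons]
      split_ifs <;> simp_all
  | cons d t =>
      rw [hc, hx, List.getLast?_cons_cons, List.length_cons, List.length_cons]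
      split_ifs <;> push_cast <;> simp [abs_le] <;> omega

lemma F_adj (a : Fin m) : ∀ ⦃x y : TreeVert m h⦄, (CompleteTree m h).Adj x y →
    |F a x - F a y| ≤ 1 := by
  intro x y hxy
  rcases adj_iff.mp hxy with ⟨c, hc⟩ | ⟨c, hc⟩
  · exact F_adj_aux a c hc
  · rw [abs_sub_comm]; exact F_adj_aux a c hc

lemma walk_to_single (a : Fin m) (h1 : ([a] : List (Fin m)).length ≤ h) :
    ∀ (l : List (Fin m)) (hl : l.length ≤ h), l.getLast? = some a →
    ∃ p : (CompleteTree m h).Walk ⟨l, hl⟩ ⟨[a], h1⟩, p.length = l.length - 1 := by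
  intro l
  induction l with
  | nil => intro hl hlast; simp at hlast
  | cons c t ih =>
      intro hl hlast
      cases t with
      | nil =>
          simp only [List.getLast?_singleton, Option.some.injEq] at hlast
          subst hlast
          exact ⟨SimpleGraph.Walk.nil, rfl⟩
      | cons d t' =>
          rw [List.getLast?_cons_cons] at hlast
          have ht : (d :: t').length ≤ h := by simp at hl ⊢; omega
          obtain ⟨p, hp⟩ := ih ht hlast
          refine ⟨SimpleGraph.Walk.cons (adj_cons hl ht) p, ?_⟩
          show p.length + 1 = _
          simp [hp]

lemma dist_depth1 (a : Fin m) (h1 : ([a] : List (Fin m)).length ≤ h) (u : TreeVert m h) :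
    (CompleteTree m h).dist u ⟨[a], h1⟩ =
      if u.1.getLast? = some a then u.1.length - 1 else u.1.length + 1 := by
  have hlow := dist_ge (F a) (F_adj a) (((reachable_root _).trans (reachable_root u).symm).symm :
    (CompleteTree m h).Reachable u ⟨[a], h1⟩)
  have hFa : F a (⟨[a], h1⟩ : TreeVert m h) = 0 := by simp [F]
  rw [hFa, sub_zero] at hlow
  split_ifs with hcase
  · -- u ends with a
    obtain ⟨p, hp⟩ := walk_to_single a h1 u.1 u.2 hcase
    have hub : (CompleteTree m h).dist u ⟨[a], h1⟩ ≤ u.1.length - 1 :=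
      hp ▸ SimpleGraph.dist_le p
    have hne : u.1 ≠ [] := by intro hn; rw [hn] at hcase; simp at hcase
    have hlen : 1 ≤ u.1.length := List.length_pos_iff.mpr hne
    have : F a u = (u.1.length : ℤ) - 1 := by simp [F, hcase]
    rw [this] at hlow
    rw [abs_of_nonneg (by push_cast; omega)] at hlow
    omega
  · obtain ⟨p, hp⟩ := walk_to_root u.1 u.2
    have adjra : (CompleteTree m h).Adj (root m h) ⟨[a], h1⟩ := adj_iff.mpr (Or.inl ⟨a, rfl⟩)
    have hub : (CompleteTree m h).dist u ⟨[a], h1⟩ ≤ u.1.length + 1 := by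
      have := SimpleGraph.dist_le (p.append (SimpleGraph.Walk.cons adjra SimpleGraph.Walk.nil))
      have e : (p.append (SimpleGraph.Walk.cons adjra SimpleGraph.Walk.nil)).length = p.length + 1 :=
        SimpleGraph.Walk.length_append _ _
      exact (this.trans_eq e).trans_eq (congrArg (· + 1) hp)
    have : F a u = (u.1.length : ℤ) + 1 := by simp [F, hcase]
    rw [this, abs_of_nonneg (by positivity)] at hlow
    omega

/-! ### Counting -/

def consEquiv : TreeVert m (h + 1) ≃ Option (Fin m × TreeVert m h) where
  toFun u := match u with
    | ⟨[], _⟩ => none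
    | ⟨c :: t, ht⟩ => some (c, ⟨t, by simpa using Nat.lt_succ_iff.mp (Nat.lt_of_lt_of_le (Nat.lt_succ_self _) (by simpa using ht))⟩)
  invFun o := match o with
    | none => ⟨[], by simp⟩
    | some (c, t) => ⟨c :: t.1, by simpa using t.2⟩
  left_inv := by rintro ⟨(_ | ⟨c, t⟩), ht⟩ <;> rfl
  right_inv := by rintro (_ | ⟨c, t⟩) <;> rfl

lemma card_treeVert : ∀ h : ℕ, Fintype.card (TreeVert m h) = ∑ k ∈ Finset.range (h + 1), m ^ k := by
  intro h
  induction h with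
  | zero =>
      rw [Fintype.card_eq_one_iff.mpr ⟨⟨[], le_refl 0⟩, ?_⟩]
      · simp
      · rintro ⟨l, hl⟩
        exact Subtype.ext (List.length_eq_zero_iff.mp (Nat.le_zero.mp hl))
  | succ n ih =>
      rw [Fintype.card_congr (consEquiv (m := m) (h := n)), Fintype.card_option,
        Fintype.card_prod, Fintype.card_fin, ih]
      conv_rhs => rw [geom_sum_succ]

def lastEquiv (a : Fin m) : {u : TreeVert m (h + 1) // u.1.getLast? = some a} ≃ TreeVert m h where
  toFun u := ⟨u.1.1.dropLast, by
    have := u.1.2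
    rw [List.length_dropLast]
    omega⟩
  invFun l := ⟨⟨l.1 ++ [a], by simpa using l.2⟩, by simp [List.getLast?_concat]⟩
  left_inv := by
    rintro ⟨⟨l, hl⟩, hlast⟩
    exact Subtype.ext (Subtype.ext (List.dropLast_append_getLast? a hlast))
  right_inv := by
    rintro ⟨l, hl⟩
    exact Subtype.ext (by simp)

lemma ncard_last (a : Fin m) :
    {u : TreeVert m (h + 1) | u.1.getLast? = some a}.ncard = ∑ k ∈ Finset.range (h + 1), m ^ k := by
  rw [← Nat.card_coe_set_eq,
    Nat.card_congr (show ↥{u : TreeVert m (h + 1) | u.1.getLast? = some a} ≃ TreeVert m h from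
      lastEquiv a),
    Nat.card_eq_fintype_card, card_treeVert]

lemma ncard_not_last (a : Fin m) :
    {u : TreeVert m (h + 1) | ¬ u.1.getLast? = some a}.ncard = m ^ (h + 1) := by
  have h1 := Set.ncard_add_ncard_compl {u : TreeVert m (h + 1) | u.1.getLast? = some a}
    (Set.toFinite _)
  have h2 : {u : TreeVert m (h + 1) | u.1.getLast? = some a}ᶜ
      = {u : TreeVert m (h + 1) | ¬ u.1.getLast? = some a} := rfl
  have h3 : Nat.card (TreeVert m (h + 1)) = (∑ k ∈ Finset.range (h + 1), m ^ k) + m ^ (h + 1) := by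
    rw [Nat.card_eq_fintype_card, card_treeVert, Finset.sum_range_succ]
  rw [h2, ncard_last, h3] at h1
  omega

def depth1Equiv (hh : 1 ≤ h) : {u : TreeVert m h // u.1.length = 1} ≃ Fin m where
  toFun u := u.1.1.head (by
    have h1 := u.2
    intro hn
    rw [hn] at h1
    simp at h1)
  invFun c := ⟨⟨[c], by simpa using hh⟩, rfl⟩
  left_inv := by
    rintro ⟨⟨l, hl⟩, h1⟩
    obtain ⟨c, rfl⟩ := List.length_eq_one_iff.mp h1
    rfl
  right_inv := fun c => rfl

lemma card_depth1_filter (hh : 1 ≤ h) :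
    (Finset.univ.filter (fun y : TreeVert m h => y.1.length = 1)).card = m := by
  rw [← Fintype.card_subtype, Fintype.card_congr (depth1Equiv hh), Fintype.card_fin]


lemma gain_self {V : Type*} (G : SimpleGraph V) (x : V) : gain G x x = 0 := by
  simp [gain]

lemma h1' {a : Fin m} : ([a] : List (Fin m)).length ≤ h + 1 := by simp

lemma gain_root_d1 (a : Fin m) :
    gain (CompleteTree m (h + 1)) (root m (h + 1)) ⟨[a], h1'⟩ = m ^ (h + 1) := by
  unfold gain
  have hset : {u : TreeVert m (h + 1) |
      (CompleteTree m (h + 1)).dist u (root m (h + 1)) <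
        (CompleteTree m (h + 1)).dist u ⟨[a], h1'⟩} =
      {u : TreeVert m (h + 1) | ¬ u.1.getLast? = some a} := by
    ext u
    simp only [Set.mem_setOf_eq, dist_root, dist_depth1]
    by_cases hc : u.1.getLast? = some a
    · have hne : u.1 ≠ [] := by intro hn; rw [hn] at hc; simp at hc
      have := List.length_pos_iff.mpr hne
      rw [if_pos hc]
      simp only [hc, not_true_eq_false, iff_false]
      omega
    · simp [hc]
  rw [hset, ncard_not_last]

lemma gain_d1_root (a : Fin m) :
    gain (CompleteTree m (h + 1)) ⟨[a], h1'⟩ (root m (h + 1)) =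
      ∑ k ∈ Finset.range (h + 1), m ^ k := by
  unfold gain
  have hset : {u : TreeVert m (h + 1) |
      (CompleteTree m (h + 1)).dist u ⟨[a], h1'⟩ <
        (CompleteTree m (h + 1)).dist u (root m (h + 1))} =
      {u : TreeVert m (h + 1) | u.1.getLast? = some a} := by
    ext u
    simp only [Set.mem_setOf_eq, dist_root, dist_depth1]
    by_cases hc : u.1.getLast? = some a
    · have hne : u.1 ≠ [] := by intro hn; rw [hn] at hc; simp at hc
      have := List.length_pos_iff.mpr hne
      rw [if_pos hc]
      simp only [hc, iff_true]
      omega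
    · simp [hc]
  rw [hset, ncard_last]

lemma gain_d1_d1 (a b : Fin m) (hab : a ≠ b) :
    gain (CompleteTree m (h + 1)) ⟨[a], h1'⟩ ⟨[b], h1'⟩ =
      ∑ k ∈ Finset.range (h + 1), m ^ k := by
  unfold gain
  have hset : {u : TreeVert m (h + 1) |
      (CompleteTree m (h + 1)).dist u ⟨[a], h1'⟩ <
        (CompleteTree m (h + 1)).dist u ⟨[b], h1'⟩} =
      {u : TreeVert m (h + 1) | u.1.getLast? = some a} := by
    ext u
    simp only [Set.mem_setOf_eq, dist_depth1]
    by_cases hc : u.1.getLast? = some a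
    · have hne : u.1 ≠ [] := by intro hn; rw [hn] at hc; simp at hc
      have := List.length_pos_iff.mpr hne
      have hb : ¬ u.1.getLast? = some b := by rw [hc]; simp [hab]
      rw [if_pos hc, if_neg hb]
      simp only [hc, iff_true]
      omega
    · by_cases hb : u.1.getLast? = some b
      · have hne : u.1 ≠ [] := by intro hn; rw [hn] at hb; simp at hb
        have := List.length_pos_iff.mpr hne
        rw [if_neg hc, if_pos hb]
        simp only [hc, iff_false]
        omega
      · simp [hc, hb]
  rw [hset, ncard_last]


lemma Gain_pure {V : Type*} [Fintype V] [DecidableEq V] (G : SimpleGraph V) (x : V) (Y : V → ℝ) :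
    Gain G (pureStrat x) Y = ∑ y : V, Y y * (gain G x y : ℝ) := by
  unfold Gain pureStrat
  rw [Finset.sum_eq_single x]
  · simp
  · intro b _ hb; simp [hb]
  · intro hx; exact absurd (Finset.mem_univ x) hx

lemma sum_mu2 (g : TreeVert m h → ℝ) :
    ∑ y : TreeVert m h, mu2 m h y * g y =
      alpha2 m h * g (root m h) +
        ∑ y ∈ Finset.univ.filter (fun y : TreeVert m h => y.1.length = 1), beta2 m h * g y := by
  have key : ∀ y : TreeVert m h, mu2 m h y * g y =
      (if y = root m h then alpha2 m h * g y else 0) +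
      (if y.1.length = 1 then beta2 m h * g y else 0) := by
    intro y
    by_cases h0 : y.1.length = 0
    · have hy : y = root m h := Subtype.ext (List.length_eq_zero_iff.mp h0)
      subst hy
      rw [if_pos rfl]
      simp [mu2, root]
    · have hroot : y ≠ root m h := fun he => h0 (by rw [he]; rfl)
      rw [if_neg hroot]
      by_cases h1 : y.1.length = 1 <;> simp [mu2, h0, h1]
  simp_rw [key]
  rw [Finset.sum_add_distrib, Finset.sum_ite_eq' Finset.univ (root m h),
    if_pos (Finset.mem_univ _), ← Finset.sum_filter]

theorem stmt_15' (m h : ℕ) (hm : 2 ≤ m) (hh : 1 ≤ h)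
    (v : TreeVert m h) (hv : v.1.length = 1) :
    Gain (CompleteTree m h) (pureStrat (root m h)) (mu2 m h) =
      Gain (CompleteTree m h) (pureStrat v) (mu2 m h) ∧
    Gain (CompleteTree m h) (pureStrat v) (mu2 m h) =
      (m : ℝ) ^ (h + 1) * ((m : ℝ) ^ h - 1) /
        ((m : ℝ) ^ (h + 2) - (m : ℝ) ^ (h + 1) + (m : ℝ) ^ h - 1) := by
  obtain ⟨h', rfl⟩ : ∃ h', h = h' + 1 := ⟨h - 1, by omega⟩
  obtain ⟨a, ha⟩ := List.length_eq_one_iff.mp hv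
  have hva : v = ⟨[a], h1'⟩ := Subtype.ext ha
  subst hva
  set S : ℕ := ∑ k ∈ Finset.range (h' + 1), m ^ k with hSdef
  have hm2 : (2 : ℝ) ≤ (m : ℝ) := by exact_mod_cast hm
  have hSr : ((m : ℝ) - 1) * (S : ℝ) = (m : ℝ) ^ (h' + 1) - 1 := by
    rw [hSdef]
    push_cast
    rw [mul_comm, geom_sum_mul]
  have hD : (m : ℝ) ^ (h' + 1 + 2) - (m : ℝ) ^ (h' + 1 + 1) + (m : ℝ) ^ (h' + 1) - 1 ≠ 0 := by
    have h1 : (1 : ℝ) ≤ (m : ℝ) ^ (h' + 1) := one_le_pow₀ (by linarith)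
    have h2 : (m : ℝ) ^ (h' + 1 + 2) = (m : ℝ) ^ (h' + 1) * (m : ℝ) ^ 2 := by ring
    have h3 : (m : ℝ) ^ (h' + 1 + 1) = (m : ℝ) ^ (h' + 1) * (m : ℝ) := by ring
    have h4 : (m : ℝ) ^ 2 - (m : ℝ) ≥ (m : ℝ) := by nlinarith
    nlinarith [h1]
  -- Gain from the root
  have Groot : Gain (CompleteTree m (h' + 1)) (pureStrat (root m (h' + 1))) (mu2 m (h' + 1)) =
      (m : ℝ) * (beta2 m (h' + 1) * (m : ℝ) ^ (h' + 1)) := by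
    rw [Gain_pure, sum_mu2]
    rw [gain_self]
    have hsum : ∀ y ∈ Finset.univ.filter (fun y : TreeVert m (h' + 1) => y.1.length = 1),
        beta2 m (h' + 1) * (gain (CompleteTree m (h' + 1)) (root m (h' + 1)) y : ℝ) =
          beta2 m (h' + 1) * (m : ℝ) ^ (h' + 1) := by
      intro y hy
      rw [Finset.mem_filter] at hy
      obtain ⟨b, hb⟩ := List.length_eq_one_iff.mp hy.2
      have : y = ⟨[b], h1'⟩ := Subtype.ext hb
      subst this
      rw [gain_root_d1]
      push_cast
      ring
    rw [Finset.sum_congr rfl hsum, Finset.sum_const, card_depth1_filter (by omega),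
      nsmul_eq_mul]
    simp
  -- Gain from the depth-1 vertex
  have Gv : Gain (CompleteTree m (h' + 1)) (pureStrat (⟨[a], h1'⟩ : TreeVert m (h' + 1)))
      (mu2 m (h' + 1)) =
      alpha2 m (h' + 1) * (S : ℝ) + ((m : ℝ) - 1) * (beta2 m (h' + 1) * (S : ℝ)) := by
    rw [Gain_pure (CompleteTree m (h' + 1)) (⟨[a], h1'⟩ : TreeVert m (h' + 1)), sum_mu2]
    have hmem : (⟨[a], h1'⟩ : TreeVert m (h' + 1)) ∈
        Finset.univ.filter (fun y : TreeVert m (h' + 1) => y.1.length = 1) := by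
      exact Finset.mem_filter.mpr ⟨Finset.mem_univ (α := TreeVert m (h' + 1)) _, rfl⟩
    have hsplit := Finset.sum_erase_add
      (Finset.univ.filter (fun y : TreeVert m (h' + 1) => y.1.length = 1))
      (fun y => beta2 m (h' + 1) *
        (gain (CompleteTree m (h' + 1)) (⟨[a], h1'⟩ : TreeVert m (h' + 1)) y : ℝ)) hmem
    rw [← hsplit]
    rw [gain_self (CompleteTree m (h' + 1)) (⟨[a], h1'⟩ : TreeVert m (h' + 1)), Nat.cast_zero, mul_zero, add_zero]
    rw [gain_d1_root]
    have hsum : ∀ y ∈ (Finset.univ.filter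
        (fun y : TreeVert m (h' + 1) => y.1.length = 1)).erase ⟨[a], h1'⟩,
        beta2 m (h' + 1) * (gain (CompleteTree m (h' + 1)) ⟨[a], h1'⟩ y : ℝ) =
          beta2 m (h' + 1) * (S : ℝ) := by
      intro y hy
      erw [Finset.mem_erase, Finset.mem_filter] at hy
      obtain ⟨b, hb⟩ := List.length_eq_one_iff.mp hy.2.2
      have hyb : y = ⟨[b], h1'⟩ := Subtype.ext hb
      subst hyb
      have hab : a ≠ b := by
        intro he
        exact hy.1 (by rw [he])
      rw [gain_d1_d1 a b hab]
    rw [Finset.sum_congr rfl hsum, Finset.sum_const]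
    erw [Finset.card_erase_of_mem hmem, card_depth1_filter (by omega)]
    rw [nsmul_eq_mul]
    have : ((m - 1 : ℕ) : ℝ) = (m : ℝ) - 1 := by
      push_cast [Nat.cast_sub (by omega : 1 ≤ m)]
      ring
    rw [this]
  constructor
  · rw [Groot, Gv]
    unfold alpha2 beta2
    field_simp
    linear_combination (-(m : ℝ) ^ (h' + 2)) * hSr
  · rw [Gv]
    unfold alpha2 beta2
    field_simp
    linear_combination ((m : ℝ) ^ (h' + 2)) * hSr

end Aux15

/-- On the complete `m`-ary tree of height `h`, for every depth-1 vertex `v`,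
`Gain(T, Z(root), μ₂) = Gain(T, Z(v), μ₂) = m^{h+1}(m^h-1)/(m^{h+2}-m^{h+1}+m^h-1)`. -/
theorem stmt_15 (m h : ℕ) (hm : 2 ≤ m) (hh : 1 ≤ h)
    (v : TreeVert m h) (hv : v.1.length = 1) :
    Gain (CompleteTree m h) (pureStrat (root m h)) (mu2 m h) =
      Gain (CompleteTree m h) (pureStrat v) (mu2 m h) ∧
    Gain (CompleteTree m h) (pureStrat v) (mu2 m h) =
      (m : ℝ) ^ (h + 1) * ((m : ℝ) ^ h - 1) /
        ((m : ℝ) ^ (h + 2) - (m : ℝ) ^ (h + 1) + (m : ℝ) ^ h - 1) :=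
  Aux15.stmt_15' m h hm hh v hv
end

section
/- Let m ≥ 2 and h ≥ 2, and let T(m,h) be the complete m-ary tree of height h. Then for every vertex v of depth d with 2 ≤ d ≤ h, Gain(T(m,h), μ1, Z(v)) > m^h, and moreover m^h > Gain(T(m,h), μ1, Z(root)) = m^{h+1}(m^h−1)/(m^{h+2}−m^{h+1}+m^h−1). -/
variable {α : Type*} [DecidableEq α]

def cpl : List α → List α → ℕ
  | a :: s, b :: t => if a = b then cpl s t + 1 else 0
  | _, _ => 0

theorem le_cpl_iff : ∀ (k : ℕ) (s t : List α), k ≤ cpl s t ↔ k ≤ t.length ∧ t.take k <+: s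
  | 0, s, t => by simp
  | k+1, [], t => by
    simp only [cpl]
    constructor
    · omega
    · rintro ⟨h1, h2⟩
      have h3 := h2.length_le
      simp only [List.length_take, List.length_nil] at h3
      omega
  | k+1, a :: s, [] => by simp [cpl]
  | k+1, a :: s, b :: t => by
    by_cases hab : a = b
    · subst hab
      rw [show cpl (a :: s) (a :: t) = cpl s t + 1 from if_pos rfl]
      simp only [List.take_succ_cons, List.cons_prefix_cons, List.length_cons]
      rw [Nat.add_le_add_iff_right, le_cpl_iff k s t]
      constructor
      · rintro ⟨h1, h2⟩; exact ⟨by omega, trivial, h2⟩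
      · rintro ⟨h1, _, h2⟩; exact ⟨by omega, h2⟩
    · rw [show cpl (a :: s) (b :: t) = 0 from if_neg hab]
      simp only [List.take_succ_cons, List.cons_prefix_cons, List.length_cons]
      constructor
      · omega
      · rintro ⟨h1, h2, h3⟩; exact absurd h2.symm hab

theorem cpl_le_right (s t : List α) : cpl s t ≤ t.length :=
  ((le_cpl_iff _ s t).1 le_rfl).1

theorem cpl_le_left (s t : List α) : cpl s t ≤ s.length := by
  have h := ((le_cpl_iff _ s t).1 (le_rfl : cpl s t ≤ cpl s t)).2.length_le
  rw [List.length_take] at h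
  have := cpl_le_right s t
  omega

theorem cpl_self (s : List α) : s.length ≤ cpl s s := by
  rw [le_cpl_iff]; simp

theorem cpl_append_le (s t : List α) (a : α) : cpl (s ++ [a]) t ≤ cpl s t + 1 := by
  set c := cpl (s ++ [a]) t with hcdef
  have hct : c ≤ t.length := cpl_le_right _ _
  have hpre : t.take c <+: s ++ [a] := ((le_cpl_iff _ (s ++ [a]) t).1 le_rfl).2
  have hlen : (s ++ [a]).length = s.length + 1 := by simp
  have hcs : c ≤ s.length + 1 := by have := cpl_le_left (s ++ [a]) t; omega
  have htakeq : t.take c = (s ++ [a]).take c := by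
    rw [List.prefix_iff_eq_take] at hpre
    rwa [List.length_take, Nat.min_eq_left hct] at hpre
  by_cases hc : c ≤ s.length
  · have : c ≤ cpl s t := by
      rw [le_cpl_iff]
      refine ⟨hct, ?_⟩
      rw [htakeq, List.take_append_of_le_length hc]
      exact List.take_prefix _ _
    omega
  · have hc' : c = s.length + 1 := by omega
    have heq : t.take (s.length + 1) = s ++ [a] := by
      rw [hc', ← hlen] at htakeq
      rw [List.take_length] at htakeq
      rw [← hlen]
      exact htakeq
    have : s.length ≤ cpl s t := by
      rw [le_cpl_iff]
      refine ⟨by omega, ?_⟩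
      have h2 : t.take s.length = s := by
        have h3 := congrArg (List.take s.length) heq
        rwa [List.take_take, Nat.min_eq_left (Nat.le_succ _),
          List.take_append_of_le_length le_rfl, List.take_length] at h3
      rw [h2]
    omega

theorem le_cpl_append (s t : List α) (a : α) : cpl s t ≤ cpl (s ++ [a]) t := by
  rw [le_cpl_iff]
  refine ⟨cpl_le_right _ _, ?_⟩
  exact ((le_cpl_iff _ s t).1 le_rfl).2.trans (List.prefix_append s [a])

def csl {m : ℕ} (u v : List (Fin m)) : ℕ := cpl u.reverse v.reverse

namespace CTree

variable {m h : ℕ}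

theorem csl_le_left {u v : List (Fin m)} : csl u v ≤ u.length := by
  have := cpl_le_left u.reverse v.reverse; simpa [csl] using this

theorem csl_le_right {u v : List (Fin m)} : csl u v ≤ v.length := by
  have := cpl_le_right u.reverse v.reverse; simpa [csl] using this

theorem le_csl_iff {k : ℕ} {u v : List (Fin m)} (hk : k ≤ v.length) :
    k ≤ csl u v ↔ v.drop (v.length - k) <:+ u := by
  rw [csl, le_cpl_iff]
  have h1 : v.reverse.take k = (v.drop (v.length - k)).reverse := by
    have := @List.reverse_take (Fin m) v.reverse k
    rw [List.reverse_reverse, List.length_reverse] at this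
    rw [← this, List.reverse_reverse]
  rw [h1, List.reverse_prefix, List.length_reverse]
  exact and_iff_right_of_imp (fun _ => hk)

theorem le_csl_self {u : List (Fin m)} : u.length ≤ csl u u := by
  have := cpl_self u.reverse; simpa [csl] using this

theorem csl_cons_le {a : Fin m} {u v : List (Fin m)} : csl (a :: u) v ≤ csl u v + 1 := by
  have := cpl_append_le u.reverse v.reverse a
  simpa [csl] using this

theorem le_csl_cons {a : Fin m} {u v : List (Fin m)} : csl u v ≤ csl (a :: u) v := by
  have := le_cpl_append u.reverse v.reverse a
  simpa [csl] using this

theorem csl_nil {u : List (Fin m)} : csl u [] = 0 :=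
  Nat.le_zero.1 csl_le_right

theorem adj_iff {x y : TreeVert m h} :
    (CompleteTree m h).Adj x y ↔ (∃ a, y.1 = a :: x.1) ∨ (∃ a, x.1 = a :: y.1) := by
  rw [CompleteTree, SimpleGraph.fromRel_adj]
  constructor
  · rintro ⟨hne, (⟨h1, h2⟩ | ⟨h1, h2⟩)⟩
    · left
      have hne' : y.1 ≠ [] := by intro hn; rw [hn] at h2; simp at h2
      obtain ⟨b, t, hy⟩ := List.exists_cons_of_ne_nil hne'
      refine ⟨b, ?_⟩
      rw [hy] at h1 ⊢
      simp only [List.tail_cons] at h1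
      rw [h1]
    · right
      have hne' : x.1 ≠ [] := by intro hn; rw [hn] at h2; simp at h2
      obtain ⟨b, t, hx⟩ := List.exists_cons_of_ne_nil hne'
      refine ⟨b, ?_⟩
      rw [hx] at h1 ⊢
      simp only [List.tail_cons] at h1
      rw [h1]
  · rintro (⟨a, ha⟩ | ⟨a, ha⟩)
    · refine ⟨fun hxy => ?_, Or.inl ⟨by rw [ha]; rfl, by rw [ha]; rfl⟩⟩
      rw [hxy] at ha
      exact List.cons_ne_self a y.1 ha.symm
    · refine ⟨fun hxy => ?_, Or.inr ⟨by rw [ha]; rfl, by rw [ha]; rfl⟩⟩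
      rw [← hxy] at ha
      exact List.cons_ne_self a x.1 ha.symm

theorem exists_walk_to_suffix :
    ∀ (lu : List (Fin m)) (hlu : lu.length ≤ h) (s : TreeVert m h), s.1 <:+ lu →
      ∃ w : (CompleteTree m h).Walk ⟨lu, hlu⟩ s, w.length = lu.length - s.1.length := by
  intro lu
  induction lu with
  | nil =>
    intro hlu s hs
    have h0 : s = ⟨[], hlu⟩ := Subtype.ext (List.suffix_nil.1 hs)
    subst h0
    exact ⟨SimpleGraph.Walk.nil, rfl⟩
  | cons a t ih =>
    intro hlu s hs
    rcases List.suffix_cons_iff.1 hs with heq | hs'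
    · have h0 : s = ⟨a :: t, hlu⟩ := Subtype.ext heq
      subst h0
      exact ⟨SimpleGraph.Walk.nil, by simp; rfl⟩
    · have hlt : t.length ≤ h := le_trans (by simp) hlu
      have hadj : (CompleteTree m h).Adj ⟨a :: t, hlu⟩ ⟨t, hlt⟩ :=
        adj_iff.2 (Or.inr ⟨a, rfl⟩)
      obtain ⟨w, hw⟩ := ih hlt s hs'
      refine ⟨SimpleGraph.Walk.cons hadj w, ?_⟩
      have := hs'.length_le
      change w.length + 1 = _
      simp [hw]; omega

theorem exists_walk (u x : TreeVert m h) :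
    ∃ w : (CompleteTree m h).Walk u x,
      w.length = (u.1.length - csl u.1 x.1) + (x.1.length - csl u.1 x.1) := by
  set c := csl u.1 x.1 with hc
  have hcx : c ≤ x.1.length := csl_le_right
  have hcu : c ≤ u.1.length := csl_le_left
  set s : List (Fin m) := x.1.drop (x.1.length - c) with hsdef
  have hslen : s.length = c := by simp [hsdef]; omega
  have hsx : s <:+ x.1 := List.drop_suffix _ _
  have hsh : s.length ≤ h := le_trans (hsx.length_le.trans x.2) le_rfl
  have hsu : s <:+ u.1 := (le_csl_iff hcx).1 le_rfl
  obtain ⟨w1, hw1⟩ := exists_walk_to_suffix u.1 u.2 ⟨s, hsh⟩ (by exact hsu)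
  obtain ⟨w2, hw2⟩ := exists_walk_to_suffix x.1 x.2 ⟨s, hsh⟩ (by exact hsx)
  refine ⟨((w1.copy (show (⟨u.1, u.2⟩ : TreeVert m h) = u from rfl) rfl).append (w2.reverse.copy rfl (show (⟨x.1, x.2⟩ : TreeVert m h) = x from rfl)) : (CompleteTree m h).Walk u x), ?_⟩
  exact (SimpleGraph.Walk.length_append _ _).trans (congrArg₂ (· + ·)
    ((SimpleGraph.Walk.length_copy _ _ _).trans (hw1.trans (by rw [← hslen])))
    ((SimpleGraph.Walk.length_copy _ _ _).trans ((SimpleGraph.Walk.length_reverse _).trans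
      (hw2.trans (by rw [← hslen])))))

theorem phi_le_walk : ∀ {u x : TreeVert m h} (w : (CompleteTree m h).Walk u x),
    (u.1.length + x.1.length : ℤ) - 2 * csl u.1 x.1 ≤ w.length := by
  intro u x w
  induction w with
  | @nil v =>
    have h1 := @le_csl_self m v.1
    have h2 := @csl_le_left m v.1 v.1
    simp; omega
  | @cons u v x hadj p ih =>
    rcases adj_iff.1 hadj with ⟨a, ha⟩ | ⟨a, ha⟩
    · -- v.1 = a :: u.1
      have h1 : csl v.1 x.1 ≤ csl u.1 x.1 + 1 := by rw [ha]; exact csl_cons_le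
      have h2 : v.1.length = u.1.length + 1 := by rw [ha]; rfl
      simp only [SimpleGraph.Walk.length_cons]
      push_cast
      omega
    · -- u.1 = a :: v.1
      have h1 : csl v.1 x.1 ≤ csl u.1 x.1 := by rw [ha]; exact le_csl_cons
      have h2 : u.1.length = v.1.length + 1 := by rw [ha]; rfl
      simp only [SimpleGraph.Walk.length_cons]
      push_cast
      omega

theorem dist_eq (u x : TreeVert m h) :
    ((CompleteTree m h).dist u x : ℤ) = u.1.length + x.1.length - 2 * csl u.1 x.1 := by
  obtain ⟨w, hw⟩ := exists_walk u x
  have hreach : (CompleteTree m h).Reachable u x := ⟨w⟩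
  obtain ⟨p, hp⟩ := hreach.exists_walk_length_eq_dist
  have hle := SimpleGraph.dist_le w
  have hge := phi_le_walk p
  rw [hp] at hge
  have hcx : csl u.1 x.1 ≤ x.1.length := csl_le_right
  have hcu : csl u.1 x.1 ≤ u.1.length := csl_le_left
  rw [hw] at hle
  omega

end CTree

namespace CTree

variable {m h : ℕ}

/-- `L m k = 1 + m + ... + m^k`, number of vertices of `TreeVert m k`. -/
def L (m k : ℕ) : ℕ := ∑ i ∈ Finset.range (k + 1), m ^ i

def treeVertEquiv (m k : ℕ) : TreeVert m k ≃ Σ i : Fin (k + 1), List.Vector (Fin m) i where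
  toFun l := ⟨⟨l.1.length, Nat.lt_succ_of_le l.2⟩, ⟨l.1, rfl⟩⟩
  invFun p := ⟨p.2.1, by rw [p.2.2]; exact Nat.lt_succ_iff.1 p.1.2⟩
  left_inv l := rfl
  right_inv p := by
    rcases p with ⟨⟨i, hi⟩, ⟨l, hl⟩⟩
    dsimp at hl
    subst hl
    rfl

theorem card_treeVert (m k : ℕ) : Fintype.card (TreeVert m k) = L m k := by
  rw [Fintype.card_congr (treeVertEquiv m k), Fintype.card_sigma]
  simp only [card_vector, Fintype.card_fin]
  exact Fin.sum_univ_eq_sum_range (fun i => m ^ i) (k + 1)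

theorem L_mono {a b : ℕ} (hab : a ≤ b) : L m a ≤ L m b :=
  Finset.sum_le_sum_of_subset (Finset.range_subset_range.2 (by omega))

def suffixEquiv (s : List (Fin m)) (hs : s.length ≤ h) :
    {u : TreeVert m h // s <:+ u.1} ≃ TreeVert m (h - s.length) where
  toFun u := ⟨u.1.1.take (u.1.1.length - s.length), by
    have := u.1.2
    simp only [List.length_take]
    omega⟩
  invFun t := ⟨⟨t.1 ++ s, by have := t.2; simp only [List.length_append]; omega⟩,
    List.suffix_append _ _⟩
  left_inv := by
    rintro ⟨⟨lu, hlu⟩, hsuf⟩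
    obtain ⟨t, ht⟩ := hsuf
    have ht' : t ++ s = lu := ht
    subst ht'
    apply Subtype.ext
    apply Subtype.ext
    simp only
    rw [List.length_append, Nat.add_sub_cancel, List.take_left]
  right_inv := by
    rintro ⟨t, ht⟩
    apply Subtype.ext
    simp only
    rw [List.length_append, Nat.add_sub_cancel, List.take_left]

theorem card_suffix (s : List (Fin m)) (hs : s.length ≤ h) :
    Nat.card {u : TreeVert m h // s <:+ u.1} = L m (h - s.length) := by
  rw [Nat.card_congr (suffixEquiv s hs), Nat.card_eq_fintype_card, card_treeVert]

theorem card_compl_suffix (s : List (Fin m)) (hs : s.length ≤ h) :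
    Nat.card {u : TreeVert m h // ¬ s <:+ u.1} = L m h - L m (h - s.length) := by
  classical
  rw [Nat.card_eq_fintype_card, Fintype.card_subtype_compl, card_treeVert,
    ← Nat.card_eq_fintype_card, card_suffix s hs]

theorem gain_eq_of_iff (x v : TreeVert m h) (s : List (Fin m)) (hs : s.length ≤ h)
    (hiff : ∀ u : TreeVert m h,
      (CompleteTree m h).dist u x < (CompleteTree m h).dist u v ↔ ¬ s <:+ u.1) :
    gain (CompleteTree m h) x v = L m h - L m (h - s.length) := by
  rw [gain, ← Nat.card_coe_set_eq, ← card_compl_suffix s hs]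
  exact Nat.card_congr (Equiv.subtypeEquivRight (by simpa using hiff))

theorem suffix_unique {s1 s2 u : List (Fin m)} (h1 : s1 <:+ u) (h2 : s2 <:+ u)
    (hlen : s1.length = s2.length) : s1 = s2 := by
  rw [List.suffix_iff_eq_drop] at h1 h2
  rw [h1, h2, hlen]

end CTree

namespace CTree

variable {m h : ℕ}

theorem csl_one_iff {u w : List (Fin m)} (hw : w.length = 1) : 1 ≤ csl u w ↔ w <:+ u := by
  have h1 := le_csl_iff (u := u) (v := w) (k := 1) (by omega)
  rwa [hw, Nat.sub_self, List.drop_zero] at h1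

theorem gain_root_v (v : TreeVert m h) (hd : 2 ≤ v.1.length) :
    gain (CompleteTree m h) (root m h) v = L m h - L m (h - (v.1.length + 1) / 2) := by
  have hdh : v.1.length ≤ h := v.2
  set d := v.1.length with hdd
  set k := (d + 1) / 2 with hk
  have hsfx_len : (v.1.drop (d - k)).length = k := by
    rw [List.length_drop]; omega
  have hres := gain_eq_of_iff (root m h) v (v.1.drop (d - k)) (by rw [hsfx_len]; omega) ?_
  · rw [hres, hsfx_len]
  intro u
  rw [← le_csl_iff (by omega : k ≤ v.1.length)]
  rw [← Nat.cast_lt (α := ℤ), dist_eq, dist_eq]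
  have hc2 : csl u.1 v.1 ≤ d := csl_le_right
  have h0 : csl u.1 (root m h).1 = 0 := csl_nil
  rw [h0]
  show (_ : ℤ) + (List.length [] : ℤ) - _ < _ ↔ _
  push_cast
  simp only [List.length_nil]
  omega

theorem gain_anc (v w : TreeVert m h) (hd : 2 ≤ v.1.length) (hw : w.1.length = 1)
    (hanc : w.1 = v.1.drop (v.1.length - 1)) :
    gain (CompleteTree m h) w v = L m h - L m (h - (v.1.length + 2) / 2) := by
  have hdh : v.1.length ≤ h := v.2
  set d := v.1.length with hdd
  set k := (d + 2) / 2 with hk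
  have hsfx_len : (v.1.drop (d - k)).length = k := by
    rw [List.length_drop]; omega
  have hres := gain_eq_of_iff w v (v.1.drop (d - k)) (by rw [hsfx_len]; omega) ?_
  · rw [hres, hsfx_len]
  intro u
  rw [← le_csl_iff (by omega : k ≤ v.1.length)]
  rw [← Nat.cast_lt (α := ℤ), dist_eq, dist_eq]
  have hc2 : csl u.1 v.1 ≤ d := csl_le_right
  have hb1 : csl u.1 w.1 ≤ 1 := le_trans csl_le_right (le_of_eq hw)
  have himp : 1 ≤ csl u.1 v.1 → 1 ≤ csl u.1 w.1 := by
    intro h1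
    rw [csl_one_iff hw, hanc]
    exact (le_csl_iff (by omega : 1 ≤ v.1.length)).1 h1
  rw [hw]
  push_cast
  omega

theorem gain_nonanc (v w : TreeVert m h) (hd : 2 ≤ v.1.length) (hw : w.1.length = 1)
    (hanc : w.1 ≠ v.1.drop (v.1.length - 1)) :
    gain (CompleteTree m h) w v = L m h - L m (h - v.1.length / 2) := by
  have hdh : v.1.length ≤ h := v.2
  set d := v.1.length with hdd
  set k := d / 2 with hk
  have hsfx_len : (v.1.drop (d - k)).length = k := by
    rw [List.length_drop]; omega
  have hres := gain_eq_of_iff w v (v.1.drop (d - k)) (by rw [hsfx_len]; omega) ?_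
  · rw [hres, hsfx_len]
  intro u
  rw [← le_csl_iff (by omega : k ≤ v.1.length)]
  rw [← Nat.cast_lt (α := ℤ), dist_eq, dist_eq]
  have hc2 : csl u.1 v.1 ≤ d := csl_le_right
  have hb1 : csl u.1 w.1 ≤ 1 := le_trans csl_le_right (le_of_eq hw)
  have hnot : ¬ (1 ≤ csl u.1 v.1 ∧ 1 ≤ csl u.1 w.1) := by
    rintro ⟨h1, h2⟩
    apply hanc
    apply suffix_unique ((csl_one_iff hw).1 h2)
      ((le_csl_iff (by omega : 1 ≤ v.1.length)).1 h1)
    rw [hw, List.length_drop]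
    omega
  rw [hw]
  push_cast
  omega

theorem gain_root_root : gain (CompleteTree m h) (root m h) (root m h) = 0 := by
  have : {u : TreeVert m h | (CompleteTree m h).dist u (root m h) <
      (CompleteTree m h).dist u (root m h)} = ∅ := by
    ext u; simp
  rw [gain, this, Set.ncard_empty]

theorem gain_w_root (w : TreeVert m h) (hw : w.1.length = 1) :
    gain (CompleteTree m h) w (root m h) = L m (h - 1) := by
  have hwh : w.1.length ≤ h := w.2
  have hcard := card_suffix (h := h) w.1 (by omega)
  rw [hw] at hcard
  rw [gain, ← Nat.card_coe_set_eq, ← hcard]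
  apply Nat.card_congr (Equiv.subtypeEquivRight _)
  intro u
  simp only [Set.mem_setOf_eq]
  rw [← csl_one_iff (u := u.1) hw]
  rw [← Nat.cast_lt (α := ℤ), dist_eq, dist_eq]
  have h0 : csl u.1 (root m h).1 = 0 := csl_nil
  rw [h0, hw]
  show (_ : ℤ) + _ - _ < _ + (List.length [] : ℤ) - _ ↔ _
  have hb1 : csl u.1 w.1 ≤ 1 := le_trans csl_le_right (le_of_eq hw)
  push_cast
  simp only [List.length_nil]
  omega

end CTree

namespace CTree

variable {m h : ℕ}

theorem Gain_pure (X : TreeVert m h → ℝ) (v : TreeVert m h) :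
    Gain (CompleteTree m h) X (pureStrat v) =
      ∑ x : TreeVert m h, X x * (gain (CompleteTree m h) x v : ℝ) := by
  unfold Gain pureStrat
  apply Finset.sum_congr rfl
  intro x _
  simp only [mul_ite, ite_mul, one_mul, zero_mul, mul_zero, mul_one]
  rw [Finset.sum_ite_eq' Finset.univ v (fun y => X x * (gain (CompleteTree m h) x y : ℝ))]
  simp

def depthOne (hh : 1 ≤ h) (a : Fin m) : TreeVert m h := ⟨[a], by simpa using hh⟩

theorem sum_mu1 (hh : 1 ≤ h) (f : TreeVert m h → ℝ) :
    ∑ x : TreeVert m h, mu1 m h x * f x =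
      alpha1 m h * f (root m h) + ∑ a : Fin m, beta1 m h * f (depthOne hh a) := by
  classical
  set e : Option (Fin m) → TreeVert m h := fun o =>
    match o with
    | none => root m h
    | some a => depthOne hh a with he
  have he_inj : Function.Injective e := by
    rintro (_ | a) (_ | b) hab
    · rfl
    · exact absurd (congrArg (fun x => x.1.length) hab) (by simp [he, root, depthOne])
    · exact absurd (congrArg (fun x => x.1.length) hab) (by simp [he, root, depthOne])
    · have : ([a] : List (Fin m)) = [b] := congrArg (fun x => x.1) hab
      simp only [List.cons.injEq] at this
      rw [this.1]
  rw [← Finset.sum_subset (Finset.subset_univ (Finset.univ.image e)) ?_]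
  · rw [Finset.sum_image (fun a _ b _ hab => he_inj hab), Fintype.sum_option]
    simp only [he]
    simp [mu1, root, depthOne]
  · intro x _ hx
    rcases hx0 : x.1.length with _ | n
    · refine absurd (Finset.mem_image.2 ⟨none, Finset.mem_univ _, ?_⟩) hx
      exact Subtype.ext (List.length_eq_zero_iff.1 hx0).symm
    rcases n with _ | n
    · obtain ⟨a, ha⟩ := List.length_eq_one_iff.1 hx0
      refine absurd (Finset.mem_image.2 ⟨some a, Finset.mem_univ _, ?_⟩) hx
      exact Subtype.ext ha.symm
    · simp [mu1, hx0]

end CTree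

namespace CTree

theorem hD_pos {m h : ℕ} (hm : 2 ≤ m) (hh : 1 ≤ h) :
    0 < (m:ℝ)^(h+2) - (m:ℝ)^(h+1) + (m:ℝ)^h - 1 := by
  have hM : (2:ℝ) ≤ (m:ℝ) := by exact_mod_cast hm
  have hp : (1:ℝ) ≤ (m:ℝ)^h := one_le_pow₀ (by linarith)
  have e1 : (m:ℝ)^(h+1) = (m:ℝ)^h * m := pow_succ _ _
  have e2 : (m:ℝ)^(h+2) = (m:ℝ)^h * m * m := by rw [pow_succ, e1]
  rw [e1, e2]
  have hAM : (2:ℝ) ≤ (m:ℝ)^h * m := by nlinarith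
  have hAMM : (2:ℝ) ≤ (m:ℝ)^h * m * ((m:ℝ) - 1) := by nlinarith [hAM]
  nlinarith [hAMM, hp]

theorem L_cast (m k : ℕ) (hm : 2 ≤ m) :
    ((L m k : ℕ) : ℝ) = ((m:ℝ)^(k+1) - 1)/((m:ℝ) - 1) := by
  have hM : (2:ℝ) ≤ (m:ℝ) := by exact_mod_cast hm
  rw [eq_div_iff (by linarith : (m:ℝ) - 1 ≠ 0), L]
  push_cast
  exact geom_sum_mul _ _

theorem L_succ (m k : ℕ) : L m (k+1) = L m k + m^(k+1) := Finset.sum_range_succ _ _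

end CTree

/-- On the complete `m`-ary tree of height `h ≥ 2`, for every vertex `v` of depth
`2 ≤ d ≤ h`, `Gain(T, μ₁, Z(v)) > m^h`; moreover
`m^h > Gain(T, μ₁, Z(root)) = m^{h+1}(m^h-1)/(m^{h+2}-m^{h+1}+m^h-1)`. -/
theorem stmt_16 (m h : ℕ) (hm : 2 ≤ m) (hh : 2 ≤ h) :
    (∀ v : TreeVert m h, 2 ≤ v.1.length →
      ((m : ℝ) ^ h < Gain (CompleteTree m h) (mu1 m h) (pureStrat v))) ∧
    Gain (CompleteTree m h) (mu1 m h) (pureStrat (root m h)) < (m : ℝ) ^ h ∧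
    Gain (CompleteTree m h) (mu1 m h) (pureStrat (root m h)) =
      (m : ℝ) ^ (h + 1) * ((m : ℝ) ^ h - 1) /
        ((m : ℝ) ^ (h + 2) - (m : ℝ) ^ (h + 1) + (m : ℝ) ^ h - 1) := by
  classical
  have hh1 : 1 ≤ h := by omega
  have hM : (2:ℝ) ≤ (m:ℝ) := by exact_mod_cast hm
  have hD := CTree.hD_pos (h := h) hm hh1
  have hMh1 : (1:ℝ) < (m:ℝ)^h := one_lt_pow₀ (by linarith) (by omega)
  have halpha : 0 < alpha1 m h := div_pos (by linarith) hD
  have hbeta : 0 < beta1 m h :=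
    div_pos (mul_pos (by linarith) (by positivity)) hD
  have hsum1 : alpha1 m h + (m:ℝ) * beta1 m h = 1 := by
    rw [alpha1, beta1, ← mul_div_assoc, ← add_div, div_eq_one_iff_eq hD.ne']
    rw [pow_succ, pow_succ]
    ring
  have hL := fun k => CTree.L_cast m k hm
  have hLh1 : ((CTree.L m h : ℕ) : ℝ) = (CTree.L m (h-1) : ℕ) + (m:ℝ)^h := by
    have e : CTree.L m h = CTree.L m (h-1) + m^h := by
      conv_lhs => rw [show h = (h-1)+1 by omega]
      rw [CTree.L_succ, show (h-1)+1 = h by omega]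
    rw [e]; push_cast; ring
  have hLh2 : ((CTree.L m h : ℕ) : ℝ) = (CTree.L m (h-2) : ℕ) + (m:ℝ)^(h-1) + (m:ℝ)^h := by
    have e : CTree.L m (h-1) = CTree.L m (h-2) + m^(h-1) := by
      conv_lhs => rw [show h-1 = (h-2)+1 by omega]
      rw [CTree.L_succ, show (h-2)+1 = h-1 by omega]
    rw [hLh1, e]; push_cast; ring
  -- value at the root
  have hroot : Gain (CompleteTree m h) (mu1 m h) (pureStrat (root m h)) =
      (m : ℝ) ^ (h + 1) * ((m : ℝ) ^ h - 1) /
        ((m : ℝ) ^ (h + 2) - (m : ℝ) ^ (h + 1) + (m : ℝ) ^ h - 1) := by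
    rw [CTree.Gain_pure, CTree.sum_mu1 hh1, CTree.gain_root_root]
    have hc : ∀ a ∈ Finset.univ, beta1 m h *
        ((gain (CompleteTree m h) (CTree.depthOne hh1 a) (root m h) : ℕ) : ℝ) =
        beta1 m h * ((CTree.L m (h-1) : ℕ) : ℝ) := fun a _ => by
      rw [CTree.gain_w_root (CTree.depthOne hh1 a) rfl]
    rw [Finset.sum_congr rfl hc, Finset.sum_const, Finset.card_univ, Fintype.card_fin,
      nsmul_eq_mul]
    rw [hL (h-1), show h-1+1 = h by omega, beta1]
    rw [Nat.cast_zero, mul_zero, zero_add]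
    rw [div_mul_div_comm]
    rw [show ((m:ℝ)-1) * (m:ℝ)^h * ((m:ℝ)^h - 1) =
          ((m:ℝ)-1) * ((m:ℝ)^h * ((m:ℝ)^h-1)) from by ring,
        show ((m:ℝ)^(h+2) - (m:ℝ)^(h+1) + (m:ℝ)^h - 1) * ((m:ℝ)-1) =
          ((m:ℝ)-1) * ((m:ℝ)^(h+2) - (m:ℝ)^(h+1) + (m:ℝ)^h - 1) from by ring,
        mul_div_mul_left _ _ (show ((m:ℝ)-1) ≠ 0 from by linarith)]
    field_simp [hD.ne']
    ring
  refine ⟨?_, ?_, hroot⟩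
  · -- main case
    intro v hd
    have hdh : v.1.length ≤ h := v.2
    have hlen1 : (v.1.drop (v.1.length - 1)).length = 1 := by
      rw [List.length_drop]; omega
    obtain ⟨a0, ha0⟩ := List.length_eq_one_iff.1 hlen1
    rw [CTree.Gain_pure, CTree.sum_mu1 hh1]
    rw [CTree.gain_root_v v hd]
    rw [← Finset.add_sum_erase _ _ (Finset.mem_univ a0)]
    rw [CTree.gain_anc v (CTree.depthOne hh1 a0) hd rfl ha0.symm]
    have hc : ∀ a ∈ Finset.univ.erase a0, beta1 m h *
        ((gain (CompleteTree m h) (CTree.depthOne hh1 a) v : ℕ) : ℝ) =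
        beta1 m h * ((CTree.L m h - CTree.L m (h - v.1.length / 2) : ℕ) : ℝ) := by
      intro a ha
      rw [CTree.gain_nonanc v (CTree.depthOne hh1 a) hd rfl ?_]
      rw [ha0]
      intro hcon
      have hval : ([a] : List (Fin m)) = [a0] := hcon
      simp only [List.cons.injEq, and_true] at hval
      exact (Finset.mem_erase.1 ha).1 hval
    rw [Finset.sum_congr rfl hc, Finset.sum_const,
      Finset.card_erase_of_mem (Finset.mem_univ _), Finset.card_univ, Fintype.card_fin,
      nsmul_eq_mul]
    have hsub0 : CTree.L m (h - (v.1.length + 1)/2) ≤ CTree.L m h := CTree.L_mono (by omega)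
    have hsub1 : CTree.L m (h - (v.1.length + 2)/2) ≤ CTree.L m h := CTree.L_mono (by omega)
    have hsub2 : CTree.L m (h - v.1.length / 2) ≤ CTree.L m h := CTree.L_mono (by omega)
    rw [Nat.cast_sub hsub0, Nat.cast_sub hsub1, Nat.cast_sub hsub2,
      Nat.cast_sub (by omega : 1 ≤ m), Nat.cast_one]
    have b0 : ((CTree.L m (h - (v.1.length + 1)/2) : ℕ) : ℝ) ≤ (CTree.L m (h-1) : ℕ) :=
      Nat.cast_le.2 (CTree.L_mono (by omega))
    have b1 : ((CTree.L m (h - (v.1.length + 2)/2) : ℕ) : ℝ) ≤ (CTree.L m (h-2) : ℕ) :=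
      Nat.cast_le.2 (CTree.L_mono (by omega))
    have b2 : ((CTree.L m (h - v.1.length / 2) : ℕ) : ℝ) ≤ (CTree.L m (h-1) : ℕ) :=
      Nat.cast_le.2 (CTree.L_mono (by omega))
    have t0 : alpha1 m h * ((m:ℝ)^h) ≤
        alpha1 m h * (((CTree.L m h : ℕ):ℝ) - (CTree.L m (h - (v.1.length + 1)/2) : ℕ)) := by
      apply mul_le_mul_of_nonneg_left _ halpha.le
      rw [hLh1]; linarith
    have t1 : beta1 m h * ((m:ℝ)^h + (m:ℝ)^(h-1)) ≤
        beta1 m h * (((CTree.L m h : ℕ):ℝ) - (CTree.L m (h - (v.1.length + 2)/2) : ℕ)) := by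
      apply mul_le_mul_of_nonneg_left _ hbeta.le
      rw [hLh2]; linarith
    have t2 : ((m:ℝ) - 1) * (beta1 m h * ((m:ℝ)^h)) ≤
        ((m:ℝ) - 1) * (beta1 m h * (((CTree.L m h : ℕ):ℝ) - (CTree.L m (h - v.1.length / 2) : ℕ))) := by
      apply mul_le_mul_of_nonneg_left _ (by linarith : (0:ℝ) ≤ (m:ℝ) - 1)
      apply mul_le_mul_of_nonneg_left _ hbeta.le
      rw [hLh1]; linarith
    have heq : alpha1 m h * ((m:ℝ)^h) + (beta1 m h * ((m:ℝ)^h + (m:ℝ)^(h-1)) +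
        ((m:ℝ) - 1) * (beta1 m h * ((m:ℝ)^h))) = (m:ℝ)^h + beta1 m h * (m:ℝ)^(h-1) := by
      linear_combination ((m:ℝ)^h) * hsum1
    have hpos : 0 < beta1 m h * (m:ℝ)^(h-1) := mul_pos hbeta (by positivity)
    linarith [t0, t1, t2]
  · -- root inequality
    rw [hroot, div_lt_iff₀ hD]
    have e1 : (m:ℝ)^(h+1) = (m:ℝ)^h * m := pow_succ _ _
    have e2 : (m:ℝ)^(h+2) = (m:ℝ)^h * m * m := by rw [pow_succ, e1]
    rw [e1, e2]
    have key : 0 < (m:ℝ)^h * ((m:ℝ)^h*((m:ℝ)-1)^2 + ((m:ℝ)-1)) := by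
      apply mul_pos (by positivity)
      nlinarith [hMh1, hM]
    nlinarith [key]
end
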